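/- arXiv:2303.01182 — 12 statements merged into one kernel-verified Lean document; each statement's English description precedes it below -/
import Mathlib

section
/- Let V be an F-space (a topological vector space whose topology is induced by a complete translation-invariant metric), let α be an infinite cardinal, and let A, B ⊆ V with A ∩ B = ∅ and A + B ⊆ A. Suppose A is α-lineable (A ∪ {0} contains an α-dimensional linear subspace) and B is 1-lineable. Then there exists an α-dimensional subspace M with M \ {0} ⊆ A whose closure is not contained in A ∪ {0}; in particular, A is not (α, β)-spaceable for any cardinal β. -/
open scoped Pointwise

/-- `A` is `(α, β)`-spaceable in `V`: `A` is `α`-lineable and every `α`-dimensional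
subspace contained in `A ∪ {0}` extends to a closed `β`-dimensional subspace
contained in `A ∪ {0}`. -/
def IsABSpaceable (K V : Type*) [Field K] [AddCommGroup V] [Module K V]
    [TopologicalSpace V] (A : Set V) (α β : Cardinal) : Prop :=
  (∃ W : Submodule K V, Module.rank K W = α ∧ (W : Set V) ⊆ A ∪ {0}) ∧
  ∀ W : Submodule K V, Module.rank K W = α → (W : Set V) ⊆ A ∪ {0} →
    ∃ Z : Submodule K V, IsClosed (Z : Set V) ∧ Module.rank K Z = β ∧
      W ≤ Z ∧ (Z : Set V) ⊆ A ∪ {0}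

/-- in an F-space, if `A` is `α`-lineable (`α` infinite), `B` is
`1`-lineable, `A ∩ B = ∅` and `A + B ⊆ A`, then some `α`-dimensional subspace `M`
with `M \ {0} ⊆ A` has closure not contained in `A ∪ {0}`; in particular `A` is
not `(α, β)`-spaceable for any `β`. -/
theorem stmt0 (V : Type*) [AddCommGroup V] [Module ℝ V] [MetricSpace V]
    [CompleteSpace V] [ContinuousAdd V] [ContinuousSMul ℝ V]
    (hinv : ∀ x y z : V, dist (x + z) (y + z) = dist x y)
    (α : Cardinal) (hα : Cardinal.aleph0 ≤ α)
    (A B : Set V) (hAB : A ∩ B = ∅) (hstr : A + B ⊆ A)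
    (hAlin : ∃ W : Submodule ℝ V, Module.rank ℝ W = α ∧ (W : Set V) ⊆ A ∪ {0})
    (hBlin : ∃ W : Submodule ℝ V, Module.rank ℝ W = 1 ∧ (W : Set V) ⊆ B ∪ {0}) :
    (∃ M : Submodule ℝ V, Module.rank ℝ M = α ∧ (M : Set V) \ {0} ⊆ A ∧
      ¬ closure (M : Set V) ⊆ A ∪ {0}) ∧
    ∀ β : Cardinal, ¬ IsABSpaceable ℝ V A α β := by
  classical
  obtain ⟨W, hWrank, hWA⟩ := hAlin
  obtain ⟨Wb, hWbrank, hWbB⟩ := hBlin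
  -- pick a nonzero vector b in Wb
  obtain ⟨⟨b, hbWb⟩, hb0'⟩ : ∃ x : Wb, x ≠ 0 := by
    rw [← rank_pos_iff_exists_ne_zero (R := ℝ), hWbrank]; exact one_pos
  have hb0 : b ≠ 0 := fun h => hb0' (Subtype.ext h)
  have hB : ∀ t : ℝ, t ≠ 0 → t • b ∈ B := by
    intro t ht
    have h1 : t • b ∈ Wb := Wb.smul_mem t hbWb
    have h2 : t • b ≠ 0 := smul_ne_zero ht hb0
    rcases hWbB h1 with h | h
    · exact h
    · exact absurd h h2
  have hbB : b ∈ B := by simpa using hB 1 one_ne_zero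
  have hbnA : b ∉ A := fun h => (Set.eq_empty_iff_forall_notMem.mp hAB b) ⟨h, hbB⟩
  have hbW : b ∉ W := by
    intro h
    rcases hWA h with h' | h'
    · exact hbnA h'
    · exact hb0 h'
  -- basis of W
  set bW := Module.Basis.ofVectorSpace ℝ W with hbWdef
  set ι := Module.Basis.ofVectorSpaceIndex ℝ W with hιdef
  have hcard : (Cardinal.mk ι) = α := by rw [bW.mk_eq_rank'', hWrank]
  haveI hinf : Infinite ι := Cardinal.infinite_iff.mpr (hcard ▸ hα)
  set v : ι → V := fun i => (bW i : V) with hvdef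
  have hv : LinearIndependent ℝ v := bW.linearIndependent.map' W.subtype W.ker_subtype
  have hspanv : Submodule.span ℝ (Set.range v) = W := by
    have : Set.range v = W.subtype '' Set.range bW := by
      rw [← Set.range_comp]; rfl
    rw [this, Submodule.span_image, bW.span_eq, Submodule.map_top, Submodule.range_subtype]
  -- small scalars
  have hδ : ∀ n : ℕ, ∃ t : ℝ, t ≠ 0 ∧ dist (t • v ((Infinite.natEmbedding ι) n)) 0 < 1/(n+1) := by
    intro n
    set x := v ((Infinite.natEmbedding ι) n)
    have hcont : Filter.Tendsto (fun t : ℝ => t • x) (nhds 0) (nhds 0) := by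
      have : Filter.Tendsto (fun t : ℝ => t • x) (nhds 0) (nhds ((0 : ℝ) • x)) :=
        (continuous_id.smul (continuous_const (y := x))).tendsto (0 : ℝ)
      simpa using this
    have hε : (0:ℝ) < 1/(n+1) := by positivity
    obtain ⟨η, hη, hd⟩ := Metric.tendsto_nhds_nhds.mp hcont _ hε
    refine ⟨η/2, by positivity, hd ?_⟩
    rw [Real.dist_eq, sub_zero, abs_of_pos (by positivity : (0:ℝ) < η/2)]
    linarith
  choose δ hδ0 hδd using hδ
  set f := Infinite.natEmbedding ι with hfdef
  set c : ι → ℝ := fun i => if h : ∃ n, f n = i then (δ h.choose)⁻¹ else 0 with hcdef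
  have hc : ∀ n, c (f n) = (δ n)⁻¹ := by
    intro n
    have h : ∃ m, f m = f n := ⟨n, rfl⟩
    have : h.choose = n := f.injective h.choose_spec
    simp only [hcdef, dif_pos h, this]
  set u : ι → V := fun i => v i + c i • b with hudef
  -- key computation
  have key : ∀ l : ι →₀ ℝ, Finsupp.linearCombination ℝ u l
      = Finsupp.linearCombination ℝ v l + (l.sum fun i t => t * c i) • b := by
    intro l
    simp only [Finsupp.linearCombination_apply, hudef, smul_add, smul_smul, Finsupp.sum,
      Finset.sum_add_distrib, Finset.sum_smul]
  have hvW : ∀ l : ι →₀ ℝ, Finsupp.linearCombination ℝ v l ∈ W := by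
    intro l
    have : Finsupp.linearCombination ℝ v l ∈ Submodule.span ℝ (Set.range v) := by
      rw [Finsupp.mem_span_range_iff_exists_finsupp]
      exact ⟨l, by simp [Finsupp.linearCombination_apply]⟩
    rwa [hspanv] at this
  have hu : LinearIndependent ℝ u := by
    rw [linearIndependent_iff]
    intro l hl
    rw [key] at hl
    by_cases hs : (l.sum fun i t => t * c i) = 0
    · rw [hs, zero_smul, add_zero] at hl
      exact linearIndependent_iff.mp hv l hl
    · exfalso
      apply hbW
      have : b = ((l.sum fun i t => t * c i))⁻¹ • (-(Finsupp.linearCombination ℝ v l)) := by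
        have h1 : (l.sum fun i t => t * c i) • b = -(Finsupp.linearCombination ℝ v l) := by
          rw [eq_neg_iff_add_eq_zero, add_comm]; exact hl
        rw [← h1, smul_smul, inv_mul_cancel₀ hs, one_smul]
      rw [this]
      exact W.smul_mem _ (W.neg_mem (hvW l))
  set M := Submodule.span ℝ (Set.range u) with hMdef
  have hMrank : Module.rank ℝ M = α := by
    rw [hMdef, rank_span hu, Cardinal.mk_range_eq u hu.injective, hcard]
  have hmem : ∀ x ∈ M, ∃ l : ι →₀ ℝ,
      x = Finsupp.linearCombination ℝ v l + (l.sum fun i t => t * c i) • b := by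
    intro x hx
    rw [hMdef, Finsupp.mem_span_range_iff_exists_finsupp] at hx
    obtain ⟨l, hl⟩ := hx
    refine ⟨l, ?_⟩
    rw [← key, ← hl]
    simp [Finsupp.linearCombination_apply]
  have hMA : (M : Set V) \ {0} ⊆ A := by
    rintro x ⟨hxM, hx0⟩
    obtain ⟨l, hl⟩ := hmem x hxM
    by_cases hs : (l.sum fun i t => t * c i) = 0
    · rw [hs, zero_smul, add_zero] at hl
      rcases hWA (hl ▸ hvW l) with h | h
      · exact h
      · exact absurd h hx0
    · have hw0 : Finsupp.linearCombination ℝ v l ≠ 0 := by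
        intro h
        have := linearIndependent_iff.mp hv l h
        rw [this, Finsupp.sum_zero_index] at hs
        exact hs rfl
      have hwA : Finsupp.linearCombination ℝ v l ∈ A := by
        rcases hWA (hvW l) with h | h
        · exact h
        · exact absurd h hw0
      have hsbB : (l.sum fun i t => t * c i) • b ∈ B := hB _ hs
      rw [hl]
      exact hstr (Set.add_mem_add hwA hsbB)
  have hclos : b ∈ closure (M : Set V) := by
    have hyM : ∀ n : ℕ, δ n • u (f n) ∈ (M : Set V) := fun n =>
      M.smul_mem _ (Submodule.subset_span (Set.mem_range_self _))
    have hyeq : ∀ n : ℕ, δ n • u (f n) = δ n • v (f n) + b := by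
      intro n
      simp only [hudef, smul_add, smul_smul, hc n, mul_inv_cancel₀ (hδ0 n), one_smul]
    have htend : Filter.Tendsto (fun n : ℕ => δ n • u (f n)) Filter.atTop (nhds b) := by
      simp only [hyeq]
      have h1 : Filter.Tendsto (fun n : ℕ => δ n • v (f n)) Filter.atTop (nhds 0) := by
        rw [tendsto_iff_dist_tendsto_zero]
        apply squeeze_zero (fun n => dist_nonneg) (fun n => le_of_lt (hδd n))
        exact tendsto_one_div_add_atTop_nhds_zero_nat
      have := h1.add_const b
      rwa [zero_add] at this
    exact mem_closure_of_tendsto htend (Filter.Eventually.of_forall hyM)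
  have hnsub : ¬ closure (M : Set V) ⊆ A ∪ {0} := by
    intro h
    rcases h hclos with h' | h'
    · exact hbnA h'
    · exact hb0 h'
  have hMsub : (M : Set V) ⊆ A ∪ {0} := by
    intro x hx
    by_cases hx0 : x = 0
    · exact Or.inr hx0
    · exact Or.inl (hMA ⟨hx, hx0⟩)
  refine ⟨⟨M, hMrank, hMA, hnsub⟩, ?_⟩
  rintro β ⟨-, hsp⟩
  obtain ⟨Z, hZc, -, hMZ, hZA⟩ := hsp M hMrank hMsub
  exact hnsub ((closure_minimal hMZ hZc).trans hZA)
end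

section
/- Let X be a Banach space, Y a nontrivial proper linear subspace of X, and α an infinite cardinal. If X \ Y is α-lineable, then X \ Y is not (α, β)-spaceable for any cardinal β; i.e., there exists an α-dimensional subspace W with W \ {0} ⊆ X \ Y such that no closed subspace Z satisfies W ⊆ Z ⊆ (X \ Y) ∪ {0}. -/
set_option synthInstance.maxHeartbeats 1000000 in
/-- if `Y` is a nontrivial proper subspace of a Banach space `X`, `α` is an
infinite cardinal, and `X \ Y` is `α`-lineable, then `X \ Y` is not `(α, β)`-spaceable for
any `β`: some `α`-dimensional subspace `W` with `W \ {0} ⊆ X \ Y` extends to no closed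
subspace inside `(X \ Y) ∪ {0}`. -/
theorem stmt1 (X : Type*) [NormedAddCommGroup X] [NormedSpace ℝ X] [CompleteSpace X]
    (Y : Submodule ℝ X) (hY₁ : Y ≠ ⊥) (hY₂ : Y ≠ ⊤)
    (α : Cardinal) (hα : Cardinal.aleph0 ≤ α)
    (hlin : ∃ W : Submodule ℝ X, Module.rank ℝ W = α ∧
      (W : Set X) ⊆ (Y : Set X)ᶜ ∪ {0}) :
    ∃ W : Submodule ℝ X, Module.rank ℝ W = α ∧ (W : Set X) \ {0} ⊆ (Y : Set X)ᶜ ∧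
      ∀ Z : Submodule ℝ X, IsClosed (Z : Set X) → W ≤ Z →
        ¬ ((Z : Set X) ⊆ (Y : Set X)ᶜ ∪ {0}) := by
  classical
  obtain ⟨W, hWrank, hWsub⟩ := hlin
  obtain ⟨y, hyY, hy0⟩ := (Submodule.ne_bot_iff Y).mp hY₁
  set ι := Module.Free.ChooseBasisIndex ℝ W with hι
  let b : Module.Basis ι ℝ W := Module.Free.chooseBasis ℝ W
  have hcard : (Cardinal.mk ι) = α := by
    rw [← hWrank]; exact (Module.Free.rank_eq_card_chooseBasisIndex ℝ W).symm
  have hinf : Infinite ι := by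
    have h := hα; rw [← hcard] at h; exact Cardinal.infinite_iff.mpr h
  let f : ℕ ↪ ι := Infinite.natEmbedding ι
  let w : ι → X := fun i => (b i : X)
  have hwW : ∀ i, w i ∈ W := fun i => (b i).2
  let ε : ι → ℝ := fun i => (1/2 : ℝ) ^ (Function.invFun f i) / (‖w i‖ + 1)
  have hεpos : ∀ i, 0 < ε i := fun i => div_pos (by positivity) (by positivity)
  let g : ι → X := fun i => y + ε i • w i
  have hWY : ∀ x ∈ W, x ∈ Y → x = 0 := by
    intro x hxW hxY
    rcases hWsub hxW with h | h
    · exact absurd hxY h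
    · exact h
  have hdisj : Disjoint W Y := Submodule.disjoint_def.mpr hWY
  have hw_indep : LinearIndependent ℝ w :=
    b.linearIndependent.map' W.subtype W.ker_subtype
  have hspanw : Submodule.span ℝ (Set.range w) ≤ W := by
    rw [Submodule.span_le]; rintro _ ⟨i, rfl⟩; exact hwW i
  have hqw : LinearIndependent ℝ (Y.mkQ ∘ w) :=
    hw_indep.map (by rw [Submodule.ker_mkQ]; exact hdisj.mono_left hspanw)
  have hmkQy : Y.mkQ y = 0 := (Submodule.Quotient.mk_eq_zero Y).mpr hyY
  have hqg : LinearIndependent ℝ (Y.mkQ ∘ g) := by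
    have heq : Y.mkQ ∘ g = (fun i => Units.mk0 (ε i) (hεpos i).ne') • (Y.mkQ ∘ w) := by
      funext i
      simp only [Function.comp_apply, g, map_add, map_smul, hmkQy, zero_add,
        Pi.smul_apply', Units.smul_def, Units.val_mk0]
    rw [heq]
    exact hqw.units_smul _
  have hg : LinearIndependent ℝ g := hqg.of_comp Y.mkQ
  refine ⟨Submodule.span ℝ (Set.range g), ?_, ?_, ?_⟩
  · rw [rank_span hg, Cardinal.mk_range_eq g hg.injective, hcard]
  · -- span(range g) \ {0} ⊆ Yᶜ
    rintro x ⟨hx, hx0⟩ hxY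
    apply hx0
    rw [SetLike.mem_coe, Finsupp.mem_span_range_iff_exists_finsupp] at hx
    obtain ⟨c, hc⟩ := hx
    have h0 : Finsupp.linearCombination ℝ (Y.mkQ ∘ g) c = 0 := by
      rw [Finsupp.linearCombination_apply]
      have hx0' : Y.mkQ x = 0 := (Submodule.Quotient.mk_eq_zero Y).mpr hxY
      calc c.sum (fun i a => a • (Y.mkQ ∘ g) i)
          = Y.mkQ (c.sum fun i a => a • g i) := by
            rw [map_finsuppSum]; simp
        _ = 0 := by rw [hc]; exact hx0'
    have hc0 : c = 0 := linearIndependent_iff.mp hqg c h0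
    rw [hc0] at hc
    exact Set.mem_singleton_iff.mpr (by simpa using hc.symm)
  · intro Z hZclosed hZle hZsub
    have hbound : ∀ n : ℕ, ‖g (f n) - y‖ ≤ (1/2 : ℝ) ^ n := by
      intro n
      have hinv : Function.invFun f (f n) = n :=
        Function.leftInverse_invFun f.injective n
      have : g (f n) - y = ε (f n) • w (f n) := by simp [g]
      rw [this, norm_smul, Real.norm_eq_abs, abs_of_pos (hεpos _)]
      show (1/2 : ℝ) ^ (Function.invFun f (f n)) / (‖w (f n)‖ + 1) * ‖w (f n)‖ ≤ _
      rw [hinv]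
      set t := ‖w (f n)‖ with ht
      have ht0 : 0 ≤ t := norm_nonneg _
      rw [div_mul_eq_mul_div, div_le_iff₀ (by positivity)]
      nlinarith [pow_nonneg (by norm_num : (0:ℝ) ≤ 1/2) n]
    have htend : Filter.Tendsto (fun n => g (f n)) Filter.atTop (nhds y) := by
      rw [tendsto_iff_norm_sub_tendsto_zero]
      apply squeeze_zero (fun n => norm_nonneg _) hbound
      exact tendsto_pow_atTop_nhds_zero_of_lt_one (by norm_num) (by norm_num)
    have hyZ : y ∈ Z :=
      hZclosed.mem_of_tendsto htend
        (Filter.Eventually.of_forall fun n =>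
          hZle (Submodule.subset_span ⟨f n, rfl⟩))
    rcases hZsub hyZ with h | h
    · exact h hyY
    · exact hy0 h
end

section
/- Let V be an infinite-dimensional Banach space and let v₁, …, vₙ ∈ V be linearly independent unit vectors. Then there exists a basic sequence (u_k)_{k≥1} in V (i.e., a Schauder basis of the closed linear span of {u_k : k ∈ ℕ}) with u_k = v_k for each k = 1, …, n. -/
open Finset Metric

section Aux
variable {𝕜 : Type*} [RCLike 𝕜] {V : Type*} [NormedAddCommGroup V] [NormedSpace 𝕜 V]


theorem mazurStep (hV : ¬ FiniteDimensional 𝕜 V) (F : Submodule 𝕜 V)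
    [FiniteDimensional 𝕜 F] {ε : ℝ} (hε : 0 < ε) :
    ∃ x : V, ‖x‖ = 1 ∧ ∀ y ∈ F, ∀ c : 𝕜, ‖y‖ ≤ (1 + ε) * ‖y + c • x‖ := by
  have hε1 : (0:ℝ) < 1 + ε := by linarith
  set δ : ℝ := ε / (1 + ε) with hδdef
  have hδ0 : 0 < δ := div_pos hε hε1
  have hδkey : (1 + ε) * (1 - δ) = 1 := by
    rw [hδdef]; field_simp; ring
  set S : Set V := (↑) '' (sphere (0:F) 1) with hSdef
  have hScomp : IsCompact S := (isCompact_sphere (0:F) 1).image continuous_subtype_val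
  have hnormS : ∀ y ∈ S, ‖y‖ = 1 := by
    rintro y ⟨z, hz, rfl⟩
    simpa [mem_sphere_zero_iff_norm] using hz
  have hSsub : ∀ y ∈ S, y ∈ F := by rintro y ⟨z, hz, rfl⟩; exact z.2
  obtain ⟨t, ht⟩ := hScomp.elim_finite_subcover (fun y : S => ball (y:V) δ)
    (fun y => isOpen_ball) (fun y hy => Set.mem_iUnion.2 ⟨⟨y, hy⟩, mem_ball_self hδ0⟩)
  have hne : ∀ y : S, (y:V) ≠ 0 := by
    intro y
    have := hnormS y y.2
    intro h; rw [h] at this; simp at this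
  choose g hg1 hg2 using fun y : S => exists_dual_vector 𝕜 (y:V) (norm_ne_zero_iff.2 (hne y))
  have : ∃ x0 : V, x0 ≠ 0 ∧ ∀ i ∈ t, g i x0 = 0 := by
    by_contra h
    push_neg at h
    set T : V →ₗ[𝕜] (t → 𝕜) := LinearMap.pi (fun i : t => ((g i.1) : V →ₗ[𝕜] 𝕜)) with hT
    have hinj : Function.Injective T := by
      rw [← LinearMap.ker_eq_bot, Submodule.eq_bot_iff]
      intro x hx
      by_contra hx0
      obtain ⟨i, hi, hgi⟩ := h x hx0
      have hx' : T x = 0 := hx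
      exact hgi (congrFun hx' ⟨i, hi⟩)
    exact hV (FiniteDimensional.of_injective T hinj)
  obtain ⟨x0, hx0, hker⟩ := this
  have hx0n : ‖x0‖ ≠ 0 := norm_ne_zero_iff.2 hx0
  refine ⟨((‖x0‖ : 𝕜))⁻¹ • x0, ?_, ?_⟩
  · rw [norm_smul, norm_inv, RCLike.norm_ofReal, abs_of_nonneg (norm_nonneg _),
      inv_mul_cancel₀ hx0n]
  intro y hy c
  rcases eq_or_ne y 0 with rfl | hy0
  · simp; positivity
  have hyn : ‖y‖ ≠ 0 := norm_ne_zero_iff.2 hy0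
  set x : V := ((‖x0‖ : 𝕜))⁻¹ • x0 with hx
  have hgx : ∀ i ∈ t, g i x = 0 := by
    intro i hi
    rw [hx, map_smul, hker i hi, smul_zero]
  set w : V := ((‖y‖ : 𝕜))⁻¹ • y with hw
  have hwF : w ∈ F := F.smul_mem _ hy
  have hwnorm : ‖w‖ = 1 := by
    rw [hw, norm_smul, norm_inv, RCLike.norm_ofReal, abs_of_nonneg (norm_nonneg _),
      inv_mul_cancel₀ hyn]
  have hwS : w ∈ S := ⟨⟨w, hwF⟩, by simpa [mem_sphere_zero_iff_norm] using hwnorm, rfl⟩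
  obtain ⟨i, hit, hwi⟩ : ∃ i ∈ t, w ∈ ball ((i:S):V) δ := by
    simpa using ht hwS
  -- key estimate on the normalized vector
  have hkey : 1 - δ ≤ ‖w + ((‖y‖ : 𝕜))⁻¹ • (c • x)‖ := by
    set e : V := w + ((‖y‖ : 𝕜))⁻¹ • (c • x) with he
    have hzero : (g i) (((‖y‖ : 𝕜))⁻¹ • (c • x)) = 0 := by
      rw [map_smul, map_smul, hgx i hit, smul_zero, smul_zero]
    have h1 : (g i) e = (g i) w := by
      rw [he, map_add, hzero, add_zero]
    have h2 : ‖(g i) ((i:S):V) - (g i) w‖ ≤ δ := by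
      rw [← map_sub]
      calc ‖(g i) (((i:S):V) - w)‖ ≤ ‖g i‖ * ‖((i:S):V) - w‖ := (g i).le_opNorm _
        _ ≤ 1 * δ := by
            rw [hg1]
            have : ‖((i:S):V) - w‖ = dist w ((i:S):V) := by rw [dist_eq_norm, norm_sub_rev]
            rw [this]
            exact mul_le_mul_of_nonneg_left (le_of_lt hwi) zero_le_one
        _ = δ := one_mul δ
    have h3 : ‖(g i) ((i:S):V)‖ = 1 := by
      rw [hg2]
      simp [hnormS _ (i:S).2]
    calc 1 - δ = ‖(g i) ((i:S):V)‖ - δ := by rw [h3]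
      _ ≤ ‖(g i) ((i:S):V)‖ - ‖(g i) ((i:S):V) - (g i) w‖ := by linarith
      _ ≤ ‖(g i) w‖ := by
          have := norm_sub_norm_le ((g i) ((i:S):V)) ((g i) w)
          linarith [norm_sub_norm_le ((g i) ((i:S):V)) ((g i) w)]
      _ = ‖(g i) e‖ := by rw [h1]
      _ ≤ ‖e‖ := by
          calc ‖(g i) e‖ ≤ ‖g i‖ * ‖e‖ := (g i).le_opNorm _
            _ = ‖e‖ := by rw [hg1, one_mul]
  -- rescale
  have hscale : ‖y + c • x‖ = ‖y‖ * ‖w + ((‖y‖ : 𝕜))⁻¹ • (c • x)‖ := by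
    have hne' : ((‖y‖ : 𝕜)) ≠ 0 := by simpa using hyn
    have : y + c • x = (‖y‖ : 𝕜) • (w + ((‖y‖ : 𝕜))⁻¹ • (c • x)) := by
      rw [hw]; simp [smul_smul, mul_inv_cancel₀ hne']; rw [← mul_assoc, mul_inv_cancel₀ hne', one_mul]
    rw [this, norm_smul, RCLike.norm_ofReal, abs_of_nonneg (norm_nonneg _)]
  calc ‖y‖ = ((1+ε) * (1-δ)) * ‖y‖ := by rw [hδkey, one_mul]
    _ ≤ (1+ε) * (‖y‖ * ‖w + ((‖y‖ : 𝕜))⁻¹ • (c • x)‖) := by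
        rw [mul_assoc]
        refine mul_le_mul_of_nonneg_left ?_ (le_of_lt hε1)
        rw [mul_comm (1-δ) ‖y‖]
        exact mul_le_mul_of_nonneg_left hkey (norm_nonneg _)
    _ = (1+ε) * ‖y + c • x‖ := by rw [hscale]


theorem finPart (n : ℕ) (v : Fin n → V) (hind : LinearIndependent 𝕜 v)
    (hnorm : ∀ i, ‖v i‖ = 1) (u : ℕ → V) (hu : ∀ (k : ℕ) (h : k < n), u k = v ⟨k, h⟩) :
    ∃ c : ℝ, 1 ≤ c ∧ ∀ m, m < n → ∀ lam : ℕ → 𝕜,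
      ‖∑ k ∈ range m, lam k • u k‖ ≤ c * ‖∑ k ∈ range (m+1), lam k • u k‖ := by
  set W := Submodule.span 𝕜 (Set.range v) with hW
  haveI : FiniteDimensional 𝕜 W := FiniteDimensional.span_of_finite 𝕜 (Set.finite_range v)
  set B : Module.Basis (Fin n) 𝕜 W := Module.Basis.span hind with hB
  set φ : Fin n → (W →L[𝕜] 𝕜) := fun i => LinearMap.toContinuousLinearMap (B.coord i) with hφ
  set φ' : ℕ → ℝ := fun k => if h : k < n then ‖φ ⟨k, h⟩‖ else 0 with hφ'
  have hφ'nonneg : ∀ k, 0 ≤ φ' k := by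
    intro k; rw [hφ']; dsimp only; split
    case isTrue h => exact norm_nonneg (φ ⟨k, h⟩)
    case isFalse h => exact le_refl 0
  refine ⟨1 + ∑ k ∈ range n, φ' k, by have := Finset.sum_nonneg (fun (i:ℕ) (_ : i ∈ range n) => hφ'nonneg i); linarith, ?_⟩
  intro m hm lam
  set yy : ℕ → W := fun k => if h : k < n then B ⟨k, h⟩ else 0 with hyy
  have hyycoe : ∀ k, k < n → ((yy k : V)) = u k := by
    intro k hk
    rw [hyy]; dsimp only; rw [dif_pos hk, hu k hk, Module.Basis.span_apply]
  set z : W := ∑ k ∈ range (m+1), lam k • yy k with hz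
  have hzcoe : (z : V) = ∑ k ∈ range (m+1), lam k • u k := by
    rw [hz]
    push_cast
    refine Finset.sum_congr rfl ?_
    intro k hk
    rw [hyycoe k (lt_of_lt_of_le (mem_range.1 hk) hm)]
  have hznorm : ‖z‖ = ‖∑ k ∈ range (m+1), lam k • u k‖ := by
    rw [← hzcoe]; rfl
  -- coordinates of z
  have hcoord : ∀ (j : ℕ) (hj : j < m + 1), B.coord ⟨j, lt_of_lt_of_le hj hm⟩ z = lam j := by
    intro j hj
    rw [hz, map_sum]
    have : ∀ k ∈ range (m+1), B.coord ⟨j, lt_of_lt_of_le hj hm⟩ (lam k • yy k)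
        = if k = j then lam k else 0 := by
      intro k hk
      have hkn : k < n := lt_of_lt_of_le (mem_range.1 hk) hm
      rw [map_smul, hyy]
      dsimp only
      rw [dif_pos hkn, Module.Basis.coord_apply, Module.Basis.repr_self, Finsupp.single_apply]
      by_cases h : k = j
      · subst h; rw [if_pos rfl, if_pos (by rfl), smul_eq_mul, mul_one]
      · rw [if_neg (by simpa [Fin.ext_iff] using h), if_neg h, smul_eq_mul, mul_zero]
    rw [Finset.sum_congr rfl this, Finset.sum_ite_eq' (range (m+1)) j (fun k => lam k),
      if_pos (mem_range.2 hj)]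
  -- bound each coefficient
  have hlam : ∀ (j : ℕ) (hj : j < m), ‖lam j‖ ≤ φ' j * ‖z‖ := by
    intro j hj
    have hjn : j < n := lt_of_lt_of_le hj (Nat.le_of_lt_succ (Nat.lt_succ_of_lt hm))
    have := hcoord j (Nat.lt_succ_of_lt hj)
    rw [hφ']; dsimp only; rw [dif_pos hjn]
    calc ‖lam j‖ = ‖B.coord ⟨j, _⟩ z‖ := by rw [this]
      _ = ‖φ ⟨j, hjn⟩ z‖ := rfl
      _ ≤ ‖φ ⟨j, hjn⟩‖ * ‖z‖ := (φ ⟨j, hjn⟩).le_opNorm z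
  calc ‖∑ k ∈ range m, lam k • u k‖ ≤ ∑ k ∈ range m, ‖lam k • u k‖ := norm_sum_le _ _
    _ ≤ ∑ k ∈ range m, φ' k * ‖z‖ := by
        refine Finset.sum_le_sum ?_
        intro k hk
        have hkm := mem_range.1 hk
        have hkn : k < n := lt_of_lt_of_le hkm (le_of_lt hm)
        rw [norm_smul, hu k hkn, hnorm, mul_one]
        exact hlam k hkm
    _ = (∑ k ∈ range m, φ' k) * ‖z‖ := by rw [Finset.sum_mul]
    _ ≤ (1 + ∑ k ∈ range n, φ' k) * ‖z‖ := by
        refine mul_le_mul_of_nonneg_right ?_ (norm_nonneg _)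
        have h1 : (∑ k ∈ range m, φ' k) ≤ ∑ k ∈ range n, φ' k :=
          Finset.sum_le_sum_of_subset_of_nonneg
            (Finset.range_subset_range.2 (le_of_lt hm)) (fun i _ _ => hφ'nonneg i)
        linarith
    _ = (1 + ∑ k ∈ range n, φ' k) * ‖∑ k ∈ range (m+1), lam k • u k‖ := by rw [hznorm]


/-- The next vector in the basic-sequence construction. -/
noncomputable def nextVec (hV : ¬ FiniteDimensional 𝕜 V) (m : ℕ) (f : Fin m → V) : V :=
  haveI : FiniteDimensional 𝕜 (Submodule.span 𝕜 (Set.range f)) :=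
    FiniteDimensional.span_of_finite 𝕜 (Set.finite_range f)
  (mazurStep hV (Submodule.span 𝕜 (Set.range f))
    (ε := (1/2 : ℝ)^m) (by positivity)).choose

theorem nextVec_spec (hV : ¬ FiniteDimensional 𝕜 V) (m : ℕ) (f : Fin m → V) :
    ‖nextVec hV m f‖ = 1 ∧ ∀ y ∈ Submodule.span 𝕜 (Set.range f), ∀ c : 𝕜,
      ‖y‖ ≤ (1 + (1/2 : ℝ)^m) * ‖y + c • nextVec hV m f‖ := by
  haveI : FiniteDimensional 𝕜 (Submodule.span 𝕜 (Set.range f)) :=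
    FiniteDimensional.span_of_finite 𝕜 (Set.finite_range f)
  exact (mazurStep hV (Submodule.span 𝕜 (Set.range f))
    (ε := (1/2 : ℝ)^m) (by positivity)).choose_spec

variable (hV : ¬ FiniteDimensional 𝕜 V) {n : ℕ} (v : Fin n → V)

/-- Prefixes of the basic sequence. -/
noncomputable def pref : (m : ℕ) → Fin m → V
  | 0 => Fin.elim0
  | (m+1) => Fin.snoc (pref m)
      (if h : m < n then v ⟨m, h⟩ else nextVec hV m (pref m))

/-- The basic sequence. -/
noncomputable def bseq (k : ℕ) : V := pref hV v (k+1) (Fin.last k)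

theorem bseq_eq (k : ℕ) :
    bseq hV v k = if h : k < n then v ⟨k, h⟩ else nextVec hV k (pref hV v k) := by
  rw [bseq, pref]
  exact Fin.snoc_last _ _

theorem pref_eq_bseq : ∀ (m : ℕ) (i : Fin m), pref hV v m i = bseq hV v i.val := by
  intro m
  induction m with
  | zero => exact fun i => i.elim0
  | succ m ih =>
    intro i
    rcases Fin.eq_castSucc_or_eq_last i with ⟨j, rfl⟩ | rfl
    · rw [show (pref hV v (m+1)) j.castSucc = pref hV v m j from by
        rw [pref]; exact Fin.snoc_castSucc _ _ _]
      exact ih j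
    · rw [show ((Fin.last m : Fin (m+1)).val) = m from rfl, bseq_eq]
      rw [pref]
      exact Fin.snoc_last _ _

theorem bseq_agree (k : ℕ) (h : k < n) : bseq hV v k = v ⟨k, h⟩ := by
  rw [bseq_eq, dif_pos h]

theorem bseq_norm (hnorm : ∀ i, ‖v i‖ = 1) (k : ℕ) : ‖bseq hV v k‖ = 1 := by
  rw [bseq_eq]
  split
  · apply hnorm
  · exact (nextVec_spec hV k (pref hV v k)).1

theorem bseq_step (m : ℕ) (hm : n ≤ m) (lam : ℕ → 𝕜) :
    ‖∑ k ∈ range m, lam k • bseq hV v k‖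
      ≤ (1 + (1/2 : ℝ)^m) * ‖∑ k ∈ range (m+1), lam k • bseq hV v k‖ := by
  have hum : bseq hV v m = nextVec hV m (pref hV v m) := by
    rw [bseq_eq, dif_neg (by omega)]
  have hymem : (∑ k ∈ range m, lam k • bseq hV v k)
      ∈ Submodule.span 𝕜 (Set.range (pref hV v m)) := by
    refine Submodule.sum_mem _ ?_
    intro k hk
    refine Submodule.smul_mem _ _ (Submodule.subset_span ?_)
    exact ⟨⟨k, mem_range.1 hk⟩, pref_eq_bseq hV v m ⟨k, mem_range.1 hk⟩⟩
  have := (nextVec_spec hV m (pref hV v m)).2 _ hymem (lam m)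
  rw [Finset.sum_range_succ, hum]
  exact this

end Aux

/-- `u` is a basic sequence in a Banach space: all `u k` are nonzero and there is a
constant `C` such that `‖∑_{k<s} λ k • u k‖ ≤ C * ‖∑_{k<r} λ k • u k‖` for `s ≤ r`
(equivalently, `u` is a Schauder basis of the closure of its span). -/
def IsBasicSeq (𝕜 : Type*) [RCLike 𝕜] {V : Type*} [NormedAddCommGroup V]
    [NormedSpace 𝕜 V] (u : ℕ → V) : Prop :=
  (∀ k, u k ≠ 0) ∧ ∃ C : ℝ, ∀ s r : ℕ, s ≤ r → ∀ lam : ℕ → 𝕜,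
    ‖∑ k ∈ Finset.range s, lam k • u k‖ ≤ C * ‖∑ k ∈ Finset.range r, lam k • u k‖

/-- Lemma 3.4: in an infinite-dimensional Banach space, any finite
linearly independent family of unit vectors extends to a basic sequence. -/
theorem stmt4 (𝕜 : Type*) [RCLike 𝕜] (V : Type*) [NormedAddCommGroup V]
    [NormedSpace 𝕜 V] [CompleteSpace V] (hV : ¬ FiniteDimensional 𝕜 V)
    (n : ℕ) (v : Fin n → V) (hind : LinearIndependent 𝕜 v)
    (hnorm : ∀ i, ‖v i‖ = 1) :
    ∃ u : ℕ → V, IsBasicSeq 𝕜 u ∧ ∀ i : Fin n, u (i : ℕ) = v i := by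
  classical
  set u : ℕ → V := bseq hV v with hu
  obtain ⟨cf, hcf1, hcf⟩ := finPart n v hind hnorm u (fun k h => bseq_agree hV v k h)
  set c : ℕ → ℝ := fun m => if m < n then cf else 1 + (1/2 : ℝ)^m with hc
  have hc1 : ∀ m, 1 ≤ c m := by
    intro m; rw [hc]; dsimp only; split
    · exact hcf1
    · have : (0:ℝ) < (1/2:ℝ)^m := by positivity
      linarith
  have hstep : ∀ m (lam : ℕ → 𝕜),
      ‖∑ k ∈ range m, lam k • u k‖ ≤ c m * ‖∑ k ∈ range (m+1), lam k • u k‖ := by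
    intro m lam
    rw [hc]; dsimp only; split
    case isTrue h => exact hcf m h lam
    case isFalse h => exact bseq_step hV v m (by omega) lam
  have hchain : ∀ s r : ℕ, s ≤ r → ∀ lam : ℕ → 𝕜,
      ‖∑ k ∈ range s, lam k • u k‖
        ≤ (∏ m ∈ Finset.Ico s r, c m) * ‖∑ k ∈ range r, lam k • u k‖ := by
    intro s r hsr lam
    induction r, hsr using Nat.le_induction with
    | base => simp
    | succ r hsr ih =>
      have hprodnn : (0:ℝ) ≤ ∏ m ∈ Finset.Ico s r, c m :=
        Finset.prod_nonneg (fun i _ => le_trans zero_le_one (hc1 i))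
      calc ‖∑ k ∈ range s, lam k • u k‖
          ≤ (∏ m ∈ Finset.Ico s r, c m) * ‖∑ k ∈ range r, lam k • u k‖ := ih
        _ ≤ (∏ m ∈ Finset.Ico s r, c m) * (c r * ‖∑ k ∈ range (r+1), lam k • u k‖) :=
            mul_le_mul_of_nonneg_left (hstep r lam) hprodnn
        _ = (∏ m ∈ Finset.Ico s (r+1), c m) * ‖∑ k ∈ range (r+1), lam k • u k‖ := by
            rw [Finset.prod_Ico_succ_top hsr]; ring
  have hprodbound : ∀ s r : ℕ,
      (∏ m ∈ Finset.Ico s r, c m) ≤ (∏ m ∈ range n, c m) * Real.exp 2 := by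
    intro s r
    set R := max r n with hR
    have hone : ∀ (s : Finset ℕ), (1:ℝ) ≤ ∏ i ∈ s, c i := fun s => by
      calc (1:ℝ) = ∏ _i ∈ s, 1 := (Finset.prod_const_one).symm
        _ ≤ ∏ i ∈ s, c i := Finset.prod_le_prod (fun i _ => zero_le_one) (fun i _ => hc1 i)
    have h1 : (∏ m ∈ Finset.Ico s r, c m) ≤ ∏ m ∈ range R, c m := by
      have hst : Finset.Ico s r ⊆ range R := by
        intro x hx
        rw [Finset.mem_range]
        have := (Finset.mem_Ico.1 hx).2
        omega
      rw [← Finset.prod_sdiff hst]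
      nth_rewrite 1 [← one_mul (∏ i ∈ Finset.Ico s r, c i)]
      exact mul_le_mul_of_nonneg_right (hone _) (le_trans zero_le_one (hone _))
    have h2 : (∏ m ∈ range R, c m) = (∏ m ∈ range n, c m) * ∏ m ∈ Finset.Ico n R, c m :=
      (Finset.prod_range_mul_prod_Ico c (le_max_right r n)).symm
    have h3 : (∏ m ∈ Finset.Ico n R, c m) = ∏ m ∈ Finset.Ico n R, (1 + (1/2:ℝ)^m) := by
      refine Finset.prod_congr rfl ?_
      intro m hm
      rw [hc]; dsimp only
      rw [if_neg (by have := (Finset.mem_Ico.1 hm).1; omega)]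
    have h4 : (∏ m ∈ Finset.Ico n R, (1 + (1/2:ℝ)^m))
        ≤ ∏ m ∈ Finset.Ico n R, Real.exp ((1/2:ℝ)^m) := by
      refine Finset.prod_le_prod (fun i _ => by positivity) ?_
      intro i _
      have := Real.add_one_le_exp ((1/2:ℝ)^i)
      linarith
    have h5 : (∏ m ∈ Finset.Ico n R, Real.exp ((1/2:ℝ)^m))
        = Real.exp (∑ m ∈ Finset.Ico n R, (1/2:ℝ)^m) := (Real.exp_sum _ _).symm
    have h6 : (∑ m ∈ Finset.Ico n R, (1/2:ℝ)^m) ≤ 2 := by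
      calc (∑ m ∈ Finset.Ico n R, (1/2:ℝ)^m) ≤ ∑ m ∈ range R, (1/2:ℝ)^m := by
            refine Finset.sum_le_sum_of_subset_of_nonneg ?_ (fun i _ _ => by positivity)
            intro x hx
            rw [Finset.mem_range]
            have := (Finset.mem_Ico.1 hx).2
            omega
        _ ≤ 2 := sum_geometric_two_le R
    have hprn : (0:ℝ) ≤ ∏ m ∈ range n, c m :=
      Finset.prod_nonneg (fun i _ => le_trans zero_le_one (hc1 i))
    calc (∏ m ∈ Finset.Ico s r, c m) ≤ ∏ m ∈ range R, c m := h1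
      _ = (∏ m ∈ range n, c m) * ∏ m ∈ Finset.Ico n R, c m := h2
      _ ≤ (∏ m ∈ range n, c m) * Real.exp 2 := by
          refine mul_le_mul_of_nonneg_left ?_ hprn
          rw [h3]
          refine le_trans h4 ?_
          rw [h5]
          exact Real.exp_le_exp.2 h6
  refine ⟨u, ⟨?_, (∏ m ∈ range n, c m) * Real.exp 2, ?_⟩, ?_⟩
  · intro k
    have := bseq_norm hV v hnorm k
    intro h
    rw [hu] at h
    rw [h] at this
    simp at this
  · intro s r hsr lam
    calc ‖∑ k ∈ Finset.range s, lam k • u k‖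
        ≤ (∏ m ∈ Finset.Ico s r, c m) * ‖∑ k ∈ range r, lam k • u k‖ := hchain s r hsr lam
      _ ≤ ((∏ m ∈ range n, c m) * Real.exp 2) * ‖∑ k ∈ range r, lam k • u k‖ :=
          mul_le_mul_of_nonneg_right (hprodbound s r) (norm_nonneg _)
  · intro i
    rw [hu, bseq_agree hV v i.val i.isLt]
end

section
/- Let W be a Banach space, (w_k) a regular basic sequence in W (a basic sequence bounded away from zero), and (u_k) a sequence in W with Σ_{k=1}^∞ ‖u_k‖ < ∞. If the only scalar sequence (a_k) with Σ_{k=1}^∞ a_k (w_k + u_k) = 0 (convergence in norm) is the zero sequence, then (w_k + u_k) is a basic sequence in W. -/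
open Filter Finset

/-- Lemma 3.5, Kalton: a small perturbation of a regular basic sequence
which remains "independent" for infinite combinations is again a basic sequence. -/
theorem stmt5 (𝕜 : Type*) [RCLike 𝕜] (W : Type*) [NormedAddCommGroup W]
    [NormedSpace 𝕜 W] [CompleteSpace W]
    (w : ℕ → W) (hbasic : IsBasicSeq 𝕜 w) (hreg : ∃ L > 0, ∀ k, L ≤ ‖w k‖)
    (u : ℕ → W) (hsum : Summable (fun k => ‖u k‖))
    (hindep : ∀ a : ℕ → 𝕜,
      Filter.Tendsto (fun N => ∑ k ∈ Finset.range N, a k • (w k + u k))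
        Filter.atTop (nhds 0) → ∀ k, a k = 0) :
    IsBasicSeq 𝕜 (fun k => w k + u k) := by
  classical
  obtain ⟨hwne, C, hC⟩ := hbasic
  obtain ⟨L, hLpos, hLw⟩ := hreg
  -- the perturbed vectors are nonzero
  have hvne : ∀ k, w k + u k ≠ 0 := by
    intro k hk0
    have hz : ∀ N, ∑ j ∈ Finset.range N, (if j = k then (1:𝕜) else 0) • (w j + u j) = 0 := by
      intro N
      refine Finset.sum_eq_zero fun j _ => ?_
      by_cases h : j = k
      · subst h; rw [hk0, smul_zero]
      · rw [if_neg h, zero_smul]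
    have := hindep (fun j => if j = k then 1 else 0)
      (by simp only [hz]; exact tendsto_const_nhds) k
    simp at this
  have hC1 : (1:ℝ) ≤ C := by
    have h0 : (0:ℝ) < ‖w 0‖ := lt_of_lt_of_le hLpos (hLw 0)
    have h := hC 1 1 le_rfl (fun _ => 1)
    simp only [Finset.range_one, Finset.sum_singleton, one_smul] at h
    exact le_of_mul_le_mul_right (by rw [one_mul]; exact h) h0
  set B : ℝ := 2 * C / L with hBdef
  have hB0 : 0 < B := div_pos (by linarith) hLpos
  -- coefficient bound
  have hcoef : ∀ (lam : ℕ → 𝕜) (r k : ℕ), k < r →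
      ‖lam k‖ ≤ B * ‖∑ j ∈ Finset.range r, lam j • w j‖ := by
    intro lam r k hk
    have e : lam k • w k =
        (∑ j ∈ Finset.range (k+1), lam j • w j) - ∑ j ∈ Finset.range k, lam j • w j := by
      rw [Finset.sum_range_succ]; abel
    have h1 : ‖lam k • w k‖ ≤ 2 * C * ‖∑ j ∈ Finset.range r, lam j • w j‖ := by
      rw [e]
      refine (norm_sub_le _ _).trans ?_
      have a1 := hC (k+1) r hk lam
      have a2 := hC k r hk.le lam
      linarith
    have h2 : ‖lam k‖ * L ≤ ‖lam k • w k‖ := by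
      rw [norm_smul]
      exact mul_le_mul_of_nonneg_left (hLw k) (norm_nonneg _)
    rw [hBdef, div_mul_eq_mul_div, le_div_iff₀ hLpos]
    have := h2.trans h1
    linarith
  set U : ℝ := ∑' k, ‖u k‖ with hUdef
  have hU0 : 0 ≤ U := tsum_nonneg fun k => norm_nonneg _
  have hUsum : ∀ s : ℕ, ∑ k ∈ Finset.range s, ‖u k‖ ≤ U :=
    fun s => Summable.sum_le_tsum _ (fun k _ => norm_nonneg _) hsum
  -- upper bound for perturbed sums
  have hupper : ∀ (lam : ℕ → 𝕜) (s : ℕ),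
      ‖∑ k ∈ Finset.range s, lam k • (w k + u k)‖
        ≤ (1 + B * U) * ‖∑ k ∈ Finset.range s, lam k • w k‖ := by
    intro lam s
    have hsplit : ∑ k ∈ Finset.range s, lam k • (w k + u k)
        = (∑ k ∈ Finset.range s, lam k • w k) + ∑ k ∈ Finset.range s, lam k • u k := by
      simp [smul_add, Finset.sum_add_distrib]
    set X := ‖∑ k ∈ Finset.range s, lam k • w k‖ with hX
    have hXnn : 0 ≤ X := norm_nonneg _
    have hu : ‖∑ k ∈ Finset.range s, lam k • u k‖ ≤ B * X * U := by
      calc ‖∑ k ∈ Finset.range s, lam k • u k‖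
          ≤ ∑ k ∈ Finset.range s, ‖lam k • u k‖ := norm_sum_le _ _
        _ ≤ ∑ k ∈ Finset.range s, (B * X) * ‖u k‖ := by
            refine Finset.sum_le_sum fun k hk => ?_
            rw [norm_smul]
            exact mul_le_mul_of_nonneg_right
              (hcoef lam s k (Finset.mem_range.mp hk)) (norm_nonneg _)
        _ = (B * X) * ∑ k ∈ Finset.range s, ‖u k‖ := by rw [Finset.mul_sum]
        _ ≤ (B * X) * U :=
            mul_le_mul_of_nonneg_left (hUsum s) (mul_nonneg hB0.le hXnn)
    rw [hsplit]
    calc ‖(∑ k ∈ Finset.range s, lam k • w k) + ∑ k ∈ Finset.range s, lam k • u k‖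
        ≤ X + ‖∑ k ∈ Finset.range s, lam k • u k‖ := norm_add_le _ _
      _ ≤ X + B * X * U := by linarith
      _ = (1 + B * U) * X := by ring
  -- stabilization lemma
  have hstab : ∀ (b : ℕ → 𝕜) (R N : ℕ) (x : ℕ → W), R ≤ N → (∀ k, R ≤ k → b k = 0) →
      ∑ k ∈ Finset.range N, b k • x k = ∑ k ∈ Finset.range R, b k • x k := by
    intro b R N x hRN hb
    symm
    refine Finset.sum_subset (Finset.range_subset_range.mpr hRN) ?_
    intro k _ hk'
    rw [hb k (Nat.le_of_not_lt (by simpa using hk')), zero_smul]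
  -- main claim: lower bound
  have main : ∃ c : ℝ, 0 < c ∧ ∀ (lam : ℕ → 𝕜) (r : ℕ),
      c * ‖∑ k ∈ Finset.range r, lam k • w k‖
        ≤ ‖∑ k ∈ Finset.range r, lam k • (w k + u k)‖ := by
    by_contra hcon
    push_neg at hcon
    choose lam r hlt using fun m : ℕ => hcon (1 / ((m:ℝ) + 1)) (by positivity)
    have hSwpos : ∀ m, 0 < ‖∑ k ∈ Finset.range (r m), lam m k • w k‖ := by
      intro m
      by_contra h
      push_neg at h
      have h0 : ‖∑ k ∈ Finset.range (r m), lam m k • w k‖ = 0 :=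
        le_antisymm h (norm_nonneg _)
      have := hlt m
      rw [h0, mul_zero] at this
      exact (norm_nonneg _).not_gt this
    set ν : ℕ → ℕ → 𝕜 := fun m k =>
      if k < r m then ((‖∑ j ∈ Finset.range (r m), lam m j • w j‖⁻¹ : ℝ) : 𝕜) * lam m k
      else 0 with hνdef
    have hν0 : ∀ m k, r m ≤ k → ν m k = 0 := by
      intro m k hk; simp [hνdef, Nat.not_lt.mpr hk]
    have hνsum : ∀ (m : ℕ) (x : ℕ → W) (N : ℕ), N ≤ r m →
        ∑ k ∈ Finset.range N, ν m k • x k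
          = ((‖∑ j ∈ Finset.range (r m), lam m j • w j‖⁻¹ : ℝ) : 𝕜) •
              ∑ k ∈ Finset.range N, lam m k • x k := by
      intro m x N hN
      rw [Finset.smul_sum]
      refine Finset.sum_congr rfl fun k hk => ?_
      have hkr : k < r m := lt_of_lt_of_le (Finset.mem_range.mp hk) hN
      simp only [hνdef, if_pos hkr]
      exact mul_smul _ _ _
    have hnorm1 : ∀ m, ‖∑ k ∈ Finset.range (r m), ν m k • w k‖ = 1 := by
      intro m
      rw [hνsum m w (r m) le_rfl, norm_smul, RCLike.norm_ofReal,
        abs_of_nonneg (inv_nonneg.mpr (norm_nonneg _)),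
        inv_mul_cancel₀ (hSwpos m).ne']
    have hnormv : ∀ m, ‖∑ k ∈ Finset.range (r m), ν m k • (w k + u k)‖ ≤ 1 / ((m:ℝ) + 1) := by
      intro m
      rw [hνsum m (fun k => w k + u k) (r m) le_rfl, norm_smul, RCLike.norm_ofReal,
        abs_of_nonneg (inv_nonneg.mpr (norm_nonneg _))]
      have h := (hlt m).le
      calc ‖∑ j ∈ Finset.range (r m), lam m j • w j‖⁻¹ *
            ‖∑ k ∈ Finset.range (r m), lam m k • (w k + u k)‖
          ≤ ‖∑ j ∈ Finset.range (r m), lam m j • w j‖⁻¹ *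
              (1 / ((m:ℝ) + 1) * ‖∑ j ∈ Finset.range (r m), lam m j • w j‖) :=
            mul_le_mul_of_nonneg_left h (inv_nonneg.mpr (norm_nonneg _))
        _ = 1 / ((m:ℝ) + 1) := by
            rw [mul_comm (1 / ((m:ℝ) + 1)) _, ← mul_assoc,
              inv_mul_cancel₀ (hSwpos m).ne', one_mul]
    have hνB : ∀ m k, ‖ν m k‖ ≤ B := by
      intro m k
      by_cases hk : k < r m
      · have := hcoef (ν m) (r m) k hk
        rw [hnorm1 m] at this
        simpa using this
      · simp only [hνdef, if_neg hk]
        simpa using hB0.le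
    -- sequential compactness
    have hSC : IsSeqCompact (Set.univ.pi fun _ : ℕ => Metric.closedBall (0:𝕜) B) :=
      (isCompact_univ_pi fun _ => isCompact_closedBall _ _).isSeqCompact
    obtain ⟨a, -, φ, hφmono, hφtend⟩ := hSC (x := ν)
      (fun m => by
        intro k _
        simpa [Metric.mem_closedBall, dist_zero_right] using hνB m k)
    have hpt : ∀ k, Tendsto (fun m => ν (φ m) k) atTop (nhds (a k)) :=
      fun k => tendsto_pi_nhds.mp hφtend k
    have haB : ∀ k, ‖a k‖ ≤ B := fun k =>
      le_of_tendsto (hpt k).norm (Eventually.of_forall fun m => hνB (φ m) k)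
    have hsummB : Summable (fun k => B * ‖u k‖) := hsum.mul_left B
    have hsum_a : Summable (fun k => a k • u k) :=
      Summable.of_norm_bounded hsummB fun k => by
        rw [norm_smul]
        exact mul_le_mul_of_nonneg_right (haB k) (norm_nonneg _)
    set z : W := ∑' k, a k • u k with hzdef
    -- dominated convergence
    have hdom : Tendsto (fun m => ∑ k ∈ Finset.range (r (φ m)), ν (φ m) k • u k)
        atTop (nhds z) := by
      have h1 : Tendsto (fun m => ∑' k, ν (φ m) k • u k) atTop (nhds z) := by
        refine tendsto_tsum_of_dominated_convergence hsummB
          (fun k => (hpt k).smul_const (u k)) ?_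
        refine Eventually.of_forall fun m k => ?_
        rw [norm_smul]
        exact mul_le_mul_of_nonneg_right (hνB (φ m) k) (norm_nonneg _)
      refine h1.congr fun m => ?_
      exact tsum_eq_sum fun k hk => by
        rw [hν0 (φ m) k (Nat.le_of_not_lt (by simpa using hk)), zero_smul]
    set y : ℕ → W := fun m => ∑ k ∈ Finset.range (r (φ m)), ν (φ m) k • w k with hydef
    have hyv : Tendsto (fun m => ∑ k ∈ Finset.range (r (φ m)), ν (φ m) k • (w k + u k))
        atTop (nhds 0) := by
      refine squeeze_zero_norm (fun m => (hnormv (φ m)).trans ?_)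
        tendsto_one_div_add_atTop_nhds_zero_nat
      have hle : m ≤ φ m := hφmono.le_apply
      have : (m:ℝ) + 1 ≤ (φ m : ℝ) + 1 := by
        have : (m:ℝ) ≤ φ m := Nat.cast_le.mpr hle
        linarith
      exact one_div_le_one_div_of_le (by positivity) this
    have hy : Tendsto y atTop (nhds (-z)) := by
      have hsp : ∀ m, y m = (∑ k ∈ Finset.range (r (φ m)), ν (φ m) k • (w k + u k))
          - ∑ k ∈ Finset.range (r (φ m)), ν (φ m) k • u k := by
        intro m
        simp [hydef, smul_add, Finset.sum_add_distrib]
      have := hyv.sub hdom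
      rw [zero_sub] at this
      exact this.congr fun m => (hsp m).symm
    -- uniform Cauchy estimate
    have hcauchy : ∀ m m' N,
        ‖(∑ k ∈ Finset.range N, ν (φ m) k • w k)
          - ∑ k ∈ Finset.range N, ν (φ m') k • w k‖ ≤ C * ‖y m - y m'‖ := by
      intro m m' N
      set R := max (max (r (φ m)) (r (φ m'))) N with hRdef
      have e1 : ∀ N', ∑ k ∈ Finset.range N', (ν (φ m) k - ν (φ m') k) • w k
          = (∑ k ∈ Finset.range N', ν (φ m) k • w k)
            - ∑ k ∈ Finset.range N', ν (φ m') k • w k := by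
        intro N'; simp [sub_smul, Finset.sum_sub_distrib]
      have hb := hC N R (le_max_right _ _) (fun k => ν (φ m) k - ν (φ m') k)
      rw [e1, e1] at hb
      rw [hstab _ _ _ _ (le_trans (le_max_left _ _) (le_max_left _ _)) (hν0 (φ m)),
        hstab _ _ _ _ (le_trans (le_max_right _ _) (le_max_left _ _)) (hν0 (φ m'))] at hb
      exact hb
    have hA : ∀ m N, ‖(∑ k ∈ Finset.range N, ν (φ m) k • w k)
        - ∑ k ∈ Finset.range N, a k • w k‖ ≤ C * ‖y m + z‖ := by
      intro m N
      have h1 : Tendsto (fun m' => ∑ k ∈ Finset.range N, ν (φ m') k • w k)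
          atTop (nhds (∑ k ∈ Finset.range N, a k • w k)) :=
        tendsto_finset_sum _ fun k _ => (hpt k).smul_const (w k)
      have h2 : Tendsto (fun m' => y m - y m') atTop (nhds (y m + z)) := by
        have := tendsto_const_nhds (α := ℕ) (f := atTop) (x := y m) |>.sub hy
        rwa [sub_neg_eq_add] at this
      exact le_of_tendsto_of_tendsto'
        ((tendsto_const_nhds.sub h1).norm) ((h2.norm).const_mul C)
        (fun m' => hcauchy m m' N)
    have hAz : Tendsto (fun N => ∑ k ∈ Finset.range N, a k • w k) atTop (nhds (-z)) := by
      rw [Metric.tendsto_atTop]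
      intro ε hε
      have hC0 : (0:ℝ) < C + 1 := by linarith
      have htend0 : Tendsto (fun m => ‖y m + z‖) atTop (nhds 0) := by
        have : Tendsto (fun m => y m + z) atTop (nhds 0) := by
          have := hy.add_const z
          rwa [neg_add_cancel] at this
        simpa using this.norm
      obtain ⟨m, hm⟩ := (htend0.eventually (gt_mem_nhds (show 0 < ε / (C+1) by positivity))).exists
      refine ⟨r (φ m), fun N hN => ?_⟩
      have hsw : ∑ k ∈ Finset.range N, ν (φ m) k • w k = y m :=
        hstab _ _ _ _ hN (hν0 (φ m))
      have hAm := hA m N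
      rw [hsw] at hAm
      calc dist (∑ k ∈ Finset.range N, a k • w k) (-z)
          = ‖(∑ k ∈ Finset.range N, a k • w k) + z‖ := by
            rw [dist_eq_norm, sub_neg_eq_add]
        _ = ‖((∑ k ∈ Finset.range N, a k • w k) - y m) + (y m + z)‖ := by
            congr 1; abel
        _ ≤ ‖(∑ k ∈ Finset.range N, a k • w k) - y m‖ + ‖y m + z‖ := norm_add_le _ _
        _ ≤ C * ‖y m + z‖ + ‖y m + z‖ := by
            rw [norm_sub_rev]; linarith
        _ = (C + 1) * ‖y m + z‖ := by ring
        _ < (C + 1) * (ε / (C+1)) := by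
            exact mul_lt_mul_of_pos_left hm hC0
        _ = ε := by field_simp
    have htendv : Tendsto (fun N => ∑ k ∈ Finset.range N, a k • (w k + u k))
        atTop (nhds 0) := by
      have h2 : Tendsto (fun N => ∑ k ∈ Finset.range N, a k • u k) atTop (nhds z) :=
        hsum_a.hasSum.tendsto_sum_nat
      have h3 := hAz.add h2
      rw [neg_add_cancel] at h3
      refine h3.congr fun N => ?_
      simp [smul_add, Finset.sum_add_distrib]
    have ha0 : ∀ k, a k = 0 := hindep a htendv
    have hz0 : z = 0 := by simp [hzdef, ha0]
    have h1 : Tendsto (fun m => ‖y m‖) atTop (nhds 0) := by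
      have := hy.norm
      rwa [hz0, neg_zero, norm_zero] at this
    have h2 : (fun m => ‖y m‖) = fun _ => (1:ℝ) := funext fun m => hnorm1 (φ m)
    rw [h2] at h1
    exact zero_ne_one (tendsto_nhds_unique h1 tendsto_const_nhds)
  -- assemble
  obtain ⟨c, hc, hmain⟩ := main
  refine ⟨hvne, (1 + B * U) * C / c, ?_⟩
  intro s rr hsr lam
  beta_reduce
  have hBU : (0:ℝ) ≤ 1 + B * U := by
    have := mul_nonneg hB0.le hU0; linarith
  have h1 : ‖∑ k ∈ Finset.range s, lam k • (w k + u k)‖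
      ≤ (1 + B * U) * ‖∑ k ∈ Finset.range s, lam k • w k‖ := hupper lam s
  have h2 : ‖∑ k ∈ Finset.range s, lam k • w k‖
      ≤ C * ‖∑ k ∈ Finset.range rr, lam k • w k‖ := hC s rr hsr lam
  have h3 := hmain lam rr
  have e3 : ‖∑ k ∈ Finset.range rr, lam k • w k‖
      ≤ ‖∑ k ∈ Finset.range rr, lam k • (w k + u k)‖ / c :=
    (le_div_iff₀ hc).mpr (by linarith)
  calc ‖∑ k ∈ Finset.range s, lam k • (w k + u k)‖
      ≤ (1 + B * U) * ‖∑ k ∈ Finset.range s, lam k • w k‖ := h1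
    _ ≤ (1 + B * U) * (C * ‖∑ k ∈ Finset.range rr, lam k • w k‖) :=
        mul_le_mul_of_nonneg_left h2 hBU
    _ ≤ (1 + B * U) * (C * (‖∑ k ∈ Finset.range rr, lam k • (w k + u k)‖ / c)) :=
        mul_le_mul_of_nonneg_left (mul_le_mul_of_nonneg_left e3 (by linarith)) hBU
    _ = (1 + B * U) * C / c * ‖∑ k ∈ Finset.range rr, lam k • (w k + u k)‖ := by
        ring
end

section
/- For every n ∈ ℕ, the set ℓ∞ \ c₀ is (n, 𝔠)-spaceable in ℓ∞: given any n-dimensional linear subspace Z of ℓ∞ with Z ∩ c₀ = {0}, there exists a closed linear subspace F of ℓ∞ of dimension 𝔠 with Z ⊆ F and F ∩ c₀ = {0}. Moreover, ℓ∞ \ c₀ is not (α, β)-spaceable for any infinite cardinal α and any β. -/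
open Filter Topology

/-- The space `ℓ∞` of bounded real sequences with the sup norm. -/
noncomputable abbrev EllInfty : Type := lp (fun _ : ℕ => ℝ) ⊤

/-- `c₀`, the subspace of `ℓ∞` of sequences converging to `0`. -/
noncomputable def cZero : Submodule ℝ EllInfty where
  carrier := {x | Tendsto (fun n => x n) atTop (𝓝 0)}
  add_mem' hx hy := by simpa using hx.add hy
  zero_mem' := by simp
  smul_mem' c x hx := by simpa using hx.const_mul c

set_option maxHeartbeats 1000000
set_option synthInstance.maxHeartbeats 200000

noncomputable section Aux

open scoped ENNReal Cardinal

namespace Stmt8Aux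

lemma mem_cZero {x : EllInfty} : x ∈ cZero ↔ Tendsto (fun n => x n) atTop (𝓝 0) := Iff.rfl

/-- The coercion of `ℓ∞` to functions, as a linear map. -/
def coeLM : EllInfty →ₗ[ℝ] (ℕ → ℝ) where
  toFun x := ⇑x
  map_add' := lp.coeFn_add
  map_smul' := lp.coeFn_smul

lemma coeLM_injective : Function.Injective coeLM := fun _ _ h => lp.ext h

lemma memInfty {f : ℕ → ℝ} (C : ℝ) (h : ∀ n, ‖f n‖ ≤ C) : Memℓp f (⊤ : ℝ≥0∞) :=
  memℓp_infty ⟨C, by rintro _ ⟨n, rfl⟩; exact h n⟩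

lemma memT (x : EllInfty) : Memℓp (fun m => x (Nat.unpair m).1) (⊤ : ℝ≥0∞) :=
  memℓp_infty ((memℓp_infty_iff.1 (lp.memℓp x)).mono
    (by rintro _ ⟨m, rfl⟩; exact ⟨(Nat.unpair m).1, rfl⟩))

/-- The "spreading" linear isometry `T : ℓ∞ → ℓ∞`, `(T x) m = x (unpair m).1`;
each value of `x` is repeated infinitely often in `T x`. -/
def T : EllInfty →ₗᵢ[ℝ] EllInfty where
  toFun x := ⟨fun m => x (Nat.unpair m).1, memT x⟩
  map_add' x y := by
    apply lp.ext; funext m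
    simp [lp.coeFn_add, Pi.add_apply]
    rfl
  map_smul' c x := by
    apply lp.ext; funext m
    simp [lp.coeFn_smul, Pi.smul_apply]
  norm_map' x := by
    have hb : BddAbove (Set.range fun k => ‖x k‖) := memℓp_infty_iff.1 (lp.memℓp x)
    have hb2 : BddAbove (Set.range fun m => ‖x (Nat.unpair m).1‖) :=
      hb.mono (by rintro _ ⟨m, rfl⟩; exact ⟨(Nat.unpair m).1, rfl⟩)
    rw [lp.norm_eq_ciSup, lp.norm_eq_ciSup]
    apply le_antisymm
    · exact ciSup_le fun m => le_ciSup hb _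
    · refine ciSup_le fun k => ?_
      have h1 : ‖x k‖ = ‖x (Nat.unpair (Nat.pair k 0)).1‖ := by rw [Nat.unpair_pair]
      rw [h1]
      exact le_ciSup hb2 (Nat.pair k 0)

lemma T_apply (x : EllInfty) (m : ℕ) : (T x) m = x (Nat.unpair m).1 := rfl

lemma T_mem_cZero {x : EllInfty} (h : T x ∈ cZero) : x = 0 := by
  apply lp.ext; funext k
  have hk : Tendsto (fun j : ℕ => Nat.pair k j) atTop atTop :=
    tendsto_atTop_mono (fun j => Nat.right_le_pair k j) tendsto_id
  have h2 : Tendsto (fun j : ℕ => (T x) (Nat.pair k j)) atTop (𝓝 0) := (mem_cZero.1 h).comp hk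
  have h3 : (fun j : ℕ => (T x) (Nat.pair k j)) = fun _ => x k := by
    funext j
    show x (Nat.unpair (Nat.pair k j)).1 = x k
    rw [Nat.unpair_pair]
  rw [h3] at h2
  have h4 : x k = 0 := tendsto_nhds_unique tendsto_const_nhds h2
  simpa using h4

lemma memG (r : Set.Ioo (0:ℝ) 1) : Memℓp (fun n : ℕ => (r : ℝ) ^ n) (⊤ : ℝ≥0∞) :=
  memInfty 1 fun n => by
    rw [Real.norm_eq_abs, abs_pow, abs_of_pos r.2.1]
    exact pow_le_one₀ (le_of_lt r.2.1) (le_of_lt r.2.2)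

/-- The geometric sequences `n ↦ r ^ n` for `r ∈ (0,1)`, a `𝔠`-sized linearly
independent family in `ℓ∞`. -/
def G : Set.Ioo (0:ℝ) 1 → EllInfty := fun r => ⟨fun n => (r : ℝ) ^ n, memG r⟩

lemma G_norm_le (r : Set.Ioo (0:ℝ) 1) : ‖G r‖ ≤ 1 := by
  refine lp.norm_le_of_forall_le zero_le_one fun n => ?_
  show ‖(r : ℝ) ^ n‖ ≤ 1
  rw [Real.norm_eq_abs, abs_pow, abs_of_pos r.2.1]
  exact pow_le_one₀ (le_of_lt r.2.1) (le_of_lt r.2.2)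

lemma G_li : LinearIndependent ℝ G := by
  have h1 := linearIndependent_monoidHom (Multiplicative ℕ) ℝ
  have hinj : Function.Injective
      (fun r : Set.Ioo (0:ℝ) 1 => powersHom ℝ (r : ℝ)) := by
    intro r s h
    have h2 := DFunLike.congr_fun h (Multiplicative.ofAdd 1)
    exact Subtype.ext (by simpa using h2)
  have h2 := h1.comp _ hinj
  refine LinearIndependent.of_comp coeLM ?_
  have h3 : ⇑coeLM ∘ G
      = ((fun f : Multiplicative ℕ →* ℝ => ⇑f) ∘ fun r : Set.Ioo (0:ℝ) 1 => powersHom ℝ (r : ℝ)) := rfl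
  rw [h3]
  exact h2

lemma rank_le_continuum : Module.rank ℝ EllInfty ≤ Cardinal.continuum := by
  refine (rank_le_card ℝ EllInfty).trans ?_
  have h1 : #EllInfty ≤ #(ℕ → ℝ) := Cardinal.mk_le_of_injective coeLM_injective
  refine h1.trans ?_
  rw [Cardinal.mk_arrow, Cardinal.mk_real]
  simp [Cardinal.continuum_power_aleph0]

lemma continuum_le_rank : Cardinal.continuum ≤ Module.rank ℝ EllInfty := by
  have h := G_li.cardinal_le_rank
  rwa [Cardinal.mk_Ioo_real zero_lt_one] at h

lemma rank_eq_continuum : Module.rank ℝ EllInfty = Cardinal.continuum :=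
  le_antisymm rank_le_continuum continuum_le_rank

/-- A finite-dimensional subspace plus a closed subspace is closed. -/
lemma isClosed_sup_fin {E : Type*} [NormedAddCommGroup E] [NormedSpace ℝ E]
    (Z C : Submodule ℝ E) [FiniteDimensional ℝ Z] (hC : IsClosed (C : Set E)) :
    IsClosed ((Z ⊔ C : Submodule ℝ E) : Set E) := by
  haveI : IsClosed (C : Set E) := hC
  haveI : FiniteDimensional ℝ (Z.map C.mkQ) := Module.Finite.map Z C.mkQ
  have hclosed : IsClosed ((Z.map C.mkQ : Submodule ℝ (E ⧸ C)) : Set (E ⧸ C)) :=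
    Submodule.closed_of_finiteDimensional _
  have hcont : Continuous C.mkQ := continuous_quot_mk
  have h1 : (Z ⊔ C : Submodule ℝ E) = (Z.map C.mkQ).comap C.mkQ := by
    rw [Submodule.comap_map_eq, Submodule.ker_mkQ]
  rw [h1]
  exact hclosed.preimage hcont

/-- The nonzero element of `c₀` used in part 2. -/
def yFun : ℕ → ℝ := fun n => if n = 0 then 1 else 0

lemma yFun_bd : ∀ n, ‖yFun n‖ ≤ 1 := fun n => by
  unfold yFun; split_ifs <;> simp

def y : EllInfty := ⟨yFun, memInfty 1 yFun_bd⟩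

lemma y_mem : y ∈ cZero := by
  rw [mem_cZero]
  have h : (fun _ : ℕ => (0:ℝ)) =ᶠ[atTop] fun n => y n := by
    filter_upwards [eventually_ge_atTop 1] with n hn
    show (0:ℝ) = yFun n
    unfold yFun
    rw [if_neg (by omega)]
  exact tendsto_const_nhds.congr' h

lemma y_ne : y ≠ 0 := by
  intro h
  have h0 : y 0 = (0 : EllInfty) 0 := by rw [h]
  simp [y, yFun] at h0


theorem part1 (n : ℕ) (Z : Submodule ℝ EllInfty) (hZr : Module.rank ℝ Z = n)
    (hZc : Z ⊓ cZero = ⊥) :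
    ∃ F : Submodule ℝ EllInfty, IsClosed (F : Set EllInfty) ∧
      Module.rank ℝ F = Cardinal.continuum ∧ Z ≤ F ∧ F ⊓ cZero = ⊥ := by
  haveI : FiniteDimensional ℝ Z := Module.finite_of_rank_eq_nat hZr
  set V : Submodule ℝ EllInfty := (Z ⊔ cZero).comap T.toLinearMap with hV
  haveI : FiniteDimensional ℝ (Z.map cZero.mkQ) := Module.Finite.map Z cZero.mkQ
  haveI hVfd : FiniteDimensional ℝ V := by
    have hφmem : ∀ v : V, (cZero.mkQ ∘ₗ (T.toLinearMap ∘ₗ V.subtype)) v ∈ Z.map cZero.mkQ := by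
      rintro ⟨v, hv⟩
      obtain ⟨z, hz, c, hc, hzc⟩ := Submodule.mem_sup.1 hv
      refine ⟨z, hz, ?_⟩
      show Submodule.Quotient.mk z = Submodule.Quotient.mk (T.toLinearMap v)
      rw [Submodule.Quotient.eq]
      have : z - T.toLinearMap v = -c := by rw [← hzc]; abel
      rw [this]
      exact cZero.neg_mem hc
    let φ : V →ₗ[ℝ] (Z.map cZero.mkQ) :=
      LinearMap.codRestrict _ (cZero.mkQ ∘ₗ (T.toLinearMap ∘ₗ V.subtype)) hφmem
    have hφinj : Function.Injective φ := by
      intro a b hab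
      have h1 : Submodule.Quotient.mk (p := cZero) (T a.1) = Submodule.Quotient.mk (T b.1) :=
        congrArg Subtype.val hab
      rw [Submodule.Quotient.eq] at h1
      have h2 : T (a.1 - b.1) ∈ cZero := by rwa [map_sub]
      have h3 : a.1 - b.1 = 0 := T_mem_cZero h2
      exact Subtype.ext (sub_eq_zero.1 h3)
    exact FiniteDimensional.of_injective φ hφinj
  obtain ⟨W₀, hW₀c, hcompl⟩ :=
    (Submodule.ClosedComplemented.of_finiteDimensional V).exists_isClosed_isCompl
  have hmapc : IsClosed ((W₀.map T.toLinearMap : Submodule ℝ EllInfty) : Set EllInfty) := by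
    have h1 : ((W₀.map T.toLinearMap : Submodule ℝ EllInfty) : Set EllInfty) = ⇑T '' W₀ := by
      ext x; simp [Submodule.mem_map]
    rw [h1]
    exact ((isComplete_image_iff T.isometry.isUniformInducing).2
      (hW₀c.isComplete)).isClosed
  refine ⟨Z ⊔ W₀.map T.toLinearMap, isClosed_sup_fin _ _ hmapc, ?_, le_sup_left, ?_⟩
  · -- rank computation
    have h1 : Module.rank ℝ (W₀.map T.toLinearMap) = Module.rank ℝ W₀ :=
      ((Submodule.equivMapOfInjective T.toLinearMap T.injective W₀).rank_eq).symm
    have hsum := Submodule.rank_sup_add_rank_inf_eq V W₀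
    rw [hcompl.sup_eq_top, hcompl.inf_eq_bot, rank_top, rank_bot, add_zero,
      rank_eq_continuum] at hsum
    have hVlt : Module.rank ℝ V < Cardinal.aleph0 := Module.rank_lt_aleph0 ℝ V
    have hWrank : Module.rank ℝ W₀ = Cardinal.continuum := by
      refine le_antisymm ((Submodule.rank_le _).trans_eq rank_eq_continuum) ?_
      by_contra hlt
      push_neg at hlt
      have := Cardinal.add_lt_of_lt Cardinal.aleph0_le_continuum
        (hVlt.trans_le Cardinal.aleph0_le_continuum) hlt
      rw [← hsum] at this
      exact lt_irrefl _ this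
    refine le_antisymm ((Submodule.rank_le _).trans_eq rank_eq_continuum) ?_
    calc Cardinal.continuum = Module.rank ℝ W₀ := hWrank.symm
      _ = Module.rank ℝ (W₀.map T.toLinearMap) := h1.symm
      _ ≤ Module.rank ℝ (Z ⊔ W₀.map T.toLinearMap : Submodule ℝ EllInfty) :=
        Submodule.rank_mono le_sup_right
  · rw [eq_bot_iff]
    rintro x hx
    rw [Submodule.mem_inf] at hx
    obtain ⟨hxF, hxc⟩ := hx
    obtain ⟨z, hz, tw, htw, rfl⟩ := Submodule.mem_sup.1 hxF
    obtain ⟨w, hw, rfl⟩ := htw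
    have hwV : w ∈ V := by
      show T w ∈ Z ⊔ cZero
      refine Submodule.mem_sup.2 ⟨-z, Z.neg_mem hz, z + T.toLinearMap w, hxc, by abel⟩
    have hw0 : w = 0 := by
      have h1 : w ∈ V ⊓ W₀ := Submodule.mem_inf.2 ⟨hwV, hw⟩
      rw [hcompl.inf_eq_bot] at h1
      exact (Submodule.mem_bot ℝ).1 h1
    rw [hw0, map_zero, add_zero] at hxc ⊢
    have h2 : z ∈ Z ⊓ cZero := Submodule.mem_inf.2 ⟨hz, hxc⟩
    rw [hZc] at h2
    exact h2


theorem part2 (α β : Cardinal) (hα : Cardinal.aleph0 ≤ α) :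
    ¬ IsABSpaceable ℝ EllInfty ((cZero : Set EllInfty)ᶜ) α β := by
  classical
  rintro ⟨⟨W, hWr, _⟩, hext⟩
  have hαc : α ≤ Cardinal.continuum := by
    rw [← hWr]
    exact (Submodule.rank_le W).trans rank_le_continuum
  obtain ⟨emb⟩ : Nonempty (α.out ↪ Set.Ioo (0:ℝ) 1) := by
    rw [← Cardinal.le_def, Cardinal.mk_out, Cardinal.mk_Ioo_real zero_lt_one]
    exact hαc
  haveI : Infinite α.out := by
    rw [Cardinal.infinite_iff, Cardinal.mk_out]; exact hα
  set nE : ℕ ↪ α.out := Infinite.natEmbedding _ with hnE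
  set ε : α.out → ℝ := Function.extend nE (fun k => 1 / ((k : ℝ) + 1)) (fun _ => 1) with hε
  have hεpos : ∀ t, 0 < ε t := by
    intro t
    rw [hε, Function.extend_def]
    split_ifs <;> positivity
  have hεk : ∀ k : ℕ, ε (nE k) = 1 / ((k : ℝ) + 1) := fun k =>
    nE.injective.extend_apply _ _ k
  set v : α.out → EllInfty := fun t => T (G (emb t)) with hv
  set w : α.out → EllInfty := fun t => y + ε t • v t with hw
  have hGli : LinearIndependent ℝ (fun t : α.out => G (emb t)) := G_li.comp emb emb.injective
  have hkey : ∀ (s : Finset α.out) (a : α.out → ℝ),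
      (∑ t ∈ s, a t • w t) ∈ cZero → ∀ t ∈ s, a t = 0 := by
    intro s a hmem t ht
    have hrw : ∑ t ∈ s, a t • w t
        = (∑ t ∈ s, a t) • y + T (∑ t ∈ s, (a t * ε t) • G (emb t)) := by
      rw [map_sum]
      rw [Finset.sum_smul]
      rw [← Finset.sum_add_distrib]
      refine Finset.sum_congr rfl fun t _ => ?_
      rw [hw]
      simp only [smul_add, smul_smul]
      rw [LinearIsometry.map_smul]
    have h2 : T (∑ t ∈ s, (a t * ε t) • G (emb t)) ∈ cZero := by
      have h3 := cZero.sub_mem hmem (cZero.smul_mem (∑ t ∈ s, a t) y_mem)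
      rwa [hrw, add_sub_cancel_left] at h3
    have h3 := T_mem_cZero h2
    have h4 := linearIndependent_iff'.1 hGli s (fun t => a t * ε t) h3 t ht
    rcases mul_eq_zero.1 h4 with h5 | h5
    · exact h5
    · exact absurd h5 (ne_of_gt (hεpos t))
  have hwli : LinearIndependent ℝ w := by
    rw [linearIndependent_iff']
    intro s a h t ht
    exact hkey s a (by rw [h]; exact cZero.zero_mem) t ht
  set W' : Submodule ℝ EllInfty := Submodule.span ℝ (Set.range w) with hW'
  have hr : Module.rank ℝ W' = α := by
    rw [hW', rank_span hwli, Cardinal.mk_range_eq _ hwli.injective, Cardinal.mk_out]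
  have hs : (W' : Set EllInfty) ⊆ (cZero : Set EllInfty)ᶜ ∪ {0} := by
    intro x hx
    by_cases hxc : x ∈ cZero
    · right
      obtain ⟨c, hc⟩ := Finsupp.mem_span_range_iff_exists_finsupp.1 hx
      have hzero : ∀ t ∈ c.support, c t = 0 := by
        refine hkey c.support (fun t => c t) ?_
        show (∑ t ∈ c.support, c t • w t) ∈ cZero
        rw [show (∑ t ∈ c.support, c t • w t) = c.sum fun i a => a • w i from rfl, hc]
        exact hxc
      have hx0 : x = 0 := by
        rw [← hc]
        refine Finset.sum_eq_zero fun t ht => ?_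
        rw [hzero t ht]
        simp
      rw [hx0]
      rfl
    · left
      exact hxc
  obtain ⟨Z', hZ'c, _, hZ'le, hZ's⟩ := hext W' hr hs
  have hwy : Tendsto (fun k => w (nE k)) atTop (𝓝 y) := by
    rw [tendsto_iff_norm_sub_tendsto_zero]
    have hb : ∀ k : ℕ, ‖w (nE k) - y‖ ≤ 1 / ((k : ℝ) + 1) := by
      intro k
      have h1 : w (nE k) - y = ε (nE k) • v (nE k) := by
        show y + ε (nE k) • v (nE k) - y = ε (nE k) • v (nE k)
        abel
      rw [h1, norm_smul, hεk, hv]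
      have hv1 : ‖T (G (emb (nE k)))‖ ≤ 1 := by
        rw [T.norm_map]
        exact G_norm_le _
      have h2 : ‖(1 : ℝ) / ((k : ℝ) + 1)‖ = 1 / ((k : ℝ) + 1) := by
        rw [Real.norm_eq_abs, abs_of_pos (by positivity)]
      rw [h2]
      calc 1 / ((k : ℝ) + 1) * ‖T (G (emb (nE k)))‖ ≤ 1 / ((k : ℝ) + 1) * 1 := by
            exact mul_le_mul_of_nonneg_left hv1 (by positivity)
        _ = 1 / ((k : ℝ) + 1) := mul_one _
    exact squeeze_zero (fun k => norm_nonneg _) hb tendsto_one_div_add_atTop_nhds_zero_nat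
  have hyZ : y ∈ Z' := hZ'c.mem_of_tendsto hwy
    (Eventually.of_forall fun k => hZ'le (Submodule.subset_span ⟨nE k, rfl⟩))
  rcases hZ's hyZ with h | h
  · exact h y_mem
  · exact y_ne h

end Stmt8Aux

end Aux

/-- `ℓ∞ \ c₀` is `(n, 𝔠)`-spaceable for every `n ∈ ℕ`, but is not
`(α, β)`-spaceable for any infinite cardinal `α` and any cardinal `β`. -/
theorem stmt8 :
    (∀ n : ℕ, ∀ Z : Submodule ℝ EllInfty, Module.rank ℝ Z = n → Z ⊓ cZero = ⊥ →
      ∃ F : Submodule ℝ EllInfty, IsClosed (F : Set EllInfty) ∧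
        Module.rank ℝ F = Cardinal.continuum ∧ Z ≤ F ∧ F ⊓ cZero = ⊥) ∧
    (∀ α β : Cardinal, Cardinal.aleph0 ≤ α →
      ¬ IsABSpaceable ℝ EllInfty ((cZero : Set EllInfty)ᶜ) α β) :=
  ⟨Stmt8Aux.part1, Stmt8Aux.part2⟩
end

section
/- Let V be a metrizable separable topological vector space and W a subspace of infinite codimension. Then for every k ∈ ℕ, V \ W is (k, ℵ₀)-dense lineable: for every k-dimensional subspace G with G \ {0} ⊆ V \ W, there is a countably-infinite-dimensional dense subspace D of V with G ⊆ D ⊆ (V \ W) ∪ {0}. -/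
open Cardinal Submodule Set

/-- A ℕ-indexed family where each vector is not in the span of the previous ones
is linearly independent. -/
lemma li_nat_aux {K M : Type*} [Field K] [AddCommGroup M] [Module K M] (f : ℕ → M)
    (h : ∀ n, f n ∉ Submodule.span K (f '' Set.Iio n)) : LinearIndependent K f := by
  have hfin : ∀ n, LinearIndependent K (fun i : Fin n => f i) := by
    intro n
    induction n with
    | zero => exact linearIndependent_empty_type
    | succ n ih =>
      have he : (fun i : Fin (n + 1) => f i) = Fin.snoc (fun i : Fin n => f i) (f n) := by
        funext i
        induction i using Fin.lastCases with
        | last => simp [Fin.snoc]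
        | cast i => simp [Fin.snoc_castSucc]
      rw [he, linearIndependent_fin_snoc]
      refine ⟨ih, fun hmem => h n ?_⟩
      refine Submodule.span_mono ?_ hmem
      rintro x ⟨i, rfl⟩
      exact ⟨(i : ℕ), i.isLt, rfl⟩
  rw [linearIndependent_iff_finset_linearIndependent]
  intro s
  obtain ⟨n, hn⟩ : ∃ n, ∀ i ∈ s, i < n :=
    ⟨s.sup id + 1, fun i hi => Nat.lt_succ_of_le (Finset.le_sup (f := id) hi)⟩
  exact (hfin n).comp (fun i : s => (⟨i.1, hn i.1 i.2⟩ : Fin n))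
    (fun a b hab => Subtype.ext (by simpa using congrArg Fin.val hab))

/-- Theorem 4.3: if `V` is a metrizable separable topological vector space
and `W` is a subspace of infinite codimension, then `V \ W` is `(k, ℵ₀)`-dense lineable
for every `k ∈ ℕ`. -/
theorem stmt11 (V : Type*) [AddCommGroup V] [Module ℝ V] [TopologicalSpace V]
    [IsTopologicalAddGroup V] [ContinuousSMul ℝ V]
    [TopologicalSpace.MetrizableSpace V] [TopologicalSpace.SeparableSpace V]
    (W : Submodule ℝ V) (hcodim : Cardinal.aleph0 ≤ Module.rank ℝ (V ⧸ W))
    (k : ℕ) (G : Submodule ℝ V) (hGdim : Module.rank ℝ G = k)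
    (hG : (G : Set V) \ {0} ⊆ (W : Set V)ᶜ) :
    ∃ D : Submodule ℝ V, Module.rank ℝ D = Cardinal.aleph0 ∧ Dense (D : Set V) ∧
      G ≤ D ∧ (D : Set V) ⊆ (W : Set V)ᶜ ∪ {0} := by
  letI : MetricSpace V := TopologicalSpace.metrizableSpaceMetric V
  obtain ⟨u, hu⟩ := TopologicalSpace.exists_dense_seq V
  let e : ℕ ≃ ℕ × ℕ := (Denumerable.eqv (ℕ × ℕ)).symm
  set π := W.mkQ with hπdef
  -- key perturbation step
  have hkey : ∀ S : Submodule ℝ V, Module.rank ℝ S < ℵ₀ → ∀ (x : V) (δ : ℝ), 0 < δ →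
      ∃ dd : V, dist dd x < δ ∧ π dd ∉ S.map π := by
    intro S hS x δ hδ
    set F : Submodule ℝ (V ⧸ W) := S.map π ⊔ Submodule.span ℝ {π x} with hFdef
    have hF : Module.rank ℝ F < ℵ₀ := by
      refine lt_of_le_of_lt (Submodule.rank_add_le_rank_add_rank _ _) ?_
      refine Cardinal.add_lt_aleph0 (lt_of_le_of_lt (rank_map_le _ _) hS) ?_
      refine lt_of_le_of_lt ((rank_span_le _).trans ?_) Cardinal.one_lt_aleph0
      simp
    obtain ⟨q, hq⟩ : ∃ q : V ⧸ W, q ∉ F := by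
      by_contra hc
      push_neg at hc
      have htop : F = ⊤ := eq_top_iff.mpr fun q _ => hc q
      rw [htop, rank_top] at hF
      exact absurd hcodim (not_le_of_gt hF)
    obtain ⟨v, rfl⟩ := W.mkQ_surjective q
    have hcont : Filter.Tendsto (fun c : ℝ => x + c • v) (nhds 0) (nhds x) := by
      have hC : Continuous fun c : ℝ => x + c • v := by continuity
      have h0 : x + (0 : ℝ) • v = x := by simp
      simpa [h0] using hC.tendsto 0
    have hev : ∀ᶠ c : ℝ in nhds 0, dist (x + c • v) x < δ :=
      Metric.tendsto_nhds.mp hcont δ hδ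
    have hev' : ∀ᶠ c : ℝ in nhdsWithin 0 {(0 : ℝ)}ᶜ,
        dist (x + c • v) x < δ ∧ c ≠ 0 :=
      Filter.Eventually.and (hev.filter_mono nhdsWithin_le_nhds)
        (by exact self_mem_nhdsWithin)
    obtain ⟨c, hc1, hc0⟩ := hev'.exists
    refine ⟨x + c • v, hc1, fun hmem => hq ?_⟩
    have hx : π x ∈ F := mem_sup_right (mem_span_singleton_self _)
    have hd : π (x + c • v) ∈ F := mem_sup_left hmem
    have heq : c • π v = π (x + c • v) - π x := by
      simp [map_add, map_smul]
    have hcv : c • π v ∈ F := heq ▸ sub_mem hd hx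
    have := F.smul_mem c⁻¹ hcv
    rwa [smul_smul, inv_mul_cancel₀ hc0, one_smul] at this
  -- base submodule
  have hGdisj : Disjoint W G := by
    refine Submodule.disjoint_def.mpr fun x hxW hxG => ?_
    by_contra hx0
    exact hG ⟨hxG, by simpa using hx0⟩ hxW
  have hGrank : Module.rank ℝ G < ℵ₀ := by rw [hGdim]; exact nat_lt_aleph0 k
  let P : Submodule ℝ V → Prop := fun S => Module.rank ℝ S < ℵ₀ ∧ G ≤ S ∧ Disjoint W S
  have htolpos : ∀ n : ℕ, (0 : ℝ) < 1 / ((e n).2 + 1) := by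
    intro n; positivity
  let step : {S : Submodule ℝ V // P S} → ℕ → V := fun S n =>
    Classical.choose (hkey S.1 S.2.1 (u (e n).1) (1 / ((e n).2 + 1)) (htolpos n))
  have hstep : ∀ (S : {S : Submodule ℝ V // P S}) (n : ℕ),
      dist (step S n) (u (e n).1) < 1 / ((e n).2 + 1) ∧ π (step S n) ∉ S.1.map π :=
    fun S n => Classical.choose_spec (hkey S.1 S.2.1 (u (e n).1) (1 / ((e n).2 + 1)) (htolpos n))
  have hstepP : ∀ (S : {S : Submodule ℝ V // P S}) (n : ℕ),
      P (S.1 ⊔ Submodule.span ℝ {step S n}) := by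
    intro S n
    refine ⟨?_, le_trans S.2.2.1 le_sup_left, ?_⟩
    · refine lt_of_le_of_lt (Submodule.rank_add_le_rank_add_rank _ _) ?_
      refine Cardinal.add_lt_aleph0 S.2.1 ?_
      refine lt_of_le_of_lt ((rank_span_le _).trans ?_) Cardinal.one_lt_aleph0
      simp
    · refine Submodule.disjoint_def.mpr fun x hxW hx => ?_
      obtain ⟨s, hs, y, hy, rfl⟩ := Submodule.mem_sup.mp hx
      obtain ⟨c, rfl⟩ := Submodule.mem_span_singleton.mp hy
      have hπ0 : π (s + c • step S n) = 0 := by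
        simpa [hπdef] using (Submodule.Quotient.mk_eq_zero W).mpr hxW
      by_cases hc : c = 0
      · subst hc
        simp only [zero_smul, add_zero] at hxW ⊢
        exact Submodule.disjoint_def.mp S.2.2.2 s hxW hs
      · exfalso
        apply (hstep S n).2
        have : c • π (step S n) = -(π s) := by
          have := hπ0
          rw [map_add, map_smul] at this
          linear_combination (norm := module) this
        have hmem : c • π (step S n) ∈ S.1.map π :=
          this ▸ neg_mem (Submodule.mem_map_of_mem hs)
        have h2 := (S.1.map π).smul_mem c⁻¹ hmem
        rwa [smul_smul, inv_mul_cancel₀ hc, one_smul] at h2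
  let chain : ℕ → {S : Submodule ℝ V // P S} := fun n =>
    Nat.rec ⟨G, hGrank, le_refl G, hGdisj⟩
      (fun n ih => ⟨ih.1 ⊔ Submodule.span ℝ {step ih n}, hstepP ih n⟩) n
  let d : ℕ → V := fun n => step (chain n) n
  have hchain_succ : ∀ n, (chain (n + 1)).1 = (chain n).1 ⊔ Submodule.span ℝ {d n} :=
    fun n => rfl
  have hchain_mono : Monotone fun n => (chain n).1 :=
    monotone_nat_of_le_succ fun n => by rw [hchain_succ]; exact le_sup_left
  have hdmem : ∀ n, d n ∈ (chain (n + 1)).1 := fun n => by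
    rw [hchain_succ]; exact mem_sup_right (mem_span_singleton_self _)
  set D : Submodule ℝ V := ⨆ n, (chain n).1 with hDdef
  have hmemD : ∀ x : V, x ∈ D ↔ ∃ n, x ∈ (chain n).1 := fun x =>
    Submodule.mem_iSup_of_directed _ hchain_mono.directed_le
  have hchain_le_D : ∀ n, (chain n).1 ≤ D := fun n => le_iSup (fun n => (chain n).1) n
  have hGD : G ≤ D := le_trans (chain 0).2.2.1 (hchain_le_D 0)
  have hdD : ∀ n, d n ∈ D := fun n => hchain_le_D (n + 1) (hdmem n)
  have hDdisj : Disjoint W D := by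
    refine Submodule.disjoint_def.mpr fun x hxW hxD => ?_
    obtain ⟨n, hn⟩ := (hmemD x).mp hxD
    exact Submodule.disjoint_def.mp (chain n).2.2.2 x hxW hn
  -- density
  have hdense : Dense (D : Set V) := by
    intro y
    rw [Metric.mem_closure_iff]
    intro ε hε
    obtain ⟨i, hi⟩ := Metric.denseRange_iff.mp hu y (ε / 2) (by linarith)
    obtain ⟨j, hj⟩ := exists_nat_one_div_lt (show (0 : ℝ) < ε / 2 by linarith)
    set n := e.symm (i, j) with hn
    have hen : e n = (i, j) := e.apply_symm_apply _
    have hdist := (hstep (chain n) n).1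
    rw [hen] at hdist
    refine ⟨d n, hdD n, ?_⟩
    calc dist y (d n) ≤ dist y (u i) + dist (u i) (d n) := dist_triangle _ _ _
      _ < ε / 2 + ε / 2 := by
          refine add_lt_add hi ?_
          rw [dist_comm]
          exact lt_trans hdist hj
      _ = ε := by ring
  -- rank upper bound
  have hrank_le : Module.rank ℝ D ≤ ℵ₀ := by
    have hle : D ≤ G ⊔ Submodule.span ℝ (Set.range d) := by
      refine iSup_le fun n => ?_
      induction n with
      | zero => exact le_sup_left
      | succ n ih =>
        rw [hchain_succ]
        refine sup_le ih ?_
        refine le_trans (Submodule.span_mono ?_) le_sup_right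
        exact singleton_subset_iff.mpr ⟨n, rfl⟩
    refine le_trans (Submodule.rank_mono hle) ?_
    refine le_trans (Submodule.rank_add_le_rank_add_rank _ _) ?_
    have h1 : Module.rank ℝ G ≤ ℵ₀ := le_of_lt hGrank
    have h2 : Module.rank ℝ (Submodule.span ℝ (Set.range d)) ≤ ℵ₀ := by
      refine le_trans (rank_span_le _) ?_
      simpa using Cardinal.mk_range_le_lift (f := d)
    calc Module.rank ℝ G + Module.rank ℝ (Submodule.span ℝ (Set.range d))
        ≤ ℵ₀ + ℵ₀ := add_le_add h1 h2
      _ = ℵ₀ := Cardinal.aleph0_add_aleph0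
  -- rank lower bound
  have hli : LinearIndependent ℝ (fun n => π (d n)) := by
    refine li_nat_aux _ fun n hmem => ?_
    apply (hstep (chain n) n).2
    have hsub : Submodule.span ℝ ((fun m => π (d m)) '' Set.Iio n) ≤ (chain n).1.map π := by
      rw [Submodule.span_le]
      rintro x ⟨i, hi, rfl⟩
      exact Submodule.mem_map_of_mem (hchain_mono (Nat.succ_le_of_lt hi) (hdmem i))
    exact hsub hmem
  have hrank_ge : ℵ₀ ≤ Module.rank ℝ D := by
    have h1 : Submodule.span ℝ (Set.range fun n => π (d n)) ≤ D.map π := by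
      rw [Submodule.span_le]
      rintro x ⟨n, rfl⟩
      exact Submodule.mem_map_of_mem (hdD n)
    have h2 : Module.rank ℝ (Submodule.span ℝ (Set.range fun n => π (d n))) = ℵ₀ := by
      rw [rank_span hli]
      simpa using Cardinal.mk_range_eq_of_injective hli.injective
    calc ℵ₀ = Module.rank ℝ (Submodule.span ℝ (Set.range fun n => π (d n))) := h2.symm
      _ ≤ Module.rank ℝ (D.map π) := Submodule.rank_mono h1
      _ ≤ Module.rank ℝ D := rank_map_le _ _
  refine ⟨D, le_antisymm hrank_le hrank_ge, hdense, hGD, ?_⟩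
  intro x hx
  rcases eq_or_ne x 0 with h0 | h0
  · exact Or.inr (by simp [h0])
  · exact Or.inl fun hxW => h0 (Submodule.disjoint_def.mp hDdisj x hxW hx)
end

section
/- Let V be a metrizable separable topological vector space and W a proper subspace with dim(V/W) infinite. Then for every x ∈ V \ W there exists a dense linear subspace D of V of countably infinite dimension with x ∈ D and D ∩ W = {0}. (I.e., V \ W is pointwise ℵ₀-dense-lineable.) -/
lemma exists_fresh {ι : Type*} [Infinite ι] (F : ℕ → Finset ι) :
    ∃ σ : ℕ → ι, Function.Injective σ ∧ ∀ n, σ n ∉ F n := by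
  classical
  let f := Infinite.natEmbedding ι
  let T : ℕ → Finset ℕ := fun n => (F n).preimage f (f.injective.injOn)
  let N : ℕ → ℕ := fun n => (Finset.range (n + 1)).sup (fun k => (T k).sup id)
  let m : ℕ → ℕ := fun n => N n + n + 1
  have hmono : StrictMono m := by
    intro a b hab
    have h1 : N a ≤ N b := by
      apply Finset.sup_mono
      intro k hk
      simp only [Finset.mem_range] at *
      omega
    simp only [m]
    omega
  refine ⟨fun n => f (m n), f.injective.comp hmono.injective, ?_⟩
  intro n hmem
  have hT : m n ∈ T n := Finset.mem_preimage.mpr hmem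
  have h1 : m n ≤ (T n).sup id := Finset.le_sup (f := id) hT
  have h2 : (T n).sup id ≤ N n :=
    Finset.le_sup (f := fun k => (T k).sup id) (Finset.self_mem_range_succ n)
  simp only [m, id] at h1 h2 ⊢
  omega

set_option maxHeartbeats 1000000 in
/-- Remark 5.2: if `V` is a metrizable separable topological vector space
and `W` is a proper subspace of infinite codimension, then `V \ W` is pointwise
`ℵ₀`-dense-lineable. -/
theorem stmt12 (V : Type*) [AddCommGroup V] [Module ℝ V] [TopologicalSpace V]
    [IsTopologicalAddGroup V] [ContinuousSMul ℝ V]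
    [TopologicalSpace.MetrizableSpace V] [TopologicalSpace.SeparableSpace V]
    (W : Submodule ℝ V) (hW : W ≠ ⊤)
    (hcodim : Cardinal.aleph0 ≤ Module.rank ℝ (V ⧸ W))
    (x : V) (hx : x ∉ W) :
    ∃ D : Submodule ℝ V, Module.rank ℝ D = Cardinal.aleph0 ∧ Dense (D : Set V) ∧
      x ∈ D ∧ D ⊓ W = ⊥ := by
  classical
  letI : MetricSpace V := TopologicalSpace.metrizableSpaceMetric V
  haveI : Nonempty V := ⟨0⟩
  set π : V →ₗ[ℝ] V ⧸ W := W.mkQ with hπdef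
  have hπx : π x ≠ 0 := by
    simpa [π, Submodule.Quotient.mk_eq_zero] using hx
  let b := Module.Basis.ofVectorSpace ℝ (V ⧸ W)
  haveI hι : Infinite (Module.Basis.ofVectorSpaceIndex ℝ (V ⧸ W)) := by
    rw [Cardinal.infinite_iff, b.mk_eq_rank'']
    exact hcodim
  -- dense sequence with repetitions
  let z : ℕ → V := fun n => TopologicalSpace.denseSeq V (Nat.unpair n).1
  -- finite support sets
  let F : ℕ → Finset (Module.Basis.ofVectorSpaceIndex ℝ (V ⧸ W)) := fun n =>
    (b.repr (π x)).support ∪ (Finset.range (n + 1)).biUnion (fun k => (b.repr (π (z k))).support)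
  obtain ⟨σ, hσinj, hσF⟩ := exists_fresh F
  -- preimages of basis vectors
  have he : ∀ n : ℕ, ∃ v : V, π v = b (σ n) := fun n => W.mkQ_surjective _
  choose e hpe using he
  -- small nonzero scalars
  have ht : ∀ n : ℕ, ∃ t : ℝ, t ≠ 0 ∧ dist (z n + t • e n) (z n) < 1 / (n + 1) := by
    intro n
    have hc : Continuous (fun s : ℝ => z n + s • e n) := by continuity
    have h0 : Filter.Tendsto (fun s : ℝ => z n + s • e n) (nhds 0) (nhds (z n)) := by
      have := hc.tendsto 0
      simpa using this
    have hev : ∀ᶠ s in nhds (0 : ℝ), dist (z n + s • e n) (z n) < 1 / (n + 1) :=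
      (Metric.tendsto_nhds.mp h0) _ (by positivity)
    have hev' : ∀ᶠ s in nhdsWithin (0 : ℝ) {(0 : ℝ)}ᶜ,
        dist (z n + s • e n) (z n) < 1 / (n + 1) := hev.filter_mono nhdsWithin_le_nhds
    have hne : ∀ᶠ s in nhdsWithin (0 : ℝ) {(0 : ℝ)}ᶜ, s ≠ 0 := by
      exact self_mem_nhdsWithin (a := (0:ℝ)) (s := {(0:ℝ)}ᶜ)
    obtain ⟨s, hs1, hs2⟩ := (hne.and hev').exists
    exact ⟨s, hs1, hs2⟩
  choose t ht0 htd using ht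
  set d : ℕ → V := fun n => z n + t n • e n with hddef
  have hπd : ∀ n, π (d n) = π (z n) + t n • b (σ n) := by
    intro n
    simp [d, map_add, map_smul, hpe n]
  -- density of range d
  have hdense : Dense (Set.range d) := by
    rw [Metric.dense_iff]
    intro v r hr
    obtain ⟨k, hk⟩ := Metric.denseRange_iff.mp (TopologicalSpace.denseRange_denseSeq V) v (r / 2)
      (by positivity)
    obtain ⟨m, hm⟩ := exists_nat_gt (2 / r)
    set n := Nat.pair k m with hn
    refine ⟨d n, Metric.mem_ball.mpr ?_, Set.mem_range_self n⟩
    have hzn : z n = TopologicalSpace.denseSeq V k := by simp [z, n, Nat.unpair_pair]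
    have h1 : dist (d n) (z n) < 1 / (n + 1) := htd n
    have hmn : (m : ℝ) ≤ (n : ℝ) := by exact_mod_cast Nat.right_le_pair k m
    have h2 : (1 : ℝ) / (n + 1) ≤ 1 / (m + 1) := by
      apply one_div_le_one_div_of_le <;> [positivity; linarith]
    have h3 : (1 : ℝ) / (m + 1) < r / 2 := by
      rw [div_lt_iff₀ (by positivity)]
      have h4 : (2 / r) * (r / 2) < ((m : ℝ) + 1) * (r / 2) :=
        mul_lt_mul_of_pos_right (by linarith) (by positivity)
      have h5 : (2 / r) * (r / 2) = 1 := by field_simp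
      linarith
    have h1' : dist (d n) (TopologicalSpace.denseSeq V k) < 1 / ((n : ℝ) + 1) := hzn ▸ h1
    have hk' : dist (TopologicalSpace.denseSeq V k) v < r / 2 := by
      rw [dist_comm]; exact hk
    calc dist (d n) v ≤ dist (d n) (TopologicalSpace.denseSeq V k)
          + dist (TopologicalSpace.denseSeq V k) v := dist_triangle _ _ _
    _ < r / 2 + r / 2 := by linarith
    _ = r := by ring
  -- support inclusions
  have hsx : ∀ n : ℕ, σ n ∉ (b.repr (π x)).support := by
    intro n hmem
    exact hσF n (Finset.mem_union_left _ hmem)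
  have hsz : ∀ n k : ℕ, k ≤ n → σ n ∉ (b.repr (π (z k))).support := by
    intro n k hk hmem
    exact hσF n (Finset.mem_union_right _ (Finset.mem_biUnion.mpr
      ⟨k, Finset.mem_range.mpr (Nat.lt_succ_of_le hk), hmem⟩))
  -- the key coefficient lemma
  have key : ∀ (s : Finset ℕ) (a : ℝ) (g : ℕ → ℝ),
      a • π x + ∑ n ∈ s, g n • π (d n) = 0 → a = 0 ∧ ∀ n ∈ s, g n = 0 := by
    intro s a g hsum
    have hg : ∀ n ∈ s, g n = 0 := by
      by_contra hcon
      push_neg at hcon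
      obtain ⟨n0, hn0s, hn0⟩ := hcon
      set s' := s.filter (fun n => g n ≠ 0) with hs'
      have hne : s'.Nonempty := ⟨n0, Finset.mem_filter.mpr ⟨hn0s, hn0⟩⟩
      set N := s'.max' hne with hNdef
      have hNs' : N ∈ s' := s'.max'_mem hne
      have hNg : g N ≠ 0 := (Finset.mem_filter.mp hNs').2
      have hNmax : ∀ n ∈ s', n ≤ N := fun n hn => Finset.le_max' _ _ hn
      have hsum' : a • π x + ∑ n ∈ s', g n • π (d n) = 0 := by
        rw [← hsum]
        congr 1
        rw [hs']
        exact Finset.sum_filter_of_ne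
          (fun n _ hne0 h0 => hne0 (by rw [h0, zero_smul]))
      have hx0 : b.repr (π x) (σ N) = 0 := Finsupp.notMem_support_iff.mp (hsx N)
      have hz0 : ∀ n ∈ s', b.repr (π (z n)) (σ N) = 0 := fun n hn =>
        Finsupp.notMem_support_iff.mp (hsz N n (hNmax n hn))
      have hterm : ∀ n ∈ s', b.repr (g n • π (d n)) (σ N)
          = if n = N then g n * t n else 0 := by
        intro n hn
        rw [hπd n]
        rw [map_smul, map_add, map_smul, Module.Basis.repr_self]
        rw [Finsupp.smul_apply, Finsupp.add_apply, Finsupp.smul_apply, hz0 n hn,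
          Finsupp.single_apply]
        simp only [zero_add, smul_eq_mul, hσinj.eq_iff]
        by_cases h : n = N <;> simp [h]
      have hcalc : (0 : ℝ) = g N * t N := by
        calc (0 : ℝ) = b.repr (a • π x + ∑ n ∈ s', g n • π (d n)) (σ N) := by
              rw [hsum']; simp
        _ = a * b.repr (π x) (σ N) + ∑ n ∈ s', b.repr (g n • π (d n)) (σ N) := by
              rw [map_add, map_smul, map_sum]
              simp [Finsupp.finset_sum_apply]
        _ = ∑ n ∈ s', (if n = N then g n * t n else 0) := by
              rw [hx0, mul_zero, zero_add]
              exact Finset.sum_congr rfl hterm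
        _ = g N * t N := by rw [Finset.sum_ite_eq' s' N (fun n => g n * t n), if_pos hNs']
      exact hNg (by
        have := hcalc.symm
        rcases mul_eq_zero.mp this with h | h
        · exact h
        · exact absurd h (ht0 N))
    refine ⟨?_, hg⟩
    have hzero : ∑ n ∈ s, g n • π (d n) = 0 :=
      Finset.sum_eq_zero fun n hn => by rw [hg n hn, zero_smul]
    rw [hzero, add_zero] at hsum
    rcases smul_eq_zero.mp hsum with h | h
    · exact h
    · exact absurd h hπx
  -- the subspace
  refine ⟨Submodule.span ℝ (insert x (Set.range d)), ?_, ?_, ?_, ?_⟩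
  · -- rank
    have hdind : LinearIndependent ℝ d := by
      rw [linearIndependent_iff]
      intro l hl
      have h1 : π (Finsupp.linearCombination ℝ d l) = 0 := by rw [hl, map_zero]
      have h2 : (0 : ℝ) • π x + ∑ n ∈ l.support, l n • π (d n) = 0 := by
        rw [Finsupp.linearCombination_apply, Finsupp.sum, map_sum] at h1
        simpa [map_smul] using h1
      obtain ⟨-, hc⟩ := key l.support 0 l h2
      ext n
      by_cases h : n ∈ l.support
      · exact hc n h
      · exact Finsupp.notMem_support_iff.mp h
    have hub : Module.rank ℝ (Submodule.span ℝ (insert x (Set.range d))) ≤ Cardinal.aleph0 := by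
      refine (rank_span_le _).trans ?_
      haveI := ((Set.countable_range d).insert x).to_subtype
      exact Cardinal.mk_le_aleph0
    have hlb : Cardinal.aleph0 ≤ Module.rank ℝ (Submodule.span ℝ (insert x (Set.range d))) := by
      have h1 : Module.rank ℝ (Submodule.span ℝ (Set.range d)) = Cardinal.mk (Set.range d) :=
        rank_span hdind
      haveI := (Set.countable_range d).to_subtype
      haveI : Infinite (Set.range d) :=
        Set.infinite_coe_iff.mpr (Set.infinite_range_of_injective hdind.injective)
      have h2 : Cardinal.mk (Set.range d) = Cardinal.aleph0 := Cardinal.mk_eq_aleph0 _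
      have h3 : Submodule.span ℝ (Set.range d) ≤ Submodule.span ℝ (insert x (Set.range d)) :=
        Submodule.span_mono (Set.subset_insert _ _)
      calc Cardinal.aleph0 = Module.rank ℝ (Submodule.span ℝ (Set.range d)) := (h1.trans h2).symm
      _ ≤ _ := Submodule.rank_mono h3
    exact le_antisymm hub hlb
  · -- dense
    refine hdense.mono ?_
    rintro v ⟨n, rfl⟩
    exact Submodule.subset_span (Set.mem_insert_of_mem _ ⟨n, rfl⟩)
  · exact Submodule.subset_span (Set.mem_insert _ _)
  · -- trivial intersection with W
    rw [eq_bot_iff]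
    rintro v hv
    rw [Submodule.mem_inf] at hv
    obtain ⟨hvD, hvW⟩ := hv
    obtain ⟨a, zz, hzz, rfl⟩ := Submodule.mem_span_insert.mp hvD
    obtain ⟨c, rfl⟩ := Finsupp.mem_span_range_iff_exists_finsupp.mp hzz
    have hπ0 : a • π x + ∑ n ∈ c.support, c n • π (d n) = 0 := by
      have h1 : π (a • x + c.sum fun i r => r • d i) = 0 := by
        rw [hπdef]
        rw [Submodule.mkQ_apply, Submodule.Quotient.mk_eq_zero]
        exact hvW
      rw [map_add, map_smul, Finsupp.sum, map_sum] at h1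
      simpa [map_smul] using h1
    obtain ⟨ha, hc⟩ := key c.support a c hπ0
    have hc0 : c = 0 := by
      ext n
      by_cases h : n ∈ c.support
      · exact hc n h
      · exact Finsupp.notMem_support_iff.mp h
    simp [ha, hc0]
end

section
/- Let V be an infinite-dimensional separable metrizable topological vector space and W a dense subspace of V. If V \ W is (m, dim V)-lineable for some m ∈ ℕ, then V \ W is pointwise maximal dense-lineable: for every v ∈ V \ W there exists a dense linear subspace S of V of dimension dim V with v ∈ S and S ∩ W = {0}. -/
open Cardinal Set Submodule

/-- Theorem 5.3: let `V` be an infinite-dimensional separable metrizable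
topological vector space and `W` a dense subspace. If `V \ W` is `(m, dim V)`-lineable
for some `m ∈ ℕ`, then `V \ W` is pointwise maximal dense-lineable. -/
theorem stmt14 (V : Type*) [AddCommGroup V] [Module ℝ V] [TopologicalSpace V]
    [IsTopologicalAddGroup V] [ContinuousSMul ℝ V]
    [TopologicalSpace.MetrizableSpace V] [TopologicalSpace.SeparableSpace V]
    (hinf : Cardinal.aleph0 ≤ Module.rank ℝ V)
    (W : Submodule ℝ V) (hWdense : Dense (W : Set V))
    (hlin : ∃ m : ℕ,
      (∃ E : Submodule ℝ V, Module.rank ℝ E = m ∧ (E : Set V) ⊆ (W : Set V)ᶜ ∪ {0}) ∧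
      ∀ E : Submodule ℝ V, Module.rank ℝ E = m → (E : Set V) ⊆ (W : Set V)ᶜ ∪ {0} →
        ∃ Y : Submodule ℝ V, Module.rank ℝ Y = Module.rank ℝ V ∧ E ≤ Y ∧
          (Y : Set V) ⊆ (W : Set V)ᶜ ∪ {0})
    (v : V) (hv : v ∉ W) :
    ∃ S : Submodule ℝ V, Dense (S : Set V) ∧ Module.rank ℝ S = Module.rank ℝ V ∧
      v ∈ S ∧ S ⊓ W = ⊥ := by
  classical
  -- Step 0: extract a full-rank subspace Y₀ disjoint from W.
  obtain ⟨m, ⟨E, hErank, hEsub⟩, hext⟩ := hlin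
  obtain ⟨Y₀, hY₀rank, -, hY₀sub⟩ := hext E hErank hEsub
  have hY₀W : Y₀ ⊓ W = ⊥ := by
    rw [eq_bot_iff]
    rintro x hx
    rw [Submodule.mem_inf] at hx
    rcases hY₀sub hx.1 with h | h
    · exact absurd hx.2 h
    · simpa using h
  -- Step 1: modify Y₀ to a full-rank subspace Y disjoint from W containing v.
  set Wv : Submodule ℝ V := W ⊔ span ℝ {v} with hWvdef
  set P : Submodule ℝ V := Y₀ ⊓ Wv with hPdef
  set p : Submodule ℝ Y₀ := Submodule.comap Y₀.subtype Wv with hpdef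
  have hmapp : Submodule.map Y₀.subtype p = P := by
    rw [hpdef, Submodule.map_comap_subtype]
  have hPrank : Module.rank ℝ P ≤ 1 := by
    by_cases hex : ∃ x ∈ P, x ∉ W
    · obtain ⟨x₁, hx₁P, hx₁W⟩ := hex
      obtain ⟨hx₁Y₀, hx₁Wv⟩ := Submodule.mem_inf.1 hx₁P
      obtain ⟨w₁, hw₁, z₁, hz₁, rfl⟩ := Submodule.mem_sup.1 hx₁Wv
      obtain ⟨c₁, rfl⟩ := Submodule.mem_span_singleton.1 hz₁
      have hc₁ : c₁ ≠ 0 := by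
        rintro rfl
        exact hx₁W (by simpa using hw₁)
      have hle : P ≤ span ℝ {w₁ + c₁ • v} := by
        intro x hxP
        obtain ⟨hxY₀, hxWv⟩ := Submodule.mem_inf.1 hxP
        obtain ⟨w₂, hw₂, z₂, hz₂, rfl⟩ := Submodule.mem_sup.1 hxWv
        obtain ⟨c₂, rfl⟩ := Submodule.mem_span_singleton.1 hz₂
        have key : c₁ • (w₂ + c₂ • v) - c₂ • (w₁ + c₁ • v) ∈ Y₀ ⊓ W := by
          refine Submodule.mem_inf.2 ⟨?_, ?_⟩
          · exact Submodule.sub_mem _ (Y₀.smul_mem _ hxY₀) (Y₀.smul_mem _ hx₁Y₀)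
          · have h : c₁ • (w₂ + c₂ • v) - c₂ • (w₁ + c₁ • v) = c₁ • w₂ - c₂ • w₁ := by
              module
            rw [h]
            exact Submodule.sub_mem _ (W.smul_mem _ hw₂) (W.smul_mem _ hw₁)
        rw [hY₀W, Submodule.mem_bot, sub_eq_zero] at key
        rw [Submodule.mem_span_singleton]
        refine ⟨c₁⁻¹ * c₂, ?_⟩
        calc (c₁⁻¹ * c₂) • (w₁ + c₁ • v) = c₁⁻¹ • (c₂ • (w₁ + c₁ • v)) := by
              rw [mul_smul]
        _ = c₁⁻¹ • (c₁ • (w₂ + c₂ • v)) := by rw [key]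
        _ = w₂ + c₂ • v := by rw [smul_smul, inv_mul_cancel₀ hc₁, one_smul]
      calc Module.rank ℝ P ≤ Module.rank ℝ (span ℝ {w₁ + c₁ • v}) :=
            Submodule.rank_mono hle
      _ ≤ #({w₁ + c₁ • v} : Set V) := rank_span_le _
      _ = 1 := Cardinal.mk_singleton _
    · push_neg at hex
      have hPbot : P = ⊥ := by
        rw [eq_bot_iff, ← hY₀W]
        intro x hx
        exact Submodule.mem_inf.2 ⟨(Submodule.mem_inf.1 hx).1, hex x hx⟩
      rw [hPbot, rank_bot]
      exact zero_le_one
  have hprank : Module.rank ℝ p ≤ 1 := by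
    have h := (Submodule.equivMapOfInjective Y₀.subtype Y₀.injective_subtype p).rank_eq
    rw [hmapp] at h
    rw [h]; exact hPrank
  obtain ⟨q, hq⟩ := Submodule.exists_isCompl p
  have hranksum : Module.rank ℝ Y₀ = Module.rank ℝ p + Module.rank ℝ q := by
    have h := Submodule.rank_sup_add_rank_inf_eq p q
    rw [hq.sup_eq_top, hq.inf_eq_bot, rank_top, rank_bot, add_zero] at h
    exact h
  have hq_inf : ℵ₀ ≤ Module.rank ℝ q := by
    by_contra h
    push_neg at h
    have hfin : Module.rank ℝ Y₀ < ℵ₀ := by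
      rw [hranksum]
      exact Cardinal.add_lt_aleph0 (hprank.trans_lt Cardinal.one_lt_aleph0) h
    rw [hY₀rank] at hfin
    exact absurd hinf hfin.not_ge
  have hqV : Module.rank ℝ V ≤ Module.rank ℝ q := by
    calc Module.rank ℝ V = Module.rank ℝ Y₀ := hY₀rank.symm
    _ = Module.rank ℝ p + Module.rank ℝ q := hranksum
    _ ≤ 1 + Module.rank ℝ q := add_le_add_left hprank _
    _ ≤ Module.rank ℝ q + Module.rank ℝ q :=
        add_le_add_left (le_trans Cardinal.one_lt_aleph0.le hq_inf) _
    _ = Module.rank ℝ q := Cardinal.add_eq_self hq_inf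
  set Q : Submodule ℝ V := Submodule.map Y₀.subtype q with hQdef
  set Y : Submodule ℝ V := Q ⊔ span ℝ {v} with hYdef
  have hrankQ : Module.rank ℝ Q = Module.rank ℝ q :=
    ((Submodule.equivMapOfInjective Y₀.subtype Y₀.injective_subtype q).rank_eq).symm
  have hYrank : Module.rank ℝ Y = Module.rank ℝ V := by
    refine le_antisymm (Submodule.rank_le Y) ?_
    refine hqV.trans ?_
    rw [← hrankQ]
    exact Submodule.rank_mono le_sup_left
  have hvY : v ∈ Y := Submodule.mem_sup_right (Submodule.mem_span_singleton_self v)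
  have hYW : Y ⊓ W = ⊥ := by
    rw [eq_bot_iff]
    rintro x hx
    rw [Submodule.mem_inf] at hx
    obtain ⟨hxY, hxW⟩ := hx
    obtain ⟨a, ha, z, hz, rfl⟩ := Submodule.mem_sup.1 hxY
    obtain ⟨c, rfl⟩ := Submodule.mem_span_singleton.1 hz
    obtain ⟨u, hu, rfl⟩ := ha
    have hup : u ∈ p := by
      have h : (Y₀.subtype u : V) = (Y₀.subtype u + c • v) - c • v := by abel
      rw [hpdef, Submodule.mem_comap, h]
      exact Submodule.sub_mem _ (Submodule.mem_sup_left hxW)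
        (Submodule.mem_sup_right (Submodule.smul_mem _ _ (Submodule.mem_span_singleton_self v)))
    have hu0 : u = 0 := by
      have h := hq.disjoint.le_bot (Submodule.mem_inf.2 ⟨hup, hu⟩)
      simpa using h
    rcases eq_or_ne c 0 with rfl | hc
    · simp [hu0]
    · exfalso
      apply hv
      have hcv : c • v ∈ W := by simpa [hu0] using hxW
      have h : v = c⁻¹ • (c • v) := by rw [smul_smul, inv_mul_cancel₀ hc, one_smul]
      rw [h]
      exact W.smul_mem _ hcv
  clear hY₀W hPrank hprank hranksum hq_inf hqV hrankQ hmapp hq hY₀sub hY₀rank hErank hEsub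
  -- Step 2: perturb a basis of Y with elements of W to get a dense subspace.
  haveI : SecondCountableTopology V := by
    letI := TopologicalSpace.pseudoMetrizableSpacePseudoMetric V
    exact UniformSpace.secondCountable_of_separable V
  obtain ⟨Bo, hBoc, hBne, hBbasis⟩ := TopologicalSpace.exists_countable_basis V
  have hBone : Bo.Nonempty := by
    obtain ⟨U, hU, -, -⟩ := hBbasis.exists_subset_of_mem_open (mem_univ (0 : V)) isOpen_univ
    exact ⟨U, hU⟩
  obtain ⟨U, hUrange⟩ := hBoc.exists_eq_range hBone
  have hUmem : ∀ k, U k ∈ Bo := fun k => hUrange ▸ mem_range_self k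
  have hUopen : ∀ k, IsOpen (U k) := fun k => hBbasis.isOpen (hUmem k)
  have hUne : ∀ k, (U k).Nonempty := fun k =>
    nonempty_iff_ne_empty.2 (fun h => hBne (h ▸ hUmem k))
  have hw : ∀ k, ∃ x, x ∈ (W : Set V) ∧ x ∈ U k := fun k =>
    hWdense.exists_mem_open (hUopen k) (hUne k)
  choose w hwW hwU using hw
  have hv0 : v ≠ 0 := fun h => hv (h ▸ W.zero_mem)
  set v' : Y := ⟨v, hvY⟩ with hv'def
  have hv'0 : v' ≠ 0 := fun h => hv0 (by simpa [hv'def, Subtype.ext_iff] using h)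
  have hli := LinearIndepOn.singleton (R := ℝ) (v := (id : Y → Y)) hv'0
  set b := Module.Basis.extend hli with hbdef
  have hmk : #(hli.extend (Set.subset_univ _)) = Module.rank ℝ Y := b.mk_eq_rank''
  haveI : Infinite (hli.extend (Set.subset_univ ({v'} : Set Y))) := by
    rw [Cardinal.infinite_iff, hmk, hYrank]
    exact hinf
  set i₀ : (hli.extend (Set.subset_univ ({v'} : Set Y))) :=
    ⟨v', hli.subset_extend _ rfl⟩ with hi₀def
  haveI : Infinite (({i₀}ᶜ : Set (hli.extend (Set.subset_univ ({v'} : Set Y))))) :=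
    ((Set.finite_singleton i₀).infinite_compl).to_subtype
  set e0 := Infinite.natEmbedding (({i₀}ᶜ : Set (hli.extend (Set.subset_univ ({v'} : Set Y)))))
    with he0def
  set e : ℕ → (hli.extend (Set.subset_univ ({v'} : Set Y))) := fun k => (e0 k : _) with hedef
  have he_inj : Function.Injective e :=
    fun a b h => e0.injective (Subtype.ext h)
  have he_ne : ∀ k, e k ≠ i₀ := fun k => (e0 k).2
  have hε : ∀ k, ∃ ε : ℝ, ε ≠ 0 ∧ w k + ε • (b (e k) : V) ∈ U k := by
    intro k
    have hcont : Continuous fun t : ℝ => w k + t • (b (e k) : V) :=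
      continuous_const.add (continuous_id.smul continuous_const)
    have hpre : (fun t : ℝ => w k + t • (b (e k) : V)) ⁻¹' (U k) ∈ nhds (0 : ℝ) := by
      apply hcont.continuousAt.preimage_mem_nhds
      have h0 : w k + (0 : ℝ) • (b (e k) : V) = w k := by simp
      rw [h0]
      exact (hUopen k).mem_nhds (hwU k)
    have hev : ∀ᶠ t in nhdsWithin (0 : ℝ) {(0 : ℝ)}ᶜ,
        w k + t • (b (e k) : V) ∈ U k := mem_nhdsWithin_of_mem_nhds hpre
    obtain ⟨t, ht, htne⟩ := (hev.and eventually_mem_nhdsWithin).exists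
    exact ⟨t, htne, ht⟩
  choose ε hε0 hεU using hε
  set σ : (hli.extend (Set.subset_univ ({v'} : Set Y))) → ℝˣ :=
    fun i => if h : ∃ k, e k = i then Units.mk0 (ε h.choose) (hε0 h.choose) else 1 with hσdef
  set G : (hli.extend (Set.subset_univ ({v'} : Set Y))) → V :=
    fun i => if h : ∃ k, e k = i then w h.choose + ε h.choose • (b i : V) else (b i : V)
    with hGdef
  have hGe : ∀ k, G (e k) = w k + ε k • (b (e k) : V) := by
    intro k
    have h : ∃ k', e k' = e k := ⟨k, rfl⟩
    have hk : h.choose = k := he_inj h.choose_spec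
    simp only [hGdef, dif_pos h, hk]
  have hGi₀ : G i₀ = v := by
    have h : ¬ ∃ k, e k = i₀ := fun ⟨k, hk⟩ => he_ne k hk
    simp only [hGdef, dif_neg h]
    rw [Module.Basis.extend_apply_self]
  have hGπ : ∀ i, W.mkQ (G i) = (σ i : ℝ) • W.mkQ (b i : V) := by
    intro i
    by_cases h : ∃ k, e k = i
    · simp only [hGdef, hσdef, dif_pos h, map_add, map_smul, Units.val_mk0]
      have hw0 : W.mkQ (w h.choose) = 0 := by
        rw [Submodule.mkQ_apply, Submodule.Quotient.mk_eq_zero]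
        exact hwW h.choose
      rw [hw0, zero_add]
    · simp only [hGdef, hσdef, dif_neg h, Units.val_one, one_smul]
  have hker : LinearMap.ker (W.mkQ ∘ₗ Y.subtype) = ⊥ := by
    rw [LinearMap.ker_eq_bot']
    intro x hx
    have hxW : (x : V) ∈ W := by
      have h : W.mkQ (x : V) = 0 := hx
      rwa [Submodule.mkQ_apply, Submodule.Quotient.mk_eq_zero] at h
    have h : (x : V) ∈ Y ⊓ W := Submodule.mem_inf.2 ⟨x.2, hxW⟩
    rw [hYW, Submodule.mem_bot] at h
    exact Subtype.ext h
  have hbind : LinearIndependent ℝ (fun i => W.mkQ (b i : V)) :=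
    b.linearIndependent.map' (W.mkQ ∘ₗ Y.subtype) hker
  have hscaled : LinearIndependent ℝ (fun i => W.mkQ (G i)) := by
    have h := hbind.units_smul σ
    have heq : (fun i => W.mkQ (G i)) = σ • (fun i => W.mkQ (b i : V)) := by
      funext i
      rw [Pi.smul_apply', hGπ i, Units.smul_def]
    rw [heq]
    exact h
  have hGind : LinearIndependent ℝ G :=
    LinearIndependent.of_comp W.mkQ hscaled
  refine ⟨span ℝ (Set.range G), ?_, ?_, ?_, ?_⟩
  · -- Dense
    rw [hBbasis.dense_iff]
    intro o ho hone
    obtain ⟨k, rfl⟩ : ∃ k, U k = o := by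
      rw [hUrange] at ho
      exact ho
    refine ⟨G (e k), ?_, Submodule.subset_span (mem_range_self _)⟩
    rw [hGe k]
    exact hεU k
  · -- rank
    refine le_antisymm (Submodule.rank_le _) ?_
    rw [rank_span hGind, Cardinal.mk_range_eq _ hGind.injective, hmk, hYrank]
  · exact Submodule.subset_span ⟨i₀, hGi₀⟩
  · -- disjoint from W
    rw [eq_bot_iff]
    rintro x hx
    rw [Submodule.mem_inf] at hx
    obtain ⟨hxS, hxW⟩ := hx
    obtain ⟨c, hc⟩ := Finsupp.mem_span_range_iff_exists_finsupp.1 hxS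
    have hc' : Finsupp.linearCombination ℝ G c = x := by
      rw [Finsupp.linearCombination_apply]; exact hc
    have h0 : Finsupp.linearCombination ℝ (fun i => W.mkQ (G i)) c = 0 := by
      have h := Finsupp.apply_linearCombination ℝ W.mkQ G c
      rw [hc'] at h
      have hx0 : W.mkQ x = 0 := by
        rw [Submodule.mkQ_apply, Submodule.Quotient.mk_eq_zero]; exact hxW
      rw [hx0] at h
      exact h.symm
    have hc0 : c = 0 := linearIndependent_iff.1 hscaled c h0
    rw [hc0, map_zero] at hc'
    rw [Submodule.mem_bot, ← hc']
end

section
/- For every p > 0, the set L_p[0,1] \ ⋃_{q>p} L_q[0,1] is not (α, β)-spaceable in L_p[0,1] for any infinite cardinal α ≤ 𝔠 and any cardinal β: there exists an α-dimensional subspace M of L_p[0,1] with M \ {0} disjoint from ⋃_{q>p} L_q[0,1] whose closure contains a nonzero function belonging to some L_q[0,1] with q > p. -/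
open MeasureTheory Filter Topology
open scoped ENNReal

section auxiliary

variable {P Q : ℝ}

/-- The basic singular profile: `y ^ (-1/P) * (1 - log y) ^ (-2/P)` on `(0,1]`, else `0`. -/
noncomputable def hfun (P : ℝ) (y : ℝ) : ℝ :=
  if y ∈ Set.Ioc (0:ℝ) 1 then y ^ (-(1/P)) * (1 - Real.log y) ^ (-(2/P)) else 0

lemma one_sub_log_pos {y : ℝ} (hy : 0 < y) (hy1 : y ≤ 1) : 0 < 1 - Real.log y := by
  have := Real.log_nonpos hy.le hy1
  linarith

lemma hfun_nonneg (P y : ℝ) : 0 ≤ hfun P y := by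
  unfold hfun
  split
  · rename_i h
    have h1 : 0 < y := h.1
    have h2 : 0 < 1 - Real.log y := one_sub_log_pos h.1 h.2
    positivity
  · exact le_refl 0

lemma hfun_eq_zero {P y : ℝ} (hy : y ∉ Set.Ioc (0:ℝ) 1) : hfun P y = 0 := by
  rw [hfun, if_neg hy]

lemma measurable_rpow_const (c : ℝ) : Measurable (fun x : ℝ => x ^ c) := by
  apply measurable_of_continuousOn_compl_singleton (0:ℝ)
  exact fun x hx => (Real.continuousAt_rpow_const x c (Or.inl hx)).continuousWithinAt

lemma measurable_hfun (P : ℝ) : Measurable (hfun P) := by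
  unfold hfun
  refine Measurable.ite measurableSet_Ioc ?_ measurable_const
  exact (measurable_rpow_const _).mul
    ((measurable_rpow_const _).comp (measurable_const.sub Real.measurable_log))

lemma hfun_le {P : ℝ} (hP : 0 < P) {ε : ℝ} (hε : 0 < ε) (hε1 : ε ≤ 1) {y : ℝ} (hy : ε ≤ y) :
    hfun P y ≤ ε ^ (-(1/P)) := by
  unfold hfun
  split
  · rename_i h
    have h2 : (1:ℝ) ≤ 1 - Real.log y := by
      have := Real.log_nonpos h.1.le h.2; linarith
    calc y ^ (-(1/P)) * (1 - Real.log y) ^ (-(2/P))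
        ≤ y ^ (-(1/P)) * 1 := by
          apply mul_le_mul_of_nonneg_left
            (Real.rpow_le_one_of_one_le_of_nonpos h2 (neg_nonpos.mpr (by positivity)))
            (Real.rpow_nonneg h.1.le _)
      _ = y ^ (-(1/P)) := mul_one _
      _ ≤ ε ^ (-(1/P)) := Real.rpow_le_rpow_of_nonpos hε hy (neg_nonpos.mpr (by positivity))
  · positivity

lemma hfun_rpow {P Q y : ℝ} (hy : y ∈ Set.Ioc (0:ℝ) 1) (hQ : 0 ≤ Q) :
    hfun P y ^ Q = y ^ (-(Q/P)) * (1 - Real.log y) ^ (-(2*Q/P)) := by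
  have h1 : 0 < y := hy.1
  have h2 : 0 < 1 - Real.log y := one_sub_log_pos hy.1 hy.2
  rw [hfun, if_pos hy,
    Real.mul_rpow (Real.rpow_nonneg h1.le _) (Real.rpow_nonneg h2.le _),
    ← Real.rpow_mul h1.le, ← Real.rpow_mul h2.le]
  ring_nf

noncomputable def Fa : ℝ → ℝ := fun y => if y ≤ 0 then 0 else (1 - Real.log y)⁻¹

lemma integrableOn_phi :
    IntegrableOn (fun y : ℝ => y ^ (-1:ℝ) * (1 - Real.log y) ^ (-2:ℝ)) (Set.Ioc (0:ℝ) 1) := by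
  have hderiv : ∀ x ∈ Set.Ioo (0:ℝ) 1,
      HasDerivAt Fa (x ^ (-1:ℝ) * (1 - Real.log x) ^ (-2:ℝ)) x := by
    intro x hx
    have hx0 : 0 < x := hx.1
    have h2 : 0 < 1 - Real.log x := by
      have := Real.log_nonpos hx0.le hx.2.le; linarith
    have hinner : HasDerivAt (fun y : ℝ => 1 - Real.log y) (-x⁻¹) x :=
      (Real.hasDerivAt_log hx0.ne').const_sub 1
    have hd : HasDerivAt (fun y : ℝ => (1 - Real.log y)⁻¹)
        (-(-x⁻¹) / (1 - Real.log x) ^ 2) x := hinner.inv h2.ne'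
    have heq : Fa =ᶠ[𝓝 x] fun y : ℝ => (1 - Real.log y)⁻¹ := by
      filter_upwards [Ioi_mem_nhds hx0] with y hy
      simp [Fa, not_le.mpr (Set.mem_Ioi.mp hy)]
    have hd' : HasDerivAt (fun y : ℝ => (1 - Real.log y)⁻¹)
        (x ^ (-1:ℝ) * (1 - Real.log x) ^ (-2:ℝ)) x := by
      convert hd using 1
      rw [Real.rpow_neg_one, Real.rpow_neg h2.le, show ((2:ℝ)) = ((2:ℕ):ℝ) by norm_num,
        Real.rpow_natCast]
      field_simp
    exact hd'.congr_of_eventuallyEq heq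
  have hcont : ContinuousOn Fa (Set.Icc (0:ℝ) 1) := by
    intro x hx
    rcases eq_or_lt_of_le hx.1 with rfl | hx0
    · -- continuity at 0 within
      rw [← Set.Ioc_insert_left (zero_le_one (α := ℝ))]
      apply ContinuousWithinAt.insert
      have key : Tendsto Fa (𝓝[>] (0:ℝ)) (𝓝 0) := by
        have h1 : Tendsto (fun y : ℝ => (1 - Real.log y)⁻¹) (𝓝[>] (0:ℝ)) (𝓝 0) := by
          apply Filter.Tendsto.inv_tendsto_atTop
          have h0 : Tendsto (fun y : ℝ => 1 + -Real.log y) (𝓝[>] (0:ℝ)) atTop :=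
            tendsto_atTop_add_const_left _ 1
              (tendsto_neg_atBot_atTop.comp Real.tendsto_log_nhdsGT_zero)
          simpa [sub_eq_add_neg] using h0
        refine h1.congr' ?_
        filter_upwards [self_mem_nhdsWithin] with y (hy : y ∈ Set.Ioi (0:ℝ))
        simp [Fa, not_le.mpr (Set.mem_Ioi.mp hy)]
      have : Fa 0 = 0 := by simp [Fa]
      rw [ContinuousWithinAt, this]
      exact key.mono_left (nhdsWithin_mono _ (fun y hy => hy.1))
    · have hcc : ContinuousAt Fa x := by
        have h2 : 0 < 1 - Real.log x := by
          have := Real.log_nonpos hx0.le hx.2; linarith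
        have hca : ContinuousAt (fun y : ℝ => (1 - Real.log y)⁻¹) x :=
          (continuousAt_const.sub (Real.continuousAt_log hx0.ne')).inv₀ h2.ne'
        apply hca.congr
        filter_upwards [Ioi_mem_nhds hx0] with y hy
        simp [Fa, not_le.mpr (Set.mem_Ioi.mp hy)]
      exact hcc.continuousWithinAt
  have hpos : ∀ x ∈ Set.Ioo (0:ℝ) 1, 0 ≤ x ^ (-1:ℝ) * (1 - Real.log x) ^ (-2:ℝ) := by
    intro x hx
    have h2 : 0 < 1 - Real.log x := by
      have := Real.log_nonpos hx.1.le hx.2.le; linarith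
    have h1 := hx.1
    positivity
  exact intervalIntegral.integrableOn_deriv_of_nonneg hcont hderiv hpos

lemma lintegral_hfun_lt_top (hP : 0 < P) :
    ∫⁻ y in Set.Ioc (0:ℝ) 1, ENNReal.ofReal (hfun P y ^ P) < ⊤ := by
  have heq : ∀ y ∈ Set.Ioc (0:ℝ) 1, ENNReal.ofReal (hfun P y ^ P)
      = ENNReal.ofReal (y ^ (-1:ℝ) * (1 - Real.log y) ^ (-2:ℝ)) := by
    intro y hy
    rw [hfun_rpow hy hP.le,
      show -(P/P) = (-1:ℝ) by rw [div_self hP.ne'],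
      show -(2*P/P) = (-2:ℝ) by rw [mul_div_assoc, div_self hP.ne', mul_one]]
  rw [setLIntegral_congr_fun measurableSet_Ioc (fun y hy => heq y hy)]
  calc ∫⁻ y in Set.Ioc (0:ℝ) 1, ENNReal.ofReal (y ^ (-1:ℝ) * (1 - Real.log y) ^ (-2:ℝ))
      ≤ ∫⁻ y in Set.Ioc (0:ℝ) 1, (‖y ^ (-1:ℝ) * (1 - Real.log y) ^ (-2:ℝ)‖₊ : ℝ≥0∞) :=
        lintegral_mono fun y => Real.ofReal_le_enorm _
    _ < ⊤ := integrableOn_phi.2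

lemma not_integrableOn_hfun (hP : 0 < P) (hPQ : P < Q) {ε : ℝ} (hε : 0 < ε) :
    ¬ IntegrableOn (fun y => hfun P y ^ Q) (Set.Ioc (0:ℝ) ε) := by
  have hQ0 : 0 < Q := hP.trans hPQ
  set s : ℝ := Q / P with hsdef
  have hs1 : 1 < s := (one_lt_div hP).2 hPQ
  set d : ℝ := s - 1 with hddef
  set c : ℝ := 2 * s with hcdef
  have hd : 0 < d := by simp [hddef]; linarith
  have hc : 0 < c := by simp [hcdef]; linarith
  have ha : 0 < d / c := by positivity
  -- tendsto
  have tends : Tendsto (fun y : ℝ => y ^ d * (1 - Real.log y) ^ c) (𝓝[>] (0:ℝ)) (𝓝 0) := by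
    have l1 : Tendsto (fun y : ℝ => y ^ (d/c)) (𝓝[>] (0:ℝ)) (𝓝 0) := by
      have h := (Real.continuousAt_rpow_const 0 (d/c) (Or.inr ha.le)).tendsto
      rw [Real.zero_rpow ha.ne'] at h
      exact h.mono_left nhdsWithin_le_nhds
    have l2 : Tendsto (fun y : ℝ => Real.log y * y ^ (d/c)) (𝓝[>] (0:ℝ)) (𝓝 0) :=
      tendsto_log_mul_rpow_nhdsGT_zero ha
    have t1 : Tendsto (fun y : ℝ => y ^ (d/c) * (1 - Real.log y)) (𝓝[>] (0:ℝ)) (𝓝 0) := by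
      have := l1.sub l2
      rw [sub_zero] at this
      refine this.congr (fun y => ?_)
      ring
    have t2 : Tendsto (fun z : ℝ => z ^ c) (𝓝 (0:ℝ)) (𝓝 0) := by
      have h := (Real.continuousAt_rpow_const 0 c (Or.inr hc.le)).tendsto
      rwa [Real.zero_rpow hc.ne'] at h
    have t3 := t2.comp t1
    refine t3.congr' ?_
    filter_upwards [Ioo_mem_nhdsGT (zero_lt_one (α := ℝ))] with y hy
    have hy0 : 0 < y := hy.1
    have hlog : 0 < 1 - Real.log y := by
      have := Real.log_nonpos hy0.le hy.2.le; linarith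
    simp only [Function.comp]
    rw [Real.mul_rpow (Real.rpow_nonneg hy0.le _) hlog.le, ← Real.rpow_mul hy0.le,
      div_mul_cancel₀ _ hc.ne']
  have hev : ∀ᶠ y in 𝓝[>] (0:ℝ), y ^ d * (1 - Real.log y) ^ c ≤ 1 :=
    tends.eventually (eventually_le_nhds zero_lt_one)
  have hev2 : ∀ᶠ y in 𝓝[>] (0:ℝ), y < min ε 1 :=
    (eventually_lt_nhds (by positivity)).filter_mono nhdsWithin_le_nhds
  obtain ⟨y₀, hy₀, hsub⟩ := mem_nhdsGT_iff_exists_Ioc_subset.1 (hev.and hev2)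
  have hy₀0 : 0 < y₀ := hy₀
  intro hint
  set y₁ : ℝ := min y₀ ε with hy₁def
  have hy₁0 : 0 < y₁ := lt_min hy₀0 hε
  have kle : ∀ y ∈ Set.Ioc (0:ℝ) y₁, ‖y⁻¹‖ ≤ ‖hfun P y ^ Q‖ := by
    intro y hy
    have hyy : y ∈ Set.Ioc (0:ℝ) y₀ := ⟨hy.1, hy.2.trans (min_le_left _ _)⟩
    obtain ⟨hle1, hlt⟩ := hsub hyy
    have hy0 : 0 < y := hy.1
    have hy1 : y ≤ 1 := le_of_lt (lt_of_lt_of_le hlt (min_le_right _ _))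
    have hlog : 0 < 1 - Real.log y := by
      have := Real.log_nonpos hy0.le hy1; linarith
    have hA : 0 < y ^ d * (1 - Real.log y) ^ c := by positivity
    have key : y⁻¹ ≤ hfun P y ^ Q := by
      rw [hfun_rpow ⟨hy0, hy1⟩ hQ0.le]
      have e1 : -(Q/P) = -1 + -d := by rw [hddef, hsdef]; ring
      have e2 : (-(2*Q/P)) = -c := by rw [hcdef, hsdef]; ring
      rw [e1, e2, Real.rpow_add hy0, Real.rpow_neg_one, Real.rpow_neg hy0.le,
        Real.rpow_neg hlog.le]
      calc y⁻¹ = y⁻¹ * 1 := (mul_one _).symm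
        _ ≤ y⁻¹ * (y ^ d * (1 - Real.log y) ^ c)⁻¹ := by
            apply mul_le_mul_of_nonneg_left _ (inv_nonneg.2 hy0.le)
            exact (one_le_inv₀ hA).2 hle1
        _ = y⁻¹ * (y ^ d)⁻¹ * ((1 - Real.log y) ^ c)⁻¹ := by
            rw [mul_inv]; ring
    rw [Real.norm_eq_abs, Real.norm_eq_abs, abs_of_nonneg (inv_nonneg.2 hy0.le),
      abs_of_nonneg (Real.rpow_nonneg (hfun_nonneg P y) _)]
    exact key
  have h1 : IntegrableOn (fun y => hfun P y ^ Q) (Set.Ioc 0 y₁) :=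
    hint.mono_set (Set.Ioc_subset_Ioc_right (min_le_right _ _))
  have h2 : IntegrableOn (fun y : ℝ => y⁻¹) (Set.Ioc 0 y₁) := by
    refine h1.integrable.mono (by fun_prop) ?_
    exact (ae_restrict_iff' measurableSet_Ioc).2 (ae_of_all _ kle)
  have h3 : IntervalIntegrable (fun y : ℝ => y⁻¹) volume 0 y₁ := by
    rw [intervalIntegrable_iff, Set.uIoc_of_le hy₁0.le]; exact h2
  rw [intervalIntegrable_inv_iff] at h3
  rcases h3 with h | h
  · exact hy₁0.ne h
  · exact h (Set.left_mem_uIcc)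

lemma nnorm_hfun_rpow_eq (P : ℝ) (hP : 0 < P) (z : ℝ) :
    (‖hfun P z‖₊ : ℝ≥0∞) ^ P = ENNReal.ofReal (hfun P z ^ P) := by
  rw [← enorm_eq_nnnorm, Real.enorm_eq_ofReal (hfun_nonneg P z),
    ← ENNReal.ofReal_rpow_of_nonneg (hfun_nonneg P z) hP.le]

lemma memLp_hfun_translate (p : ℝ≥0∞) (hp : 0 < p) (hp' : p ≠ ⊤) (t : ℝ) :
    MemLp (fun x => hfun p.toReal (x - t)) p (volume.restrict (Set.Icc (0:ℝ) 1)) := by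
  set P := p.toReal with hPdef
  have hP : 0 < P := ENNReal.toReal_pos hp.ne' hp'
  have hmeas : Measurable fun x : ℝ => hfun P (x - t) :=
    (measurable_hfun P).comp (measurable_id.sub measurable_const)
  refine ⟨hmeas.aestronglyMeasurable, ?_⟩
  refine lt_of_le_of_lt (eLpNorm_mono_measure _ Measure.restrict_le_self) ?_
  rw [eLpNorm_eq_lintegral_rpow_enorm_toReal hp.ne' hp']
  have key : (∫⁻ x, (‖hfun P (x - t)‖₊ : ℝ≥0∞) ^ P ∂volume) < ⊤ := by
    have heq : ∀ x : ℝ, ((‖hfun P (x - t)‖₊ : ℝ≥0∞)) ^ P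
        = (Set.Ioc (0:ℝ) 1).indicator (fun y => ENNReal.ofReal (hfun P y ^ P)) (x - t) := by
      intro x
      rw [nnorm_hfun_rpow_eq P hP]
      by_cases hx : x - t ∈ Set.Ioc (0:ℝ) 1
      · rw [Set.indicator_of_mem hx]
      · rw [Set.indicator_of_notMem hx, hfun_eq_zero hx, Real.zero_rpow hP.ne',
          ENNReal.ofReal_zero]
    calc (∫⁻ x, (‖hfun P (x - t)‖₊ : ℝ≥0∞) ^ P ∂volume)
        = ∫⁻ x, (Set.Ioc (0:ℝ) 1).indicator (fun y => ENNReal.ofReal (hfun P y ^ P)) (x - t)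
            ∂volume := lintegral_congr heq
      _ = ∫⁻ y, (Set.Ioc (0:ℝ) 1).indicator (fun y => ENNReal.ofReal (hfun P y ^ P)) y
            ∂volume := by
          simpa [sub_eq_add_neg] using
            lintegral_add_right_eq_self
              ((Set.Ioc (0:ℝ) 1).indicator (fun y => ENNReal.ofReal (hfun P y ^ P))) (-t)
      _ = ∫⁻ y in Set.Ioc (0:ℝ) 1, ENNReal.ofReal (hfun P y ^ P) ∂volume :=
          lintegral_indicator measurableSet_Ioc _
      _ < ⊤ := lintegral_hfun_lt_top hP
  exact ENNReal.rpow_lt_top_of_nonneg (by positivity) key.ne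

lemma tendsto_eLpNorm_hfun (p : ℝ≥0∞) (hp : 0 < p) (hp' : p ≠ ⊤) :
    Tendsto (fun n : ℕ => eLpNorm (fun x => hfun p.toReal (x - (1 - 1/((n:ℝ)+2)))) p
      (volume.restrict (Set.Icc (0:ℝ) 1))) atTop (𝓝 0) := by
  set P := p.toReal with hPdef
  have hP : 0 < P := ENNReal.toReal_pos hp.ne' hp'
  set Hw : ℝ → ℝ≥0∞ := fun y => ENNReal.ofReal (hfun P y ^ P) with hHwdef
  set m : ℕ → ℝ≥0∞ := fun n => ∫⁻ y in Set.Ioc (0:ℝ) (1/((n:ℝ)+2)), Hw y with hmdef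
  have hHw_meas : Measurable Hw :=
    ((measurable_rpow_const P).comp (measurable_hfun P)).ennreal_ofReal
  set ν : Measure ℝ := volume.withDensity Hw with hνdef
  have hν : ∀ s : Set ℝ, MeasurableSet s → ν s = ∫⁻ y in s, Hw y ∂volume :=
    fun s hs => withDensity_apply _ hs
  have hmν : ∀ n : ℕ, m n = ν (Set.Ioc (0:ℝ) (1/((n:ℝ)+2))) :=
    fun n => (hν _ measurableSet_Ioc).symm
  have hfin : ν (Set.Ioc (0:ℝ) 1) ≠ ⊤ := by
    rw [hν _ measurableSet_Ioc]; exact (lintegral_hfun_lt_top hP).ne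
  have htend : Tendsto m atTop (𝓝 0) := by
    have hmono : Antitone (fun n : ℕ => Set.Ioc (0:ℝ) (1/((n:ℝ)+2))) := by
      intro a b hab
      apply Set.Ioc_subset_Ioc_right
      apply one_div_le_one_div_of_le (by positivity)
      have : (a:ℝ) ≤ b := Nat.cast_le.2 hab
      linarith
    have hInter : (⋂ n : ℕ, Set.Ioc (0:ℝ) (1/((n:ℝ)+2))) = ∅ := by
      ext y
      simp only [Set.mem_iInter, Set.mem_empty_iff_false, iff_false, not_forall]
      by_cases hy : 0 < y
      · obtain ⟨n, hn⟩ := exists_nat_gt (1/y)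
        refine ⟨n, fun hmem => ?_⟩
        have h1 : 1/y < (n:ℝ) + 2 := by linarith
        have : 1/((n:ℝ)+2) < y := by
          rw [div_lt_iff₀ (by positivity)]
          rw [div_lt_iff₀ hy] at h1
          nlinarith
        exact absurd hmem.2 (not_le.2 this)
      · exact ⟨0, fun hmem => hy hmem.1⟩
    have h0 := tendsto_measure_iInter_atTop (μ := ν)
      (fun n => measurableSet_Ioc.nullMeasurableSet) hmono
      ⟨0, by
        refine ne_of_lt (lt_of_le_of_lt (measure_mono ?_) hfin.lt_top)
        apply Set.Ioc_subset_Ioc_right; norm_num⟩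
    rw [hInter, measure_empty] at h0
    have : (fun n : ℕ => m n) = ν ∘ (fun n : ℕ => Set.Ioc (0:ℝ) (1/((n:ℝ)+2))) := by
      funext n; exact hmν n
    rw [hmdef]
    rw [this]
    exact h0
  have hbound : ∀ n : ℕ, eLpNorm (fun x => hfun P (x - (1 - 1/((n:ℝ)+2)))) p
      (volume.restrict (Set.Icc (0:ℝ) 1)) ≤ (m n) ^ (1/P) := by
    intro n
    set tn : ℝ := 1 - 1/((n:ℝ)+2) with htndef
    set en : ℝ := 1/((n:ℝ)+2) with hendef
    rw [eLpNorm_eq_lintegral_rpow_enorm_toReal hp.ne' hp']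
    apply ENNReal.rpow_le_rpow _ (by positivity)
    calc (∫⁻ x in Set.Icc (0:ℝ) 1, (‖hfun P (x - tn)‖₊ : ℝ≥0∞) ^ P)
        = ∫⁻ x in Set.Icc (0:ℝ) 1, Hw (x - tn) := by
          apply lintegral_congr
          intro x
          exact nnorm_hfun_rpow_eq P hP _
      _ ≤ ∫⁻ x in Set.Icc (0:ℝ) 1, (Set.Ioc (0:ℝ) en).indicator Hw (x - tn) := by
          apply setLIntegral_mono' measurableSet_Icc
          intro x hx
          by_cases hmem : x - tn ∈ Set.Ioc (0:ℝ) en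
          · rw [Set.indicator_of_mem hmem]
          · rw [Set.indicator_of_notMem hmem]
            have : hfun P (x - tn) = 0 := by
              apply hfun_eq_zero
              intro hc
              apply hmem
              refine ⟨hc.1, ?_⟩
              have : x ≤ 1 := hx.2
              rw [htndef] at *
              rw [hendef]
              linarith
            rw [hHwdef]
            simp only [this, Real.zero_rpow hP.ne', ENNReal.ofReal_zero, le_refl]
      _ ≤ ∫⁻ x, (Set.Ioc (0:ℝ) en).indicator Hw (x - tn) ∂volume :=
          setLIntegral_le_lintegral _ _
      _ = ∫⁻ y, (Set.Ioc (0:ℝ) en).indicator Hw y ∂volume := by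
          simpa [sub_eq_add_neg] using
            lintegral_add_right_eq_self ((Set.Ioc (0:ℝ) en).indicator Hw) (-tn)
      _ = m n := lintegral_indicator measurableSet_Ioc _
  have hcont : Tendsto (fun n => (m n) ^ (1/P)) atTop (𝓝 0) := by
    have h2 : Tendsto (fun z : ℝ≥0∞ => z ^ (1/P)) (𝓝 0) (𝓝 (0 ^ (1/P))) :=
      (ENNReal.continuous_rpow_const).tendsto 0
    rw [ENNReal.zero_rpow_of_pos (by positivity)] at h2
    exact h2.comp htend
  refine tendsto_of_tendsto_of_tendsto_of_le_of_le tendsto_const_nhds hcont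
    (fun n => zero_le) hbound

lemma key_not_memLp (p : ℝ≥0∞) (hp : 0 < p) (hp' : p ≠ ⊤) (s : Finset ℝ)
    (hs : ∀ t ∈ s, t ∈ Set.Ioo (0:ℝ) 1) (c : ℝ → ℝ) (a : ℝ)
    (hne : ∃ t ∈ s, c t ≠ 0) (q : ℝ≥0∞) (hq : p < q) (hq' : q ≠ ⊤) :
    ¬ MemLp (fun x => a + ∑ t ∈ s, c t * hfun p.toReal (x - t)) q
      (volume.restrict (Set.Icc (0:ℝ) 1)) := by
  classical
  intro hmem
  set P := p.toReal with hPdef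
  set Q := q.toReal with hQdef
  have hP : 0 < P := ENNReal.toReal_pos hp.ne' hp'
  have hq0 : q ≠ 0 := (hp.trans hq).ne'
  have hQ : P < Q := (ENNReal.toReal_lt_toReal hp' hq').2 hq
  set s' : Finset ℝ := s.filter (fun t => c t ≠ 0) with hs'def
  have hs'ne : s'.Nonempty := by
    obtain ⟨t, ht, hct⟩ := hne
    exact ⟨t, Finset.mem_filter.2 ⟨ht, hct⟩⟩
  set t₀ : ℝ := s'.min' hs'ne with ht₀def
  have ht₀s' : t₀ ∈ s' := Finset.min'_mem _ _
  have ht₀s : t₀ ∈ s := Finset.mem_of_mem_filter _ ht₀s'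
  have hct₀ : c t₀ ≠ 0 := (Finset.mem_filter.1 ht₀s').2
  have ht₀ : t₀ ∈ Set.Ioo (0:ℝ) 1 := hs _ ht₀s
  have ht₀min : ∀ t ∈ s', t₀ ≤ t := fun t ht => Finset.min'_le _ _ ht
  set U : Finset ℝ := insert (1:ℝ) ((s'.erase t₀).filter (fun t => t₀ < t)) with hUdef
  have hUne : U.Nonempty := ⟨1, Finset.mem_insert_self _ _⟩
  set u : ℝ := U.min' hUne with hudef
  have hu1 : u ≤ 1 := Finset.min'_le _ _ (Finset.mem_insert_self _ _)
  have ht₀u : t₀ < u := by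
    rw [hudef]
    apply (Finset.lt_min'_iff _ _).2
    intro y hy
    rcases Finset.mem_insert.1 hy with rfl | hy
    · exact ht₀.2
    · exact (Finset.mem_filter.1 hy).2
  have hu_le : ∀ t ∈ s', t₀ < t → u ≤ t := by
    intro t ht h
    apply Finset.min'_le
    exact Finset.mem_insert_of_mem
      (Finset.mem_filter.2 ⟨Finset.mem_erase.2 ⟨(ne_of_gt h), ht⟩, h⟩)
  set I : Set ℝ := Set.Ioc t₀ u with hIdef
  have hIsub : I ⊆ Set.Icc (0:ℝ) 1 :=
    fun x hx => ⟨(ht₀.1.trans hx.1).le, hx.2.trans hu1⟩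
  haveI : IsFiniteMeasure (volume.restrict I) := by
    constructor
    rw [Measure.restrict_apply_univ]
    exact measure_Ioc_lt_top
  set f : ℝ → ℝ := fun x => a + ∑ t ∈ s, c t * hfun P (x - t) with hfdef
  have hmemI : MemLp f q (volume.restrict I) :=
    hmem.mono_measure (Measure.restrict_mono hIsub le_rfl)
  have hsum : ∀ x, (∑ t ∈ s, c t * hfun P (x - t)) = ∑ t ∈ s', c t * hfun P (x - t) := by
    intro x
    rw [hs'def]
    exact (Finset.sum_filter_of_ne (fun t ht h => by
      intro hc0
      exact h (by rw [hc0, zero_mul]))).symm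
  -- the bounded part
  set B : ℝ → ℝ := fun x => a + ∑ t ∈ s'.erase t₀, c t * hfun P (x - t) with hBdef
  have hBmeas : Measurable B := by
    apply measurable_const.add
    apply Finset.measurable_sum
    intro t ht
    exact (measurable_const.mul ((measurable_hfun P).comp
      (measurable_id.sub measurable_const)))
  set K : ℝ → ℝ := fun t => if t < t₀ then (t₀ - t) ^ (-(1/P)) else 0 with hKdef
  have hterm : ∀ t ∈ s'.erase t₀, ∀ x ∈ I, |c t * hfun P (x - t)| ≤ |c t| * K t := by
    intro t ht x hx
    have hts' : t ∈ s' := Finset.mem_of_mem_erase ht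
    have htne : t ≠ t₀ := Finset.ne_of_mem_erase ht
    have htIoo : t ∈ Set.Ioo (0:ℝ) 1 := hs _ (Finset.mem_of_mem_filter _ hts')
    rcases lt_or_gt_of_ne htne with hlt | hgt
    · -- t < t₀ : bounded
      have hband : hfun P (x - t) ≤ (t₀ - t) ^ (-(1/P)) := by
        apply hfun_le hP (by linarith) (by linarith [ht₀.2, htIoo.1]) (by linarith [hx.1])
      rw [abs_mul, hKdef]
      simp only [if_pos hlt]
      apply mul_le_mul_of_nonneg_left _ (abs_nonneg _)
      rw [abs_of_nonneg (hfun_nonneg _ _)]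
      exact hband
    · -- t > t₀ : zero on I
      have hxt : x - t ≤ 0 := by
        have := hu_le t hts' hgt
        have := hx.2
        linarith
      rw [hfun_eq_zero (fun hc => absurd hc.1 (not_lt.2 hxt))]
      rw [hKdef]
      simp [if_neg (not_lt.2 hgt.le)]
  set C : ℝ := |a| + ∑ t ∈ s'.erase t₀, |c t| * K t with hCdef
  have hB : MemLp B q (volume.restrict I) := by
    apply MemLp.of_bound hBmeas.aestronglyMeasurable C
    refine (ae_restrict_iff' measurableSet_Ioc).2 (ae_of_all _ fun x hx => ?_)
    rw [hBdef, Real.norm_eq_abs]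
    calc |a + ∑ t ∈ s'.erase t₀, c t * hfun P (x - t)|
        ≤ |a| + |∑ t ∈ s'.erase t₀, c t * hfun P (x - t)| := abs_add_le _ _
      _ ≤ |a| + ∑ t ∈ s'.erase t₀, |c t * hfun P (x - t)| := by
          apply add_le_add le_rfl (Finset.abs_sum_le_sum_abs _ _)
      _ ≤ |a| + ∑ t ∈ s'.erase t₀, |c t| * K t := by
          apply add_le_add le_rfl
          exact Finset.sum_le_sum (fun t ht => hterm t ht x hx)
  have hsub : MemLp (fun x => f x - B x) q (volume.restrict I) := hmemI.sub hB
  have hae : (fun x => f x - B x) =ᵐ[volume.restrict I]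
      (fun x => c t₀ * hfun P (x - t₀)) := by
    refine Filter.eventually_of_mem (self_mem_ae_restrict measurableSet_Ioc) ?_
    intro x hx
    have hsplit : ∑ t ∈ s', c t * hfun P (x - t)
        = c t₀ * hfun P (x - t₀) + ∑ t ∈ s'.erase t₀, c t * hfun P (x - t) :=
      (Finset.add_sum_erase _ _ ht₀s').symm
    simp only [hfdef, hBdef, hsum x, hsplit]
    ring
  have h1 : MemLp (fun x => c t₀ * hfun P (x - t₀)) q (volume.restrict I) :=
    (memLp_congr_ae hae).1 hsub
  have h2 : MemLp (fun x => hfun P (x - t₀)) q (volume.restrict I) := by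
    have h3 := h1.const_mul (c t₀)⁻¹
    refine (memLp_congr_ae (ae_of_all _ fun x => ?_)).1 h3
    field_simp
  have h3 : Integrable (fun x => ‖hfun P (x - t₀)‖ ^ Q) (volume.restrict I) :=
    h2.integrable_norm_rpow hq0 hq'
  have h4 : IntegrableOn (fun x => hfun P (x - t₀) ^ Q) I := by
    refine h3.congr (ae_of_all _ fun x => ?_)
    show ‖hfun P (x - t₀)‖ ^ Q = hfun P (x - t₀) ^ Q
    rw [Real.norm_eq_abs, abs_of_nonneg (hfun_nonneg _ _)]
  -- translate
  have h5 : IntegrableOn (fun y => hfun P y ^ Q) (Set.Ioc 0 (u - t₀)) := by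
    have hind : Integrable ((Set.Ioc t₀ u).indicator (fun x => hfun P (x - t₀) ^ Q)) volume :=
      (integrable_indicator_iff measurableSet_Ioc).2 h4
    have hcomp := hind.comp_add_right t₀
    have heq : (fun y => ((Set.Ioc t₀ u).indicator (fun x => hfun P (x - t₀) ^ Q)) (y + t₀))
        = (Set.Ioc (0:ℝ) (u - t₀)).indicator (fun y => hfun P y ^ Q) := by
      funext y
      by_cases hy : y ∈ Set.Ioc (0:ℝ) (u - t₀)
      · rw [Set.indicator_of_mem hy,
          Set.indicator_of_mem (by constructor <;> [linarith [hy.1]; linarith [hy.2]])]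
        simp
      · rw [Set.indicator_of_notMem hy, Set.indicator_of_notMem (fun hc => hy ⟨by linarith [hc.1], by linarith [hc.2]⟩)]
    rw [heq] at hcomp
    exact (integrable_indicator_iff measurableSet_Ioc).1 hcomp
  exact not_integrableOn_hfun hP hQ (by linarith) h5

end auxiliary

/-- for every `p > 0`, the set `L_p[0,1] \ ⋃_{q > p} L_q[0,1]` is not
`(α, β)`-spaceable in `L_p[0,1]` for any infinite `α ≤ 𝔠`: there is an `α`-dimensional
subspace `M` of `L_p[0,1]` whose nonzero elements lie in no `L_q[0,1]` with `q > p`, and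
whose closure (in the `L_p`-topology, expressed via `eLpNorm`-convergence of sequences)
contains a nonzero function belonging to some `L_q[0,1]`, `q > p`. -/
theorem stmt15 (p : ℝ≥0∞) (hp : 0 < p) (hp' : p ≠ ⊤)
    (α : Cardinal) (hα : Cardinal.aleph0 ≤ α) (hα' : α ≤ Cardinal.continuum) :
    ∃ M : Submodule ℝ (ℝ → ℝ), Module.rank ℝ M = α ∧
      (∀ f ∈ M, MemLp f p (volume.restrict (Set.Icc (0:ℝ) 1))) ∧
      (∀ f ∈ M, f ≠ 0 → ∀ q : ℝ≥0∞, p < q → q ≠ ⊤ →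
        ¬ MemLp f q (volume.restrict (Set.Icc (0:ℝ) 1))) ∧
      ∃ g : ℝ → ℝ, MemLp g p (volume.restrict (Set.Icc (0:ℝ) 1)) ∧
        ¬ (g =ᵐ[volume.restrict (Set.Icc (0:ℝ) 1)] 0) ∧
        (∃ q : ℝ≥0∞, p < q ∧ q ≠ ⊤ ∧ MemLp g q (volume.restrict (Set.Icc (0:ℝ) 1))) ∧
        ∃ F : ℕ → (ℝ → ℝ), (∀ n, F n ∈ M) ∧
          Tendsto (fun n => eLpNorm (F n - g) p (volume.restrict (Set.Icc (0:ℝ) 1)))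
            atTop (𝓝 0) := by
  classical
  set μ : Measure ℝ := volume.restrict (Set.Icc (0:ℝ) 1) with hμdef
  haveI : IsFiniteMeasure μ := by
    constructor
    rw [hμdef, Measure.restrict_apply_univ]
    exact measure_Icc_lt_top
  set P : ℝ := p.toReal with hPdef
  -- the index set
  obtain ⟨S, hS_sub, hS_card⟩ : ∃ S ⊆ Set.Ioo (0:ℝ) 1, Cardinal.mk S = α := by
    apply Cardinal.le_mk_iff_exists_subset.1
    rw [Cardinal.mk_Ioo_real zero_lt_one]
    exact hα'
  set tseq : ℕ → ℝ := fun n => 1 - 1/((n:ℝ)+2) with htseqdef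
  have htseq_mem : ∀ n, tseq n ∈ Set.Ioo (0:ℝ) 1 := by
    intro n
    have h2 : (0:ℝ) < (n:ℝ) + 2 := by positivity
    have h3 : 1/((n:ℝ)+2) ≤ 1/2 := by
      apply one_div_le_one_div_of_le (by norm_num)
      have : (0:ℝ) ≤ (n:ℝ) := Nat.cast_nonneg n
      linarith
    have h4 : 0 < 1/((n:ℝ)+2) := by positivity
    constructor
    · simp only [htseqdef]; linarith
    · simp only [htseqdef]; linarith
  set T : Set ℝ := Set.range tseq with hTdef
  set S' : Set ℝ := S ∪ T with hS'def
  have hS'_sub : S' ⊆ Set.Ioo (0:ℝ) 1 := by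
    rintro t (ht | ht)
    · exact hS_sub ht
    · obtain ⟨n, rfl⟩ := ht
      exact htseq_mem n
  haveI : Countable T := (Set.countable_range tseq).to_subtype
  have hS'_card : Cardinal.mk S' = α := by
    apply le_antisymm
    · calc Cardinal.mk S' ≤ Cardinal.mk S + Cardinal.mk T := Cardinal.mk_union_le _ _
        _ ≤ α + Cardinal.aleph0 := add_le_add hS_card.le Cardinal.mk_le_aleph0
        _ = α := Cardinal.add_eq_left hα hα
    · rw [← hS_card]
      exact Cardinal.mk_le_mk_of_subset Set.subset_union_left
  -- the family
  set w : S' → (ℝ → ℝ) := fun t => fun x => 1 + hfun P (x - (t:ℝ)) with hwdef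
  set M : Submodule ℝ (ℝ → ℝ) := Submodule.span ℝ (Set.range w) with hMdef
  -- conversion of finite sums
  have hconv : ∀ (sf : Finset S') (g : S' → ℝ),
      ∃ (sR : Finset ℝ) (C : ℝ → ℝ),
        (∀ t ∈ sR, t ∈ Set.Ioo (0:ℝ) 1) ∧
        (∀ x, (∑ i ∈ sf, g i • w i) x
          = (∑ i ∈ sf, g i) + ∑ t ∈ sR, C t * hfun P (x - t)) ∧
        (∀ i ∈ sf, (i : ℝ) ∈ sR ∧ C (i : ℝ) = g i) := by
    intro sf g
    refine ⟨sf.map (Function.Embedding.subtype _),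
      fun t => if ht : t ∈ S' then g ⟨t, ht⟩ else 0, ?_, ?_, ?_⟩
    · intro t ht
      obtain ⟨i, hi, rfl⟩ := Finset.mem_map.1 ht
      exact hS'_sub i.2
    · intro x
      rw [Finset.sum_apply]
      rw [Finset.sum_map]
      have : ∀ i ∈ sf, (if ht : ((Function.Embedding.subtype _) i : ℝ) ∈ S'
            then g ⟨_, ht⟩ else 0) * hfun P (x - ((Function.Embedding.subtype _) i : ℝ))
          = g i * hfun P (x - (i:ℝ)) := by
        intro i hi
        simp only [Function.Embedding.coe_subtype, dif_pos i.2, Subtype.coe_eta]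
      rw [Finset.sum_congr rfl this, ← Finset.sum_add_distrib]
      apply Finset.sum_congr rfl
      intro i hi
      simp only [Pi.smul_apply, hwdef, smul_eq_mul]
      ring
    · intro i hi
      constructor
      · exact Finset.mem_map.2 ⟨i, hi, rfl⟩
      · simp only [Function.Embedding.coe_subtype, dif_pos i.2, Subtype.coe_eta]
  -- linear independence
  have hli : LinearIndependent ℝ w := by
    rw [linearIndependent_iff']
    intro sf g hzero i hisf
    by_contra hgi
    obtain ⟨sR, C, hsR, hrepr, hmem⟩ := hconv sf g
    have hzero' : (0 : ℝ → ℝ)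
        = fun x => (∑ i ∈ sf, g i) + ∑ t ∈ sR, C t * hfun P (x - t) := by
      funext x
      rw [← hrepr x, hzero]
    have hq1 : p < p + 1 := ENNReal.lt_add_right hp' one_ne_zero
    have hq2 : p + 1 ≠ ⊤ := by
      rw [ENNReal.add_ne_top]
      exact ⟨hp', ENNReal.one_ne_top⟩
    apply key_not_memLp p hp hp' sR hsR C (∑ i ∈ sf, g i)
      ⟨(i:ℝ), (hmem i hisf).1, by rw [(hmem i hisf).2]; exact hgi⟩ (p+1) hq1 hq2
    rw [← hzero']
    exact MemLp.zero
  refine ⟨M, ?_, ?_, ?_, ?_⟩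
  · -- rank
    rw [hMdef, rank_span hli, Cardinal.mk_range_eq w hli.injective, hS'_card]
  · -- membership in L_p
    intro f hf
    rw [hMdef] at hf
    obtain ⟨cf, hcf⟩ := Finsupp.mem_span_range_iff_exists_finsupp.1 hf
    rw [← hcf]
    rw [Finsupp.sum]
    apply memLp_finset_sum'
    intro i hi
    apply MemLp.const_smul
    have : MemLp (fun x : ℝ => 1 + hfun P (x - (i:ℝ))) p μ :=
      (memLp_const (1:ℝ)).add (memLp_hfun_translate p hp hp' (i:ℝ))
    exact this
  · -- not in any L_q
    intro f hf hfne q hq hq'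
    rw [hMdef] at hf
    obtain ⟨cf, hcf⟩ := Finsupp.mem_span_range_iff_exists_finsupp.1 hf
    obtain ⟨sR, C, hsR, hrepr, hmem⟩ := hconv cf.support (fun i => cf i)
    have hfeq : f = fun x => (∑ i ∈ cf.support, cf i) + ∑ t ∈ sR, C t * hfun P (x - t) := by
      funext x
      rw [← hrepr x, ← hcf]
      rfl
    have hcne : ∃ i ∈ cf.support, cf i ≠ 0 := by
      by_contra hc
      push_neg at hc
      apply hfne
      rw [← hcf]
      rw [Finsupp.sum]
      apply Finset.sum_eq_zero
      intro i hi
      rw [hc i hi, zero_smul]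
    obtain ⟨i, hi, hci⟩ := hcne
    rw [hfeq]
    exact key_not_memLp p hp hp' sR hsR C _
      ⟨(i:ℝ), (hmem i hi).1, by rw [(hmem i hi).2]; exact hci⟩ q hq hq'
  · -- the approximation part
    refine ⟨fun _ => (1:ℝ), memLp_const 1, ?_, ?_, ?_⟩
    · intro hcontra
      have h0 : μ Set.univ = 0 := by
        have h1 : ∀ᵐ x ∂μ, (fun _ => (1:ℝ)) x = (0 : ℝ → ℝ) x := hcontra
        simp only [Pi.zero_apply, one_ne_zero] at h1
        simpa [ae_iff] using h1
      rw [hμdef, Measure.restrict_apply_univ] at h0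
      rw [Real.volume_Icc] at h0
      norm_num at h0
    · refine ⟨p + 1, ENNReal.lt_add_right hp' one_ne_zero, ?_, memLp_const 1⟩
      rw [ENNReal.add_ne_top]
      exact ⟨hp', ENNReal.one_ne_top⟩
    · refine ⟨fun n => w ⟨tseq n, Or.inr ⟨n, rfl⟩⟩, ?_, ?_⟩
      · intro n
        exact Submodule.subset_span ⟨_, rfl⟩
      · have hFg : ∀ n : ℕ, w ⟨tseq n, Or.inr ⟨n, rfl⟩⟩ - (fun _ => (1:ℝ))
            = fun x => hfun P (x - tseq n) := by
          intro n
          funext x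
          simp only [hwdef, Pi.sub_apply]
          ring
        simp only [hFg]
        exact tendsto_eLpNorm_hfun p hp hp'
end

section
/- For every n ∈ ℕ, the set ℓ∞ \ c₀ is (n, ℵ₀)-lineable but not (n, ℵ₀)-dense lineable; the failure of dense lineability follows because every dense linear subspace of ℓ∞ has dimension 𝔠. -/
open Filter Topology

open Cardinal Submodule

noncomputable def chi (k : ℕ) : EllInfty :=
  ⟨fun m => if (Nat.unpair m).1 = k then 1 else 0, by
    apply memℓp_infty
    refine ⟨1, ?_⟩
    rintro x ⟨m, rfl⟩
    dsimp
    split <;> simp⟩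

noncomputable def evalLM (m : ℕ) : EllInfty →ₗ[ℝ] ℝ where
  toFun f := f m
  map_add' f g := rfl
  map_smul' c f := rfl

lemma evalLM_apply (m : ℕ) (f : EllInfty) : evalLM m f = f m := rfl

lemma mem_cZero_iff (x : EllInfty) : x ∈ cZero ↔ Tendsto (fun n => x n) atTop (𝓝 0) := Iff.rfl

lemma chi_apply_pair (i k j : ℕ) : chi i (Nat.pair k j) = if k = i then 1 else 0 := by
  show (if (Nat.unpair (Nat.pair k j)).1 = i then (1:ℝ) else 0) = _
  rw [Nat.unpair_pair]


lemma sum_apply_pair (l : ℕ →₀ ℝ) (k j : ℕ) :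
    (l.sum fun i c => c • chi i) (Nat.pair k j) = l k := by
  have h1 : evalLM (Nat.pair k j) (l.sum fun i c => c • chi i)
      = l.sum fun i c => evalLM (Nat.pair k j) (c • chi i) :=
    map_finsuppSum _ _ _
  rw [evalLM_apply] at h1
  rw [h1]
  have h2 : ∀ i c, evalLM (Nat.pair k j) (c • chi i) = if k = i then c else 0 := by
    intro i c
    rw [map_smul, evalLM_apply, chi_apply_pair]
    simp only [smul_eq_mul]
    split <;> simp
  simp only [h2]
  rw [Finsupp.sum_ite_eq]
  split
  · rfl
  · rename_i h
    exact (Finsupp.notMem_support_iff.mp h).symm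

lemma chi_quot_indep : LinearIndependent ℝ (fun k : ℕ => cZero.mkQ (chi k)) := by
  rw [linearIndependent_iff]
  intro l hl
  have hmem : (l.sum fun k c => c • chi k) ∈ cZero := by
    rw [← Submodule.Quotient.mk_eq_zero]
    rw [Finsupp.linearCombination_apply] at hl
    rw [← hl]
    have := map_finsuppSum cZero.mkQ l (fun k c => c • chi k)
    simp only [map_smul, Submodule.mkQ_apply] at this
    rw [this]
    rfl
  ext k
  rw [mem_cZero_iff] at hmem
  have hpair : Tendsto (fun j : ℕ => Nat.pair k j) atTop atTop :=
    tendsto_atTop_mono (fun j => Nat.right_le_pair k j) tendsto_id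
  have h3 : Tendsto (fun j : ℕ => (l.sum fun i c => c • chi i) (Nat.pair k j)) atTop (𝓝 0) :=
    hmem.comp hpair
  simp only [sum_apply_pair] at h3
  exact tendsto_nhds_unique tendsto_const_nhds h3

lemma indep_quot_disjoint {ι : Type} (v : ι → EllInfty)
    (h : LinearIndependent ℝ (fun i => cZero.mkQ (v i))) :
    ∀ x ∈ span ℝ (Set.range v), x ∈ cZero → x = 0 := by
  intro x hx hx0
  obtain ⟨c, rfl⟩ := Finsupp.mem_span_range_iff_exists_finsupp.mp hx
  have h0 : cZero.mkQ (c.sum fun i a => a • v i) = 0 := by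
    rw [Submodule.mkQ_apply, Submodule.Quotient.mk_eq_zero]; exact hx0
  rw [map_finsuppSum] at h0
  simp only [map_smul] at h0
  have hc : c = 0 := by
    apply linearIndependent_iff.mp h
    rw [Finsupp.linearCombination_apply]
    exact h0
  rw [hc, Finsupp.sum_zero_index]

lemma rank_quot_big : Cardinal.aleph0 ≤ Module.rank ℝ (EllInfty ⧸ cZero) := by
  have := chi_quot_indep.cardinal_le_rank
  rwa [Cardinal.mk_nat] at this

lemma extension (W : Submodule ℝ EllInfty) (hWr : Module.rank ℝ W < Cardinal.aleph0)
    (hW : ∀ x ∈ W, x ∈ cZero → x = 0) :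
    ∃ Z : Submodule ℝ EllInfty, Module.rank ℝ Z = Cardinal.aleph0 ∧ W ≤ Z ∧
      ∀ x ∈ Z, x ∈ cZero → x = 0 := by
  classical
  set Wq := W.map cZero.mkQ with hWqdef
  have hWqr : Module.rank ℝ Wq < Cardinal.aleph0 :=
    lt_of_le_of_lt (rank_map_le cZero.mkQ W) hWr
  obtain ⟨C, hC⟩ := Submodule.exists_isCompl Wq
  have hsum := Submodule.rank_sup_add_rank_inf_eq Wq C
  rw [hC.sup_eq_top, hC.inf_eq_bot, rank_top, rank_bot, add_zero] at hsum
  have hCr : Cardinal.aleph0 ≤ Module.rank ℝ C := by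
    by_contra hlt
    push_neg at hlt
    exact absurd (hsum ▸ rank_quot_big) (not_le.mpr (Cardinal.add_lt_aleph0 hWqr hlt))
  haveI : Module.Free ℝ ↥C := Module.Free.of_divisionRing ℝ ↥C
  obtain ⟨s, hs, hsind⟩ := le_rank_iff_exists_linearIndependent.mp hCr
  obtain ⟨e⟩ : Nonempty (ℕ ≃ s) := Cardinal.eq.1 (by rw [hs, Cardinal.mk_nat])
  set u : ℕ → EllInfty ⧸ cZero := fun n => ((e n : C) : EllInfty ⧸ cZero) with hudef
  have humem : ∀ n, u n ∈ C := fun n => (e n : C).2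
  have huind : LinearIndependent ℝ u := by
    have h1 : LinearIndependent ℝ (fun x : s => (C.subtype (x : C))) :=
      hsind.map' C.subtype (Submodule.ker_subtype C)
    exact h1.comp e e.injective
  choose g hg using fun n => Submodule.Quotient.mk_surjective cZero (u n)
  have hgq : ∀ n, cZero.mkQ (g n) = u n := fun n => hg n
  set Z := W ⊔ span ℝ (Set.range g) with hZdef
  have hZdisj : ∀ x ∈ Z, x ∈ cZero → x = 0 := by
    intro z hz hz0
    obtain ⟨w, hw, y, hy, rfl⟩ := Submodule.mem_sup.mp hz
    obtain ⟨c, rfl⟩ := Finsupp.mem_span_range_iff_exists_finsupp.mp hy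
    have h0 : cZero.mkQ w + (c.sum fun i a => a • u i) = 0 := by
      have : cZero.mkQ (w + c.sum fun i a => a • g i) = 0 := by
        rw [Submodule.mkQ_apply, Submodule.Quotient.mk_eq_zero]; exact hz0
      rw [map_add, map_finsuppSum] at this
      simp only [map_smul, hgq] at this
      exact this
    have hA : cZero.mkQ w ∈ Wq := Submodule.mem_map_of_mem hw
    have hB : (c.sum fun i a => a • u i) ∈ C :=
      Submodule.sum_mem _ fun i _ => C.smul_mem _ (humem i)
    have hmkQw : cZero.mkQ w = 0 := by
      have h1 : cZero.mkQ w ∈ C := by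
        have : cZero.mkQ w = -(c.sum fun i a => a • u i) := eq_neg_of_add_eq_zero_left h0
        rw [this]; exact C.neg_mem hB
      exact (Submodule.disjoint_def.mp hC.disjoint) _ hA h1
    have hsum0 : (c.sum fun i a => a • u i) = 0 := by
      rw [hmkQw, zero_add] at h0; exact h0
    have hc : c = 0 := by
      apply linearIndependent_iff.mp huind
      rw [Finsupp.linearCombination_apply]; exact hsum0
    have hw0 : w = 0 := by
      apply hW w hw
      rw [← Submodule.Quotient.mk_eq_zero, ← Submodule.mkQ_apply]; exact hmkQw
    rw [hc, Finsupp.sum_zero_index, hw0, add_zero]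
  have hgZ : ∀ n, g n ∈ Z := fun n =>
    Submodule.mem_sup_right (Submodule.subset_span ⟨n, rfl⟩)
  have hZrank : Module.rank ℝ Z = Cardinal.aleph0 := by
    apply le_antisymm
    · have h1 := Submodule.rank_sup_add_rank_inf_eq W (span ℝ (Set.range g))
      have h2 : Module.rank ℝ Z ≤ Module.rank ℝ W + Module.rank ℝ (span ℝ (Set.range g)) := by
        rw [← h1]; exact self_le_add_right _ _
      refine h2.trans ?_
      have h3 : Module.rank ℝ (span ℝ (Set.range g)) ≤ Cardinal.aleph0 :=
        (rank_span_le _).trans ((Cardinal.mk_range_le).trans (by rw [Cardinal.mk_nat]))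
      calc Module.rank ℝ W + Module.rank ℝ (span ℝ (Set.range g))
          ≤ Cardinal.aleph0 + Cardinal.aleph0 := add_le_add hWr.le h3
        _ = Cardinal.aleph0 := Cardinal.aleph0_add_aleph0
    · have hgind : LinearIndependent ℝ g := by
        apply LinearIndependent.of_comp cZero.mkQ
        have : (cZero.mkQ ∘ g) = u := funext hgq
        rw [this]; exact huind
      have hggind : LinearIndependent ℝ (fun n : ℕ => (⟨g n, hgZ n⟩ : Z)) := by
        apply LinearIndependent.of_comp Z.subtype
        exact hgind
      have := hggind.cardinal_le_rank
      rwa [Cardinal.mk_nat] at this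
  exact ⟨Z, hZrank, le_sup_left, hZdisj⟩

noncomputable def boolInd (g : ℕ → Bool) : EllInfty :=
  ⟨fun m => if g m then 1 else 0, memℓp_infty ⟨1, by
    rintro x ⟨m, rfl⟩
    dsimp
    split <;> simp⟩⟩

lemma boolInd_sep {g g' : ℕ → Bool} (h : g ≠ g') : 1 ≤ ‖boolInd g - boolInd g'‖ := by
  obtain ⟨m, hm⟩ := Function.ne_iff.mp h
  have h1 : ‖(boolInd g - boolInd g') m‖ ≤ ‖boolInd g - boolInd g'‖ :=
    lp.norm_apply_le_norm (by norm_num) _ m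
  refine le_trans ?_ h1
  have h2 : (boolInd g - boolInd g') m
      = (if g m then (1:ℝ) else 0) - (if g' m then 1 else 0) := by
    rw [lp.coeFn_sub]
    rfl
  rw [h2]
  cases hgm : g m <;> cases hgm' : g' m <;> simp [hgm, hgm'] at hm ⊢

lemma card_of_dense {T : Set EllInfty} (hT : Dense T) : Cardinal.continuum ≤ #T := by
  classical
  have hch : ∀ g : ℕ → Bool, ∃ t ∈ T, dist (boolInd g) t < 1/2 := by
    intro g
    exact hT.exists_dist_lt (boolInd g) (by norm_num)
  choose t ht hdist using hch
  have hinj : Function.Injective fun g => (⟨t g, ht g⟩ : T) := by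
    intro g g' h
    by_contra hne
    have h1 : (1:ℝ) ≤ dist (boolInd g) (boolInd g') := by
      rw [dist_eq_norm]; exact boolInd_sep hne
    have heq : t g = t g' := congrArg Subtype.val h
    have h2 : dist (boolInd g) (boolInd g') < 1 := by
      calc dist (boolInd g) (boolInd g') ≤ dist (boolInd g) (t g) + dist (t g) (boolInd g') :=
            dist_triangle _ _ _
        _ = dist (boolInd g) (t g) + dist (boolInd g') (t g') := by
            rw [heq]; rw [dist_comm (t g') (boolInd g')]
        _ < 1/2 + 1/2 := add_lt_add (hdist g) (hdist g')
        _ = 1 := by norm_num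
    linarith
  calc Cardinal.continuum = #(ℕ → Bool) := by
        rw [Cardinal.mk_arrow, Cardinal.mk_bool, Cardinal.lift_id', Cardinal.mk_nat,
          Cardinal.lift_aleph0]
        rw [Cardinal.two_power_aleph0]
    _ ≤ #T := Cardinal.mk_le_of_injective hinj

set_option maxHeartbeats 1000000 in
set_option synthInstance.maxHeartbeats 400000 in
lemma dense_rank (D : Submodule ℝ EllInfty) (hD : Dense (D : Set EllInfty)) :
    Module.rank ℝ D = Cardinal.continuum := by
  classical
  refine le_antisymm ?_ ?_
  · calc Module.rank ℝ D ≤ #D := rank_le_card _ _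
      _ ≤ #EllInfty := Cardinal.mk_le_of_injective Subtype.val_injective
      _ ≤ #(ℕ → ℝ) := Cardinal.mk_le_of_injective Subtype.val_injective
      _ = Cardinal.continuum := by
          rw [← Cardinal.power_def, Cardinal.mk_real, Cardinal.mk_nat,
            Cardinal.continuum_power_aleph0]
  · set ι := Module.Basis.ofVectorSpaceIndex ℝ D with hι
    set b := Module.Basis.ofVectorSpace ℝ D with hb
    have hrank : Module.rank ℝ D = #ι := b.mk_eq_rank''.symm
    set v : ι → EllInfty := fun i => ((b i : D) : EllInfty) with hv
    set F : (ι →₀ ℚ) → EllInfty := fun l => l.sum fun i q => (q : ℝ) • v i with hF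
    set T : Set EllInfty := Set.range F with hTdef
    -- T is closed under addition, zero, and rational scaling
    have h0T : (0 : EllInfty) ∈ T := ⟨0, by simp only [hF]; exact Finsupp.sum_zero_index⟩
    have haddT : ∀ x ∈ T, ∀ y ∈ T, x + y ∈ T := by
      rintro x ⟨l, rfl⟩ y ⟨l', rfl⟩
      refine ⟨l + l', ?_⟩
      simp only [hF]
      rw [Finsupp.sum_add_index']
      · intro i; rw [Rat.cast_zero, zero_smul]
      · intro i q q'; rw [Rat.cast_add, add_smul]
    have hsmulT : ∀ (q : ℚ), ∀ x ∈ T, (q : ℝ) • x ∈ T := by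
      rintro q x ⟨l, rfl⟩
      refine ⟨q • l, ?_⟩
      simp only [hF]
      rw [Finsupp.sum_smul_index]
      · rw [Finsupp.smul_sum]
        congr 1
        ext i a
        rw [Rat.cast_mul, mul_smul]
      · intro i; rw [Rat.cast_zero, zero_smul]
    -- closure of T is an ℝ-submodule
    have hsmulC : ∀ (r : ℝ) (x : EllInfty), x ∈ closure T → r • x ∈ closure T := by
      intro r x hx
      have hK : IsClosed {r : ℝ | r • x ∈ closure T} := by
        have hc : Continuous fun r : ℝ => r • x := continuous_id.smul continuous_const
        exact IsClosed.preimage hc isClosed_closure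
      have hQ : Set.range ((↑) : ℚ → ℝ) ⊆ {r : ℝ | r • x ∈ closure T} := by
        rintro _ ⟨q, rfl⟩
        exact map_mem_closure (continuous_const_smul (q : ℝ) : Continuous fun y : EllInfty => (q : ℝ) • y) hx
          (fun y hy => hsmulT q y hy)
      have huniv : {r : ℝ | r • x ∈ closure T} = Set.univ := by
        apply Set.eq_univ_of_univ_subset
        rw [← Rat.denseRange_cast.closure_eq]
        exact hK.closure_subset_iff.mpr hQ
      exact Set.eq_univ_iff_forall.mp huniv r
    have haddC : ∀ x ∈ closure T, ∀ y ∈ closure T, x + y ∈ closure T := by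
      intro x hx y hy
      exact map_mem_closure₂ continuous_add hx hy haddT
    set M : Submodule ℝ EllInfty :=
      { carrier := closure T
        add_mem' := fun hx hy => haddC _ hx _ hy
        zero_mem' := subset_closure h0T
        smul_mem' := fun r x hx => hsmulC r x hx } with hM
    -- D is contained in M
    have hbT : ∀ i : ι, v i ∈ T := by
      intro i
      refine ⟨Finsupp.single i 1, ?_⟩
      simp only [hF]
      rw [Finsupp.sum_single_index]
      · rw [Rat.cast_one, one_smul]
      · rw [Rat.cast_zero, zero_smul]
    have hDM : (D : Set EllInfty) ⊆ closure T := by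
      have hspan : Submodule.span ℝ (Set.range v) = D := by
        have h1 : Set.range v = D.subtype '' Set.range b := by
          rw [← Set.range_comp]; rfl
        rw [h1, ← Submodule.map_span, b.span_eq, Submodule.map_subtype_top]
      intro x hx
      have : x ∈ Submodule.span ℝ (Set.range v) := hspan.symm ▸ hx
      have hle : Submodule.span ℝ (Set.range v) ≤ M :=
        Submodule.span_le.mpr fun y ⟨i, hi⟩ => subset_closure (hi ▸ hbT i)
      exact hle this
    -- T is dense
    have hTdense : Dense T := by
      rw [dense_iff_closure_eq]
      apply Set.eq_univ_of_univ_subset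
      rw [← hD.closure_eq]
      calc closure (D : Set EllInfty) ⊆ closure (closure T) := closure_mono hDM
        _ = closure T := closure_closure
    -- cardinality bound
    have hcard : Cardinal.continuum ≤ #T := card_of_dense hTdense
    have hTle : #T ≤ max #ι Cardinal.aleph0 := by
      refine (Cardinal.mk_range_le).trans ?_
      cases finite_or_infinite ι with
      | inl h =>
        haveI : Countable (ι →₀ ℚ) := inferInstance
        exact le_trans (Cardinal.mk_le_aleph0) (le_max_right _ _)
      | inr h =>
        rw [Cardinal.mk_finsupp_of_infinite, Cardinal.mkRat]
    have hfinal : Cardinal.continuum ≤ #ι := by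
      rcases max_cases #ι Cardinal.aleph0 with ⟨heq, _⟩ | ⟨heq, hlt⟩
      · exact hcard.trans (hTle.trans_eq heq)
      · exfalso
        have := (hcard.trans hTle).trans_eq heq
        exact absurd this (not_le.mpr Cardinal.aleph0_lt_continuum)
    rw [hrank]
    exact hfinal

lemma subset_iff_disj (W : Submodule ℝ EllInfty) :
    ((W : Set EllInfty) ⊆ (cZero : Set EllInfty)ᶜ ∪ {0}) ↔ (∀ x ∈ W, x ∈ cZero → x = 0) := by
  constructor
  · intro h x hx hx0
    rcases h hx with h' | h'
    · exact absurd hx0 h'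
    · exact h'
  · intro h x hx
    by_cases hx0 : x ∈ cZero
    · exact Or.inr (h x hx hx0)
    · exact Or.inl hx0

lemma exists_Wn (n : ℕ) :
    ∃ W : Submodule ℝ EllInfty, Module.rank ℝ W = (n : Cardinal) ∧
      (W : Set EllInfty) ⊆ (cZero : Set EllInfty)ᶜ ∪ {0} := by
  have hchin : LinearIndependent ℝ (fun i : Fin n => cZero.mkQ (chi i)) :=
    chi_quot_indep.comp Fin.val Fin.val_injective
  have hchiind : LinearIndependent ℝ (fun i : Fin n => chi i) :=
    LinearIndependent.of_comp cZero.mkQ hchin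
  refine ⟨span ℝ (Set.range fun i : Fin n => chi i), ?_, ?_⟩
  · rw [rank_span hchiind]
    rw [Cardinal.mk_range_eq _ hchiind.injective, Cardinal.mk_fin]
  · rw [subset_iff_disj]
    exact indep_quot_disjoint _ hchin

/-- `A` is `(α, β)`-lineable. -/
def IsABLineable (K V : Type*) [Field K] [AddCommGroup V] [Module K V]
    (A : Set V) (α β : Cardinal) : Prop :=
  (∃ W : Submodule K V, Module.rank K W = α ∧ (W : Set V) ⊆ A ∪ {0}) ∧
  ∀ W : Submodule K V, Module.rank K W = α → (W : Set V) ⊆ A ∪ {0} →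
    ∃ Z : Submodule K V, Module.rank K Z = β ∧ W ≤ Z ∧ (Z : Set V) ⊆ A ∪ {0}

/-- `A` is `(α, β)`-dense lineable: the extending `β`-dimensional subspace can be
chosen dense. -/
def IsABDenseLineable (K V : Type*) [Field K] [AddCommGroup V] [Module K V]
    [TopologicalSpace V] (A : Set V) (α β : Cardinal) : Prop :=
  (∃ W : Submodule K V, Module.rank K W = α ∧ (W : Set V) ⊆ A ∪ {0}) ∧
  ∀ W : Submodule K V, Module.rank K W = α → (W : Set V) ⊆ A ∪ {0} →
    ∃ Z : Submodule K V, Dense (Z : Set V) ∧ Module.rank K Z = β ∧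
      W ≤ Z ∧ (Z : Set V) ⊆ A ∪ {0}

/-- for every `n ∈ ℕ`, `ℓ∞ \ c₀` is `(n, ℵ₀)`-lineable, but not
`(n, ℵ₀)`-dense lineable, since every dense subspace of `ℓ∞` has dimension `𝔠`. -/
theorem stmt17 (n : ℕ) (hn : 0 < n) :
    (∀ D : Submodule ℝ EllInfty, Dense (D : Set EllInfty) →
      Module.rank ℝ D = Cardinal.continuum) ∧
    IsABLineable ℝ EllInfty ((cZero : Set EllInfty)ᶜ) n Cardinal.aleph0 ∧
    ¬ IsABDenseLineable ℝ EllInfty ((cZero : Set EllInfty)ᶜ) n Cardinal.aleph0 := by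
  refine ⟨fun D hD => dense_rank D hD, ⟨exists_Wn n, ?_⟩, ?_⟩
  · intro W hWrank hWsub
    rw [subset_iff_disj] at hWsub
    have hWr : Module.rank ℝ W < Cardinal.aleph0 := by
      rw [hWrank]; exact Cardinal.nat_lt_aleph0 n
    obtain ⟨Z, hZr, hle, hdisj⟩ := extension W hWr hWsub
    exact ⟨Z, hZr, hle, (subset_iff_disj Z).mpr hdisj⟩
  · rintro ⟨-, hext⟩
    obtain ⟨W, hWr, hWsub⟩ := exists_Wn n
    obtain ⟨Z, hZdense, hZrank, -, -⟩ := hext W hWr hWsub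
    have := dense_rank Z hZdense
    rw [hZrank] at this
    exact Cardinal.aleph0_lt_continuum.ne this
end

section
/- Every dense linear subspace of ℓ∞ has (Hamel) dimension 𝔠. -/
open Cardinal Set

/-- The real span is contained in the closure of the rational span. -/
lemma aux_span_rat_dense {M : Type*} [AddCommGroup M] [Module ℝ M] [Module ℚ M]
    [IsScalarTower ℚ ℝ M]
    [TopologicalSpace M] [IsTopologicalAddGroup M] [ContinuousSMul ℝ M] (s : Set M) :
    (Submodule.span ℝ s : Set M) ⊆ closure (Submodule.span ℚ s : Set M) := by
  have hqs : ∀ (q : ℚ) (x : M), (q : ℝ) • x = q • x := fun q x => by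
    rw [← smul_one_smul ℝ q x, Rat.smul_one_eq_cast]
  haveI : ContinuousConstSMul ℚ M := ⟨fun q => by
    simpa [← hqs] using (continuous_const_smul (q : ℝ) : Continuous fun x : M => (q:ℝ) • x)⟩
  set T : Set M := closure (Submodule.span ℚ s : Set M) with hT
  have hsmul : ∀ (r : ℝ), ∀ x ∈ T, r • x ∈ T := by
    intro r x hx
    have h1 : ∀ q : ℚ, (q : ℝ) • x ∈ T := by
      intro q
      have := (Submodule.span ℚ s).mapsTo_smul_closure q hx
      simpa [hqs] using this
    have hcont : Continuous fun t : ℝ => t • x := by continuity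
    have hr : r ∈ closure (Set.range ((↑) : ℚ → ℝ)) := by
      rw [Rat.denseRange_cast.closure_eq]; trivial
    have : r • x ∈ closure ((fun t : ℝ => t • x) '' Set.range ((↑) : ℚ → ℝ)) :=
      (image_closure_subset_closure_image hcont) ⟨r, hr, rfl⟩
    refine closure_minimal ?_ isClosed_closure this
    rintro _ ⟨_, ⟨q, rfl⟩, rfl⟩
    exact h1 q
  let W : Submodule ℝ M :=
    { carrier := T
      zero_mem' := subset_closure (Submodule.zero_mem _)
      add_mem' := fun {a b} ha hb =>
        (Submodule.span ℚ s).toAddSubgroup.topologicalClosure.add_mem ha hb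
      smul_mem' := fun r x hx => hsmul r x hx }
  have : Submodule.span ℝ s ≤ W :=
    Submodule.span_le.2 (fun x hx => subset_closure (Submodule.subset_span hx))
  exact this

noncomputable def stmtChi (A : Set ℕ) : lp (fun _ : ℕ => ℝ) ⊤ :=
  ⟨A.indicator 1, memℓp_infty ⟨1, by
    rintro x ⟨n, rfl⟩
    by_cases h : n ∈ A <;> simp [Set.indicator, h]⟩⟩

lemma stmtChi_dist {A B : Set ℕ} (h : A ≠ B) : 1 ≤ dist (stmtChi A) (stmtChi B) := by
  have hiff : ¬ ∀ n, n ∈ A ↔ n ∈ B := fun hall => h (Set.ext hall)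
  obtain ⟨n, hn⟩ := not_forall.1 hiff
  rw [dist_eq_norm]
  have key : ‖(↑(stmtChi A - stmtChi B) : ℕ → ℝ) n‖ ≤ ‖stmtChi A - stmtChi B‖ :=
    lp.norm_apply_le_norm (by norm_num) _ n
  have hval : (↑(stmtChi A - stmtChi B) : ℕ → ℝ) n = A.indicator 1 n - B.indicator 1 n := rfl
  refine le_trans (le_of_eq ?_) key
  rw [hval]
  by_cases hA : n ∈ A <;> by_cases hB : n ∈ B <;>
    simp [Set.indicator, hA, hB, Real.norm_eq_abs] at hn ⊢

/-- Papathanasiou: every dense linear subspace of `ℓ∞` has Hamel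
dimension `𝔠`. -/
theorem stmt18 (D : Submodule ℝ (lp (fun _ : ℕ => ℝ) ⊤))
    (hD : Dense (D : Set (lp (fun _ : ℕ => ℝ) ⊤))) :
    Module.rank ℝ D = Cardinal.continuum := by
  classical
  -- upper bound
  have hL : #(lp (fun _ : ℕ => ℝ) ⊤) ≤ continuum := by
    have h1 : #(lp (fun _ : ℕ => ℝ) ⊤) ≤ #(ℕ → ℝ) :=
      Cardinal.mk_le_of_injective
        (Subtype.val_injective : Function.Injective ((↑) : (lp (fun _ : ℕ => ℝ) ⊤) → (ℕ → ℝ)))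
    have h2 : #(ℕ → ℝ) = continuum := by
      rw [Cardinal.mk_arrow]
      simp [Cardinal.mk_real, Cardinal.continuum_power_aleph0]
    exact h1.trans h2.le
  have hub : Module.rank ℝ D ≤ continuum :=
    (Submodule.rank_le D).trans ((rank_le_card ℝ _).trans hL)
  -- lower bound
  set ι := Module.Basis.ofVectorSpaceIndex ℝ D with hι
  let b : Module.Basis ι ℝ D := Module.Basis.ofVectorSpace ℝ D
  let f : ι → lp (fun _ : ℕ => ℝ) ⊤ := fun i => (b i : lp (fun _ : ℕ => ℝ) ⊤)
  have hspan : Submodule.span ℝ (Set.range f) = D := by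
    have hfr : Set.range f = D.subtype '' Set.range b := by
      ext x
      constructor
      · rintro ⟨i, rfl⟩; exact ⟨b i, ⟨i, rfl⟩, rfl⟩
      · rintro ⟨y, ⟨i, rfl⟩, rfl⟩; exact ⟨i, rfl⟩
    rw [hfr, ← Submodule.map_span, b.span_eq, Submodule.map_top, Submodule.range_subtype]
  have hdense : Dense (Submodule.span ℚ (Set.range f) : Set (lp (fun _ : ℕ => ℝ) ⊤)) := by
    intro x
    have h1 : (D : Set (lp (fun _ : ℕ => ℝ) ⊤)) ⊆
        closure (Submodule.span ℚ (Set.range f) : Set (lp (fun _ : ℕ => ℝ) ⊤)) := by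
      have h0 := aux_span_rat_dense (Set.range f)
      rwa [hspan] at h0
    have h2 := closure_mono h1 (hD x)
    rwa [closure_closure] at h2
  choose g hg1 hg2 using fun A : Set ℕ =>
    hdense.exists_dist_lt (stmtChi A) (by norm_num : (0:ℝ) < 1/2)
  have hinj : Function.Injective fun A : Set ℕ =>
      (⟨g A, hg1 A⟩ : Submodule.span ℚ (Set.range f)) := by
    intro A B hAB
    by_contra hne
    have hgAB : g A = g B := congrArg Subtype.val hAB
    have h5 := hg2 A
    rw [hgAB] at h5
    have h6 := hg2 B
    have h7 := stmtChi_dist hne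
    have h4 : dist (stmtChi A) (stmtChi B) ≤ dist (stmtChi A) (g B) + dist (g B) (stmtChi B) :=
      dist_triangle _ _ _
    rw [dist_comm (g B) (stmtChi B)] at h4
    linarith
  have hcont : continuum ≤ #(Submodule.span ℚ (Set.range f)) := by
    have h8 : continuum = #(Set ℕ) := by
      rw [Cardinal.mk_set, Cardinal.mk_nat, Cardinal.two_power_aleph0]
    rw [h8]
    exact Cardinal.mk_le_of_injective hinj
  have hcard : #(Submodule.span ℚ (Set.range f)) ≤ #(ι →₀ ℚ) := by
    have heq : (Submodule.span ℚ (Set.range f) : Set (lp (fun _ : ℕ => ℝ) ⊤)) =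
        Set.range (Finsupp.linearCombination ℚ f) := by
      rw [← Finsupp.range_linearCombination]; rfl
    have : #(Submodule.span ℚ (Set.range f)) =
        #(Set.range (Finsupp.linearCombination ℚ f)) := by rw [← heq]; rfl
    rw [this]
    exact Cardinal.mk_range_le
  rcases finite_or_infinite ι with hfin | hinf
  · exfalso
    haveI := hfin
    haveI : Countable ↑ι := Finite.to_countable
    have : #(↑ι →₀ ℚ) ≤ ℵ₀ := Cardinal.mk_le_aleph0
    exact absurd (hcont.trans (hcard.trans this)) (not_le.2 Cardinal.aleph0_lt_continuum)
  · rw [Cardinal.mk_finsupp_of_infinite, Cardinal.mkRat] at hcard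
    have h9 : continuum ≤ max #ι ℵ₀ := hcont.trans hcard
    have h10 : continuum ≤ #ι :=
      (le_max_iff.mp h9).resolve_right fun h => (not_le.2 Cardinal.aleph0_lt_continuum) h
    have h11 : #ι = Module.rank ℝ D := b.mk_eq_rank''
    exact le_antisymm hub (h11 ▸ h10)
end

section
/- Let V be a topological vector space whose topology comes from a translation-invariant metric, and let A, B ⊆ V with A + B ⊆ A, A ∩ B = ∅, B containing a line ℝv \ {0} for some v ≠ 0, and A containing E \ {0} for an infinite-dimensional subspace E with basis {v_a}. Then the vectors u_a = t_a v_a + v (for suitable nonzero scalars t_a) are linearly independent, span a subspace M with M \ {0} ⊆ A, and v lies in the closure of M. -/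
open scoped Pointwise Topology

lemma small_smul {V : Type*} [AddCommGroup V] [Module ℝ V] [MetricSpace V]
    [ContinuousSMul ℝ V] (x : V) (ε : ℝ) (hε : 0 < ε) :
    ∃ c : ℝ, c ≠ 0 ∧ dist (c • x) 0 < ε := by
  have hc : Continuous fun c : ℝ => c • x := continuous_id.smul continuous_const
  have h : Filter.Tendsto (fun c : ℝ => c • x) (𝓝[≠] (0:ℝ)) (nhds 0) := by
    have := hc.tendsto 0
    simp only [zero_smul] at this
    exact this.mono_left nhdsWithin_le_nhds
  have h2 : ∀ᶠ c in 𝓝[≠] (0:ℝ), dist (c • x) 0 < ε :=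
    h.eventually (Metric.ball_mem_nhds 0 hε)
  have h3 : ∀ᶠ c in 𝓝[≠] (0:ℝ), c ≠ 0 := eventually_mem_nhdsWithin
  exact (h3.and h2).exists

/-- core construction in Theorem 2.1: in a topological vector space whose
topology comes from a translation-invariant metric, given `A + B ⊆ A`, `A ∩ B = ∅`, a
line through `v ≠ 0` inside `B ∪ {0}`, and an infinite linearly independent family
`(v_a)` whose span minus `{0}` lies in `A`, there are nonzero scalars `t_a` such that the
vectors `u_a = t_a • v_a + v` are linearly independent, their span `M` satisfies
`M \ {0} ⊆ A`, and `v` lies in the closure of `M`. -/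
theorem stmt19 (V : Type*) [AddCommGroup V] [Module ℝ V] [MetricSpace V]
    [ContinuousAdd V] [ContinuousSMul ℝ V]
    (hinv : ∀ x y z : V, dist (x + z) (y + z) = dist x y)
    (A B : Set V) (hstr : A + B ⊆ A) (hAB : A ∩ B = ∅)
    (v : V) (hv : v ≠ 0) (hB : ∀ c : ℝ, c ≠ 0 → c • v ∈ B)
    (ι : Type*) [Infinite ι] (va : ι → V) (hind : LinearIndependent ℝ va)
    (hA : (Submodule.span ℝ (Set.range va) : Set V) \ {0} ⊆ A) :
    ∃ t : ι → ℝ, (∀ a, t a ≠ 0) ∧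
      LinearIndependent ℝ (fun a => t a • va a + v) ∧
      (Submodule.span ℝ (Set.range (fun a => t a • va a + v)) : Set V) \ {0} ⊆ A ∧
      v ∈ closure (Submodule.span ℝ (Set.range (fun a => t a • va a + v)) : Set V) := by
  classical
  -- v is not in the span of va
  have hvnot : v ∉ Submodule.span ℝ (Set.range va) := by
    intro hmem
    have hvA : v ∈ A := hA ⟨hmem, by simpa using hv⟩
    have hvB : v ∈ B := by simpa using hB 1 one_ne_zero
    have : v ∈ A ∩ B := ⟨hvA, hvB⟩
    rw [hAB] at this
    exact this
  -- countable injective subfamily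
  let e : ℕ ↪ ι := Infinite.natEmbedding ι
  let δ : ι → ℝ := fun a => 1 / (Function.invFun e a + 1)
  have hδ : ∀ a, 0 < δ a := fun a => by positivity
  -- choose the scalars
  choose t ht0 htsmall using fun a => small_smul (va a) (δ a) (hδ a)
  refine ⟨t, ht0, ?_, ?_, ?_⟩
  -- key decomposition lemma
  · -- linear independence
    rw [linearIndependent_iff']
    intro s g hsum i hi
    have hdecomp : (∑ a ∈ s, g a • (t a • va a + v)) =
        (∑ a ∈ s, (g a * t a) • va a) + (∑ a ∈ s, g a) • v := by
      rw [Finset.sum_smul, ← Finset.sum_add_distrib]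
      refine Finset.sum_congr rfl fun a _ => ?_
      rw [smul_add, smul_smul]
    rw [hdecomp] at hsum
    have hgs : (∑ a ∈ s, g a) = 0 := by
      by_contra hne
      have hve : v = -((∑ a ∈ s, g a)⁻¹ • ∑ a ∈ s, (g a * t a) • va a) := by
        have h1 : (∑ a ∈ s, g a) • v = -∑ a ∈ s, (g a * t a) • va a := by
          rw [eq_neg_iff_add_eq_zero, add_comm]; exact hsum
        have := congrArg (fun x => (∑ a ∈ s, g a)⁻¹ • x) h1
        simpa [smul_smul, inv_mul_cancel₀ hne, smul_neg] using this
      apply hvnot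
      rw [hve]
      exact Submodule.neg_mem _ (Submodule.smul_mem _ _ (Submodule.sum_mem _ fun a _ =>
        Submodule.smul_mem _ _ (Submodule.subset_span ⟨a, rfl⟩)))
    rw [hgs, zero_smul, add_zero] at hsum
    have := linearIndependent_iff'.mp hind s (fun a => g a * t a) hsum i hi
    exact (mul_eq_zero.mp this).resolve_right (ht0 i)
  · -- span minus zero in A
    rintro x ⟨hx, hx0⟩
    simp only [Set.mem_singleton_iff] at hx0
    rw [SetLike.mem_coe, ← Finsupp.range_linearCombination] at hx
    obtain ⟨c, rfl⟩ := hx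
    set w : V := c.sum fun a r => (r * t a) • va a with hw
    set sc : ℝ := c.sum fun _ r => r with hsc
    have hdecomp : Finsupp.linearCombination ℝ (fun a => t a • va a + v) c = w + sc • v := by
      rw [Finsupp.linearCombination_apply, Finsupp.sum, hw, hsc, Finsupp.sum, Finsupp.sum,
        Finset.sum_smul, ← Finset.sum_add_distrib]
      refine Finset.sum_congr rfl fun a _ => ?_
      rw [smul_add, smul_smul]
    rw [hdecomp] at hx0 ⊢
    have hwspan : w ∈ Submodule.span ℝ (Set.range va) := by
      rw [hw, Finsupp.sum]
      exact Submodule.sum_mem _ fun a _ =>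
        Submodule.smul_mem _ _ (Submodule.subset_span ⟨a, rfl⟩)
    by_cases hs : sc = 0
    · rw [hs, zero_smul, add_zero] at hx0 ⊢
      exact hA ⟨hwspan, by simpa using hx0⟩
    · have hwne : w ≠ 0 := by
        intro hw0
        rw [hw, Finsupp.sum] at hw0
        have := linearIndependent_iff'.mp hind c.support (fun a => c a * t a) hw0
        have hcz : ∀ a ∈ c.support, c a = 0 := fun a ha =>
          (mul_eq_zero.mp (this a ha)).resolve_right (ht0 a)
        have : sc = 0 := by
          rw [hsc, Finsupp.sum]
          exact Finset.sum_eq_zero hcz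
        exact hs this
      exact hstr ⟨w, hA ⟨hwspan, by simpa using hwne⟩, sc • v, hB sc hs, rfl⟩
  · -- closure
    have hdist : ∀ n : ℕ, dist (t (e n) • va (e n) + v) v < 1 / (n + 1) := by
      intro n
      have h1 : dist (t (e n) • va (e n) + v) v = dist (t (e n) • va (e n)) 0 := by
        have := hinv (t (e n) • va (e n)) 0 v
        simpa using this
      rw [h1]
      have := htsmall (e n)
      have hinvfun : Function.invFun e (e n) = n :=
        Function.leftInverse_invFun e.injective n
      simpa [δ, hinvfun] using this
    have htend : Filter.Tendsto (fun n : ℕ => t (e n) • va (e n) + v) Filter.atTop (nhds v) := by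
      rw [tendsto_iff_dist_tendsto_zero]
      exact squeeze_zero (fun n => dist_nonneg) (fun n => (hdist n).le)
        tendsto_one_div_add_atTop_nhds_zero_nat
    exact mem_closure_of_tendsto htend (Filter.Eventually.of_forall fun n =>
      Submodule.subset_span ⟨e n, rfl⟩)
end
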